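/- arXiv:2210.10257 — 10 statements merged into one kernel-verified Lean document; each statement's English description precedes it below -/
import Mathlib

section
/- Let a, b, c, d ∈ ℚ and suppose f(x) = x⁴ + a·x³ + b·x² + c·x + d is irreducible over ℚ. Then the power compositional octic polynomial f(x²) = x⁸ + a·x⁶ + b·x⁴ + c·x² + d is reducible over ℚ if and only if there exist k, ℓ, m, n ∈ ℚ such that a = 2ℓ − k², b = 2n − 2km + ℓ², c = 2ℓn − m², and d = n². -/
open Polynomial Finset

lemma aux_coeff_comp_neg (p : ℚ[X]) (i : ℕ) :
    (p.comp (-X)).coeff i = (-1) ^ i * p.coeff i := by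
  induction p using Polynomial.induction_on' with
  | add p q hp hq => simp [add_comp, hp, hq, mul_add]
  | monomial n a =>
    have h2 : (monomial n a).comp (-X) = C ((-1) ^ n * a) * X ^ n := by
      rw [monomial_comp, neg_pow, show ((-1 : ℚ[X]) ^ n) = C ((-1) ^ n) by simp]
      rw [← mul_assoc, ← C_mul, mul_comm a]
    rw [h2, coeff_C_mul, coeff_X_pow, coeff_monomial]
    split_ifs with h h'
    · subst h; ring
    · omega
    · omega
    · ring

lemma aux_even_part (p : ℚ[X]) (hp : ∀ i, Odd i → p.coeff i = 0) :
    ∃ e : ℚ[X], e.comp (X ^ 2) = p := by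
  refine ⟨∑ i ∈ Finset.range (p.natDegree + 1), C (p.coeff (2 * i)) * X ^ i, ?_⟩
  ext j
  rw [comp, eval₂_finset_sum, finset_sum_coeff]
  simp only [eval₂_mul, eval₂_C, eval₂_X_pow, ← pow_mul, coeff_C_mul, coeff_X_pow,
    mul_ite, mul_one, mul_zero]
  rcases Nat.even_or_odd j with ⟨i₀, hi⟩ | hodd
  · rw [Finset.sum_congr rfl (fun i _ => if_congr (show (j = 2*i) ↔ (i₀ = i) by omega) rfl rfl)]
    rw [Finset.sum_ite_eq]
    by_cases h : i₀ ∈ Finset.range (p.natDegree + 1)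
    · rw [if_pos h]; congr 1; omega
    · rw [if_neg h]
      rw [Finset.mem_range] at h
      rw [eq_comm, coeff_eq_zero_of_natDegree_lt]; omega
  · rw [Finset.sum_eq_zero, eq_comm, hp j hodd]
    intro i _
    rw [if_neg]
    obtain ⟨t, ht⟩ := hodd; omega

lemma aux_comp_sq_ne_zero {r : ℚ[X]} (hr : r ≠ 0) : r.comp (X ^ 2) ≠ 0 := by
  intro h0
  rw [comp_eq_zero_iff] at h0
  rcases h0 with h | ⟨_, h⟩
  · exact hr h
  · have := congrArg natDegree h
    simp [natDegree_X_pow] at this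

lemma aux_dvd_of_comp {e f : ℚ[X]} (he : e.Monic) (h : e.comp (X ^ 2) ∣ f.comp (X ^ 2)) :
    e ∣ f := by
  by_contra hdvd
  have hr : f %ₘ e ≠ 0 := fun h0 => hdvd ((modByMonic_eq_zero_iff_dvd he).mp h0)
  have hsub : f %ₘ e = f - e * (f /ₘ e) := eq_sub_of_add_eq (modByMonic_add_div f e)
  have key : e.comp (X ^ 2) ∣ (f %ₘ e).comp (X ^ 2) := by
    rw [hsub, sub_comp, mul_comp]
    exact dvd_sub h ⟨(f /ₘ e).comp (X ^ 2), rfl⟩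
  have hle := natDegree_le_of_dvd key (aux_comp_sq_ne_zero hr)
  rw [natDegree_comp, natDegree_comp, natDegree_pow, natDegree_X] at hle
  have hlt : (f %ₘ e).natDegree < e.natDegree :=
    natDegree_lt_natDegree hr (degree_modByMonic_lt f he)
  omega

lemma aux_quartic {p : ℚ[X]} (hm : p.Monic) (hd : p.natDegree = 4) :
    p = X ^ 4 + C (p.coeff 3) * X ^ 3 + C (p.coeff 2) * X ^ 2 + C (p.coeff 1) * X
      + C (p.coeff 0) := by
  have h4 : p.coeff 4 = 1 := by
    have := hm.coeff_natDegree; rwa [hd] at this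
  ext i
  match i with
  | 0 => simp
  | 1 => simp
  | 2 => simp
  | 3 => simp
  | 4 => simp [h4]
  | (j+5) =>
    rw [coeff_eq_zero_of_natDegree_lt (by omega)]
    simp [coeff_C, show ¬(j+5=4) by omega, show ¬(j+5=3) by omega, show ¬(j+5=2) by omega,
      show ¬(1=j+5) by omega, show ¬(j+5=0) by omega]

lemma aux_monic_of_comp {e g : ℚ[X]} (hg : g.Monic) (he : e.comp (X ^ 2) = g) : e.Monic := by
  have h2 : ((X : ℚ[X]) ^ 2).natDegree ≠ 0 := by simp
  have hlc := leadingCoeff_comp (p := e) h2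
  rw [he] at hlc
  simp only [leadingCoeff_X_pow, one_pow, mul_one] at hlc
  show e.leadingCoeff = 1
  rw [← hlc]; exact hg


theorem stmt0 (a b c d : ℚ)
    (hf : Irreducible (X ^ 4 + C a * X ^ 3 + C b * X ^ 2 + C c * X + C d : ℚ[X])) :
    ¬ Irreducible (X ^ 8 + C a * X ^ 6 + C b * X ^ 4 + C c * X ^ 2 + C d : ℚ[X]) ↔
      ∃ k l m n : ℚ, a = 2 * l - k ^ 2 ∧ b = 2 * n - 2 * k * m + l ^ 2 ∧
        c = 2 * l * n - m ^ 2 ∧ d = n ^ 2 := by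
  set f : ℚ[X] := X ^ 4 + C a * X ^ 3 + C b * X ^ 2 + C c * X + C d with hfdef
  set F : ℚ[X] := X ^ 8 + C a * X ^ 6 + C b * X ^ 4 + C c * X ^ 2 + C d with hFdef
  have hfF : f.comp (X ^ 2) = F := by
    simp only [hfdef, hFdef, add_comp, mul_comp, X_comp, C_comp, pow_comp]
    ring
  have hfmonic : f.Monic := by unfold f; monicity!
  have hfdeg : f.natDegree = 4 := by unfold f; compute_degree!
  have hFmonic : F.Monic := by unfold F; monicity!
  have hFdeg : F.natDegree = 8 := by unfold F; compute_degree!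
  have hFne : F ≠ 0 := hFmonic.ne_zero
  have hquartic : ∀ k l m n : ℚ,
      (X ^ 4 + C k * X ^ 3 + C l * X ^ 2 + C m * X + C n : ℚ[X]).natDegree = 4 := by
    intro k l m n; compute_degree!
  have hqnotunit : ∀ k l m n : ℚ,
      ¬ IsUnit (X ^ 4 + C k * X ^ 3 + C l * X ^ 2 + C m * X + C n : ℚ[X]) := by
    intro k l m n hu
    have := natDegree_eq_zero_of_isUnit hu
    rw [hquartic] at this
    exact absurd this (by norm_num)
  have hprod : ∀ k l m n : ℚ,
      (X ^ 4 + C k * X ^ 3 + C l * X ^ 2 + C m * X + C n : ℚ[X]) *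
        (X ^ 4 + C (-k) * X ^ 3 + C l * X ^ 2 + C (-m) * X + C n) =
      X ^ 8 + C (2 * l - k ^ 2) * X ^ 6 + C (2 * n - 2 * k * m + l ^ 2) * X ^ 4
        + C (2 * l * n - m ^ 2) * X ^ 2 + C (n ^ 2) := by
    intro k l m n
    simp only [map_add, map_sub, map_mul, map_pow, map_neg, map_ofNat]
    ring
  constructor
  · intro hnotirr
    have hFnotunit : ¬IsUnit F := fun hu => by
      have h := natDegree_eq_zero_of_isUnit hu; rw [hFdeg] at h; exact absurd h (by norm_num)
    have hexists : ¬∀ p q : ℚ[X], F = p * q → IsUnit p ∨ IsUnit q :=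
      fun h => hnotirr ⟨hFnotunit, h⟩
    push_neg at hexists
    obtain ⟨p, q, hpq, hpu, hqu⟩ := hexists
    have hp0 : p ≠ 0 := fun h => hFne (by rw [hpq, h, zero_mul])
    have hq0 : q ≠ 0 := fun h => hFne (by rw [hpq, h, mul_zero])
    have hdeg8 : p.natDegree + q.natDegree = 8 := by
      rw [← natDegree_mul hp0 hq0, ← hpq, hFdeg]
    have hndpos : ∀ s : ℚ[X], s ≠ 0 → ¬ IsUnit s → 1 ≤ s.natDegree := by
      intro s hs hsu
      rcases Nat.eq_zero_or_pos s.natDegree with h | h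
      · exfalso
        have hC := eq_C_of_natDegree_eq_zero h
        have hc : s.coeff 0 ≠ 0 := fun h0 => hs (by rw [hC, h0, map_zero])
        exact hsu (hC ▸ isUnit_C.mpr (isUnit_iff_ne_zero.mpr hc))
      · exact h
    have hp1 : 1 ≤ p.natDegree := hndpos p hp0 hpu
    have hq1 : 1 ≤ q.natDegree := hndpos q hq0 hqu
    obtain ⟨r, hr4, hrdvd, hru, hrne⟩ :
        ∃ r : ℚ[X], r.natDegree ≤ 4 ∧ r ∣ F ∧ ¬IsUnit r ∧ r ≠ 0 := by
      rcases le_or_gt p.natDegree 4 with h | h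
      · exact ⟨p, h, ⟨q, hpq⟩, hpu, hp0⟩
      · exact ⟨q, by omega, ⟨p, by rw [hpq, mul_comm]⟩, hqu, hq0⟩
    obtain ⟨g₀, hg₀irr, hg₀dvd⟩ := WfDvdMonoid.exists_irreducible_factor hru hrne
    set g : ℚ[X] := normalize g₀ with hgdef
    have hgirr : Irreducible g := (normalize_associated g₀).symm.irreducible hg₀irr
    have hgmonic : g.Monic := monic_normalize hg₀irr.ne_zero
    have hgr : g ∣ r := normalize_dvd_iff.mpr hg₀dvd
    have hgdvdF : g ∣ F := hgr.trans hrdvd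
    have hgdeg4 : g.natDegree ≤ 4 := le_trans (natDegree_le_of_dvd hgr hrne) hr4
    set nn := g.natDegree with hnn
    have hn1 : 1 ≤ nn := hgirr.natDegree_pos
    set g₂ : ℚ[X] := (-1) ^ nn * g.comp (-X) with hg₂def
    have hg₂monic : g₂.Monic := hgmonic.neg_one_pow_natDegree_mul_comp_neg_X
    have hunits : ((-1 : ℚ[X]) ^ nn) = C ((-1) ^ nn) := by simp
    have hg₂coeff : ∀ i, g₂.coeff i = (-1) ^ (nn + i) * g.coeff i := by
      intro i
      rw [hg₂def, hunits, coeff_C_mul, aux_coeff_comp_neg, pow_add]; ring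
    have hg₂deg : g₂.natDegree = nn := by
      rw [hg₂def, hunits, natDegree_C_mul (pow_ne_zero _ (by norm_num : (-1:ℚ) ≠ 0)),
        natDegree_comp]
      simp [hnn]
    have hFeven : F.comp (-X) = F := by
      simp only [hFdef, add_comp, mul_comp, X_comp, C_comp, pow_comp]; ring
    have hgdvd' : g.comp (-X) ∣ F := by
      obtain ⟨s, hs⟩ := hgdvdF
      exact ⟨s.comp (-X), by rw [← hFeven, hs, mul_comp]⟩
    have hsq : ((-1 : ℚ[X]) ^ nn) * ((-1) ^ nn) = 1 := by
      rw [← pow_add]; exact Even.neg_one_pow ⟨nn, rfl⟩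
    have hg₂dvdF : g₂ ∣ F := by
      obtain ⟨t, ht⟩ := hgdvd'
      refine ⟨(-1) ^ nn * t, ?_⟩
      rw [ht, hg₂def, show ((-1:ℚ[X])^nn * g.comp (-X)) * ((-1)^nn * t)
        = (((-1:ℚ[X])^nn) * ((-1)^nn)) * (g.comp (-X) * t) by ring, hsq, one_mul]
    by_cases hgg : g = g₂
    · exfalso
      rcases Nat.even_or_odd nn with hne | hno
      · have hodd0 : ∀ i, Odd i → g.coeff i = 0 := by
          intro i hi
          have h := hg₂coeff i
          rw [← hgg, Odd.neg_one_pow (hne.add_odd hi)] at h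
          linarith
        obtain ⟨e, he⟩ := aux_even_part g hodd0
        have hemonic : e.Monic := aux_monic_of_comp hgmonic he
        have hedvd : e ∣ f := aux_dvd_of_comp hemonic (by rw [he, hfF]; exact hgdvdF)
        have hedeg : e.natDegree * 2 = nn := by
          have h := congrArg natDegree he
          rwa [natDegree_comp, natDegree_pow, natDegree_X, mul_one] at h
        obtain ⟨t, htf⟩ := hedvd
        have ht0 : t ≠ 0 := fun h => hfmonic.ne_zero (by rw [htf, h, mul_zero])
        rcases hf.isUnit_or_isUnit htf with hu | hu
        · have := natDegree_eq_zero_of_isUnit hu; omega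
        · have htd := natDegree_eq_zero_of_isUnit hu
          have h := congrArg natDegree htf
          rw [natDegree_mul hemonic.ne_zero ht0, hfdeg, htd] at h
          omega
      · have h0 : g.coeff 0 = 0 := by
          have h := hg₂coeff 0
          rw [← hgg, Odd.neg_one_pow (by simpa using hno)] at h
          linarith
        have hXF : X ∣ F := ((X_dvd_iff.mpr h0).trans hgdvdF)
        have hd0 : d = 0 := by
          have h := X_dvd_iff.mp hXF
          rw [hFdef] at h
          simpa [coeff_C] using h
        have hXf : X ∣ f := X_dvd_iff.mpr (by simp [hfdef, coeff_C, hd0])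
        obtain ⟨t, htf⟩ := hXf
        have ht0 : t ≠ 0 := fun h => hfmonic.ne_zero (by rw [htf, h, mul_zero])
        rcases hf.isUnit_or_isUnit htf with hu | hu
        · exact not_isUnit_X hu
        · have htd := natDegree_eq_zero_of_isUnit hu
          have h := congrArg natDegree htf
          rw [natDegree_mul X_ne_zero ht0, hfdeg, natDegree_X, htd] at h
          omega
    · have hcop : IsCoprime g g₂ := by
        rw [hgirr.coprime_iff_not_dvd]
        intro hdvd
        apply hgg
        obtain ⟨t, ht⟩ := hdvd
        have ht0 : t ≠ 0 := fun h => hg₂monic.ne_zero (by rw [ht, h, mul_zero])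
        have htd : t.natDegree = 0 := by
          have h := congrArg natDegree ht
          rw [natDegree_mul hgmonic.ne_zero ht0, hg₂deg] at h
          omega
        have htC := eq_C_of_natDegree_eq_zero htd
        have hc1 : t.coeff 0 = 1 := by
          have h : g₂.leadingCoeff = g.leadingCoeff * t.leadingCoeff := by
            rw [ht, leadingCoeff_mul]
          rw [hg₂monic.leadingCoeff, hgmonic.leadingCoeff, one_mul] at h
          rw [← coeff_natDegree, htd] at h
          exact h.symm
        rw [ht, htC, hc1, map_one, mul_one]
      have hGdvd : g * g₂ ∣ F := hcop.mul_dvd hgdvdF hg₂dvdF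
      have hGeven : (g * g₂).comp (-X) = g * g₂ := by
        rw [mul_comp, hg₂def, mul_comp, hunits, C_comp, comp_neg_X_comp_neg_X]
        ring
      have hoddG : ∀ i, Odd i → (g * g₂).coeff i = 0 := by
        intro i hi
        have h := aux_coeff_comp_neg (g * g₂) i
        rw [hGeven, Odd.neg_one_pow hi] at h
        linarith
      obtain ⟨e, he⟩ := aux_even_part _ hoddG
      have hGmonic : (g * g₂).Monic := hgmonic.mul hg₂monic
      have hemonic : e.Monic := aux_monic_of_comp hGmonic he
      have hedvd : e ∣ f := aux_dvd_of_comp hemonic (by rw [he, hfF]; exact hGdvd)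
      have hGdeg : (g * g₂).natDegree = nn + nn := by
        rw [natDegree_mul hgmonic.ne_zero hg₂monic.ne_zero, hg₂deg]
      have hedeg : e.natDegree * 2 = nn + nn := by
        have h := congrArg natDegree he
        rwa [natDegree_comp, natDegree_pow, natDegree_X, mul_one, hGdeg] at h
      obtain ⟨t, htf⟩ := hedvd
      have ht0 : t ≠ 0 := fun h => hfmonic.ne_zero (by rw [htf, h, mul_zero])
      rcases hf.isUnit_or_isUnit htf with hu | hu
      · exfalso; have := natDegree_eq_zero_of_isUnit hu; omega
      · have htd := natDegree_eq_zero_of_isUnit hu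
        have htC := eq_C_of_natDegree_eq_zero htd
        have hc1 : t.coeff 0 = 1 := by
          have h : f.leadingCoeff = e.leadingCoeff * t.leadingCoeff := by
            rw [htf, leadingCoeff_mul]
          rw [hfmonic.leadingCoeff, hemonic.leadingCoeff, one_mul] at h
          rw [← coeff_natDegree, htd] at h
          exact h.symm
        have hfe : f = e := by rw [htf, htC, hc1, map_one, mul_one]
        have hFG : F = g * g₂ := by rw [← hfF, hfe, he]
        have hn4 : nn = 4 := by
          have h := congrArg natDegree hFG
          rw [hFdeg, hGdeg] at h
          omega
        have hgeq := aux_quartic hgmonic hn4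
        have hg₂eq : g₂ = X ^ 4 + C (-(g.coeff 3)) * X ^ 3 + C (g.coeff 2) * X ^ 2
            + C (-(g.coeff 1)) * X + C (g.coeff 0) := by
          have h := aux_quartic hg₂monic (hg₂deg.trans hn4)
          rw [h, hg₂coeff 3, hg₂coeff 2, hg₂coeff 1, hg₂coeff 0, hn4]
          norm_num
        have hFexp : F = X ^ 8 + C (2 * g.coeff 2 - (g.coeff 3) ^ 2) * X ^ 6
            + C (2 * g.coeff 0 - 2 * (g.coeff 3) * (g.coeff 1) + (g.coeff 2) ^ 2) * X ^ 4
            + C (2 * (g.coeff 2) * (g.coeff 0) - (g.coeff 1) ^ 2) * X ^ 2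
            + C ((g.coeff 0) ^ 2) := by
          rw [hFG]
          nth_rewrite 1 [hgeq]
          rw [hg₂eq, hprod]
        rw [hFdef] at hFexp
        have hco : ∀ i : ℕ, (X ^ 8 + C a * X ^ 6 + C b * X ^ 4 + C c * X ^ 2 + C d : ℚ[X]).coeff i
            = (X ^ 8 + C (2 * g.coeff 2 - (g.coeff 3) ^ 2) * X ^ 6
            + C (2 * g.coeff 0 - 2 * (g.coeff 3) * (g.coeff 1) + (g.coeff 2) ^ 2) * X ^ 4
            + C (2 * (g.coeff 2) * (g.coeff 0) - (g.coeff 1) ^ 2) * X ^ 2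
            + C ((g.coeff 0) ^ 2) : ℚ[X]).coeff i := fun i => by rw [← hFexp]
        have h6 := hco 6
        have h4 := hco 4
        have h2 := hco 2
        have h0 := hco 0
        simp only [coeff_add, coeff_C_mul, coeff_X_pow, coeff_C] at h6 h4 h2 h0
        norm_num at h6 h4 h2 h0
        exact ⟨g.coeff 3, g.coeff 2, g.coeff 1, g.coeff 0, h6, h4, h2, h0⟩
  · rintro ⟨k, l, m, n, ha, hb, hc, hd⟩ hirr
    have hpq : F = (X ^ 4 + C k * X ^ 3 + C l * X ^ 2 + C m * X + C n : ℚ[X]) *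
        (X ^ 4 + C (-k) * X ^ 3 + C l * X ^ 2 + C (-m) * X + C n) := by
      rw [hprod, hFdef, ha, hb, hc, hd]
    rcases hirr.isUnit_or_isUnit hpq with h | h
    · exact hqnotunit _ _ _ _ h
    · exact hqnotunit _ _ _ _ h
end

section
/- Let a, b ∈ ℚ and suppose f(x) = x⁴ + a·x² + b is irreducible over ℚ. Then f(x²) = x⁸ + a·x⁴ + b is reducible over ℚ if and only if there exist r, s ∈ ℚ such that b = r⁴ and (s² − 4r)² = 4(2r² + a). (This last condition is the statement that s equals one of the four nested radicals √(±4r ± 2√(2r²+a)), i.e. that at least one of these four expressions is rational.) -/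
open Polynomial

private lemma key_id (c0 c1 c2 c3 : ℚ) :
    (X^4 + C c3*X^3 + C c2*X^2 + C c1*X + C c0) *
      (X^4 - C c3*X^3 + C c2*X^2 - C c1*X + C c0)
    = X^8 + C (2*c2 - c3^2)*X^6 + C (2*c0 + c2^2 - 2*c1*c3)*X^4
        + C (2*c0*c2 - c1^2)*X^2 + C (c0^2) := by
  simp only [map_add, map_sub, map_mul, map_pow, map_ofNat]
  ring

private lemma key_id2 (c0 c2 d0 d2 : ℚ) :
    (X^4 + C c2*X^2 + C c0) * (X^4 + C d2*X^2 + C d0)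
    = X^8 + C (c2+d2)*X^6 + C (c0+d0+c2*d2)*X^4 + C (c2*d0+c0*d2)*X^2 + C (c0*d0) := by
  simp only [map_add, map_mul]; ring

private lemma key_id3 (c0 c2 d0 d2 : ℚ) :
    (X^2 + C c2*X + C c0) * (X^2 + C d2*X + C d0)
    = X^4 + C (c2+d2)*X^3 + C (c0+d0+c2*d2)*X^2 + C (c2*d0+c0*d2)*X + C (c0*d0) := by
  simp only [map_add, map_mul]; ring

private lemma ext8 {a b e6 e4 e2 e0 : ℚ}
    (h : (X^8 + C a*X^4 + C b : ℚ[X]) = X^8 + C e6*X^6 + C e4*X^4 + C e2*X^2 + C e0) :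
    e6 = 0 ∧ e4 = a ∧ e2 = 0 ∧ e0 = b := by
  refine ⟨?_, ?_, ?_, ?_⟩
  · simpa [coeff_X_pow] using (congrArg (fun P => Polynomial.coeff P 6) h).symm
  · simpa [coeff_X_pow] using (congrArg (fun P => Polynomial.coeff P 4) h).symm
  · simpa [coeff_X_pow] using (congrArg (fun P => Polynomial.coeff P 2) h).symm
  · simpa [coeff_X_pow] using (congrArg (fun P => Polynomial.coeff P 0) h).symm

private lemma ext4 {c0 c1 c2 c3 d0 d1 d2 d3 : ℚ}
    (h : (X^4 + C c3*X^3 + C c2*X^2 + C c1*X + C c0 : ℚ[X])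
        = X^4 + C d3*X^3 + C d2*X^2 + C d1*X + C d0) :
    c3 = d3 ∧ c2 = d2 ∧ c1 = d1 ∧ c0 = d0 := by
  refine ⟨?_, ?_, ?_, ?_⟩
  · simpa [coeff_X_pow] using congrArg (fun P => Polynomial.coeff P 3) h
  · simpa [coeff_X_pow] using congrArg (fun P => Polynomial.coeff P 2) h
  · simpa [coeff_X_pow] using congrArg (fun P => Polynomial.coeff P 1) h
  · simpa [coeff_X_pow] using congrArg (fun P => Polynomial.coeff P 0) h

private lemma quartic_eq {p : ℚ[X]} (hm : p.Monic) (hd : p.natDegree = 4) :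
    p = X^4 + C (p.coeff 3) * X^3 + C (p.coeff 2) * X^2 + C (p.coeff 1) * X + C (p.coeff 0) := by
  have h5 : p.natDegree < 5 := by omega
  have h4 : p.coeff 4 = 1 := by
    have := hm.coeff_natDegree; rwa [hd] at this
  conv_lhs => rw [p.as_sum_range' 5 h5]
  simp only [Finset.sum_range_succ, Finset.sum_range_zero, ← C_mul_X_pow_eq_monomial, h4, C_1]
  ring

private lemma four_dvd (a b : ℚ)
    (hf : Irreducible (X ^ 4 + C a * X ^ 2 + C b : ℚ[X]))
    {p : ℚ[X]} (hp : Irreducible p)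
    (hdvd : p ∣ (X ^ 8 + C a * X ^ 4 + C b : ℚ[X])) : 4 ∣ p.natDegree := by
  haveI := Fact.mk hp
  set β : AdjoinRoot p := AdjoinRoot.root p with hβ
  have hcomp : (X ^ 8 + C a * X ^ 4 + C b : ℚ[X]) = (X ^ 4 + C a * X ^ 2 + C b).comp (X^2) := by
    simp only [add_comp, mul_comp, pow_comp, X_comp, C_comp]
    ring
  have hg0 : (Polynomial.aeval β) (X ^ 8 + C a * X ^ 4 + C b : ℚ[X]) = 0 := by
    rw [hβ]; erw [AdjoinRoot.aeval_eq, AdjoinRoot.mk_eq_zero]; exact hdvd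
  have hf0 : (Polynomial.aeval (β^2)) (X ^ 4 + C a * X ^ 2 + C b : ℚ[X]) = 0 := by
    rw [hcomp, aeval_comp] at hg0
    simpa using hg0
  have hmonic : (X ^ 4 + C a * X ^ 2 + C b : ℚ[X]).Monic := by
    monicity!
  have hmin : minpoly ℚ (β^2) = X ^ 4 + C a * X ^ 2 + C b :=
    (minpoly.eq_of_irreducible_of_monic hf hf0 hmonic).symm
  haveI hfd : FiniteDimensional ℚ (AdjoinRoot p) := (AdjoinRoot.powerBasis (K := ℚ) hp.ne_zero).finite
  have hdim : Module.finrank ℚ (AdjoinRoot p) = p.natDegree :=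
    (AdjoinRoot.powerBasis (K := ℚ) hp.ne_zero).finrank
  have hint : IsIntegral ℚ (β^2) := IsIntegral.of_finite ℚ _
  have hdvd4 := minpoly.degree_dvd hint
  rw [hmin, hdim] at hdvd4
  have hdeg4 : (X ^ 4 + C a * X ^ 2 + C b : ℚ[X]).natDegree = 4 := by compute_degree!
  rwa [hdeg4] at hdvd4

theorem stmt1 (a b : ℚ)
    (hf : Irreducible (X ^ 4 + C a * X ^ 2 + C b : ℚ[X])) :
    ¬ Irreducible (X ^ 8 + C a * X ^ 4 + C b : ℚ[X]) ↔
      ∃ r s : ℚ, b = r ^ 4 ∧ (s ^ 2 - 4 * r) ^ 2 = 4 * (2 * r ^ 2 + a) := by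
  constructor
  · intro hg
    have hgmonic : (X ^ 8 + C a * X ^ 4 + C b : ℚ[X]).Monic := by monicity!
    have hgdeg : (X ^ 8 + C a * X ^ 4 + C b : ℚ[X]).natDegree = 8 := by compute_degree!
    have hg0' : (X ^ 8 + C a * X ^ 4 + C b : ℚ[X]) ≠ 0 := hgmonic.ne_zero
    have hgu : ¬ IsUnit (X ^ 8 + C a * X ^ 4 + C b : ℚ[X]) := by
      intro h; have := natDegree_eq_zero_of_isUnit h; omega
    obtain ⟨p, hpm, hpi, hpdvd⟩ := (X ^ 8 + C a * X ^ 4 + C b : ℚ[X]).exists_monic_irreducible_factor hgu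
    have h4p : 4 ∣ p.natDegree := four_dvd a b hf hpi hpdvd
    have hple : p.natDegree ≤ 8 := hgdeg ▸ natDegree_le_of_dvd hpdvd hg0'
    have hppos : 0 < p.natDegree := hpi.natDegree_pos
    have hpne : p.natDegree ≠ 8 := by
      intro h8
      exact hg (((eq_of_monic_of_dvd_of_natDegree_le hpm hgmonic hpdvd (by omega)) ▸ hpi))
    have hp4 : p.natDegree = 4 := by omega
    obtain ⟨q, hq⟩ := hpdvd
    have hqm : q.Monic := hpm.of_mul_monic_left (hq ▸ hgmonic)
    have hq4 : q.natDegree = 4 := by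
      have := natDegree_mul hpm.ne_zero hqm.ne_zero
      rw [← hq, hgdeg] at this
      omega
    -- q is irreducible
    have hqi : Irreducible q := by
      have hqu : ¬ IsUnit q := by
        intro h; have := natDegree_eq_zero_of_isUnit h; omega
      obtain ⟨p', hpm', hpi', hpdvd'⟩ := q.exists_monic_irreducible_factor hqu
      have h4p' : 4 ∣ p'.natDegree :=
        four_dvd a b hf hpi' (hpdvd'.trans (Dvd.intro_left p hq.symm))
      have hp'le : p'.natDegree ≤ 4 := hq4 ▸ natDegree_le_of_dvd hpdvd' hqm.ne_zero
      have hp'pos : 0 < p'.natDegree := hpi'.natDegree_pos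
      have : q = p' := eq_of_monic_of_dvd_of_natDegree_le hpm' hqm hpdvd' (by omega)
      exact this ▸ hpi'
    -- symmetry under x ↦ -x
    have hnc : ∀ h : ℚ[X], (h.comp (-X)).natDegree = h.natDegree := by
      intro h; rw [natDegree_comp, natDegree_neg, natDegree_X, mul_one]
    have hmc : ∀ h : ℚ[X], h.Monic → h.natDegree = 4 → (h.comp (-X)).Monic := by
      intro h hm hd
      have : (h.comp (-X)).leadingCoeff = 1 := by
        rw [leadingCoeff_comp (by rw [natDegree_neg, natDegree_X]; omega)]
        simp [hm.leadingCoeff, hd]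
        norm_num
      exact this
    have hgsym : (X ^ 8 + C a * X ^ 4 + C b : ℚ[X]).comp (-X) = X ^ 8 + C a * X ^ 4 + C b := by
      simp only [add_comp, mul_comp, pow_comp, X_comp, C_comp]
      ring
    have hsig : p.comp (-X) * q.comp (-X) = X ^ 8 + C a * X ^ 4 + C b := by
      rw [← mul_comp, ← hq, hgsym]
    have hpd2 : p ∣ p.comp (-X) * q.comp (-X) := hsig ▸ ⟨q, hq⟩
    set c3 := p.coeff 3 with hc3d
    set c2 := p.coeff 2 with hc2d
    set c1 := p.coeff 1 with hc1d
    set c0 := p.coeff 0 with hc0d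
    have cp : p = X^4 + C c3 * X^3 + C c2 * X^2 + C c1 * X + C c0 := quartic_eq hpm hp4
    have hcompP : p.comp (-X) = X^4 + C (-c3)*X^3 + C c2*X^2 + C (-c1)*X + C c0 := by
      conv_lhs => rw [cp]
      simp only [add_comp, mul_comp, pow_comp, X_comp, C_comp, map_neg]
      ring
    rcases (hpi.prime.2.2 _ _ hpd2) with hdv | hdv
    · -- p = p.comp (-X) : both even, f factors into quadratics
      have hpeq : p.comp (-X) = p :=
        eq_of_monic_of_dvd_of_natDegree_le hpm (hmc p hpm hp4) hdv (by rw [hnc, hp4])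
      have hqeq : q.comp (-X) = q := by
        have h1 : p * q.comp (-X) = p * q := by
          conv_lhs => rw [← hpeq]
          rw [hsig]
          exact hq
        exact mul_left_cancel₀ hpm.ne_zero h1
      -- extract that odd coefficients vanish
      have hpext := ext4 ((hcompP.symm.trans hpeq).trans cp)
      have hc3 : c3 = 0 := by have := hpext.1; linarith
      have hc1 : c1 = 0 := by have := hpext.2.2.1; linarith
      set d3 := q.coeff 3 with hd3d
      set d2 := q.coeff 2 with hd2d
      set d1 := q.coeff 1 with hd1d
      set d0 := q.coeff 0 with hd0d
      have cq : q = X^4 + C d3 * X^3 + C d2 * X^2 + C d1 * X + C d0 := quartic_eq hqm hq4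
      have hcompQ : q.comp (-X) = X^4 + C (-d3)*X^3 + C d2*X^2 + C (-d1)*X + C d0 := by
        conv_lhs => rw [cq]
        simp only [add_comp, mul_comp, pow_comp, X_comp, C_comp, map_neg]
        ring
      have hqext := ext4 ((hcompQ.symm.trans hqeq).trans cq)
      have hd3 : d3 = 0 := by have := hqext.1; linarith
      have hd1 : d1 = 0 := by have := hqext.2.2.1; linarith
      have cp' : p = X^4 + C c2 * X^2 + C c0 := by
        rw [cp, hc3, hc1]; simp
      have cq' : q = X^4 + C d2 * X^2 + C d0 := by
        rw [cq, hd3, hd1]; simp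
      have hgfac : (X ^ 8 + C a * X ^ 4 + C b : ℚ[X])
          = X^8 + C (c2+d2)*X^6 + C (c0+d0+c2*d2)*X^4 + C (c2*d0+c0*d2)*X^2 + C (c0*d0) := by
        rw [hq, cp', cq', key_id2]
      obtain ⟨h6, h4, h2, h0⟩ := ext8 hgfac
      -- f factors
      have hffac : (X ^ 4 + C a * X ^ 2 + C b : ℚ[X])
          = (X^2 + C c2*X + C c0) * (X^2 + C d2*X + C d0) := by
        rw [key_id3, h6, h4, h2, h0]
        simp
      rcases hf.isUnit_or_isUnit hffac with hu | hu
      · have : (X^2 + C c2*X + C c0 : ℚ[X]).natDegree = 2 := by compute_degree!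
        have := natDegree_eq_zero_of_isUnit hu
        omega
      · have : (X^2 + C d2*X + C d0 : ℚ[X]).natDegree = 2 := by compute_degree!
        have := natDegree_eq_zero_of_isUnit hu
        omega
    · -- p ∣ q.comp (-X) : so q = p.comp (-X)
      have hqeq : q.comp (-X) = p :=
        eq_of_monic_of_dvd_of_natDegree_le hpm (hmc q hqm hq4) hdv (by rw [hnc, hq4, hp4])
      have hqp : q = p.comp (-X) := by
        have h2 := congrArg (fun h => h.comp (-X)) hqeq
        simp only [comp_assoc] at h2
        have h3 : p.comp (-X) = q := by simpa using h2.symm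
        exact h3.symm
      have hgfac : (X ^ 8 + C a * X ^ 4 + C b : ℚ[X])
          = X^8 + C (2*c2 - c3^2)*X^6 + C (2*c0 + c2^2 - 2*c1*c3)*X^4
              + C (2*c0*c2 - c1^2)*X^2 + C (c0^2) := by
        rw [hq, hqp, hcompP, cp, ← key_id c0 c1 c2 c3]
        simp only [map_neg]
        ring
      obtain ⟨h6, h4, h2, h0⟩ := ext8 hgfac
      by_cases hc3 : c3 = 0
      · -- then f = (X^2 + C c0)^2, contradiction
        have hc2 : c2 = 0 := by rw [hc3] at h6; linarith
        have hc1 : c1 = 0 := by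
          have := h2
          rw [hc2] at this
          nlinarith [this]
        have hffac : (X ^ 4 + C a * X ^ 2 + C b : ℚ[X])
            = (X^2 + C 0*X + C c0) * (X^2 + C 0*X + C c0) := by
          rw [key_id3]
          have e1 : (0:ℚ)+0 = 0 := by ring
          have e2' : c0+c0+0*0 = a := by rw [← h4, hc2, hc1, hc3]; ring
          have e3 : (0*c0+c0*0 : ℚ) = 0 := by ring
          have e4' : c0*c0 = b := by rw [← h0]; ring
          rw [e1, e2', e3, e4']
          simp
        rcases hf.isUnit_or_isUnit hffac with hu | hu <;>
        · have : (X^2 + C 0*X + C c0 : ℚ[X]).natDegree = 2 := by compute_degree!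
          have := natDegree_eq_zero_of_isUnit hu
          omega
      · have hc0 : c0 * c3^2 = c1^2 := by linear_combination h2 - c0*h6
        have hc2 : c2 = c3^2/2 := by linarith
        have hc3' : c3^2 ≠ 0 := pow_ne_zero 2 hc3
        have hc1' : c1 = (c1/c3)*c3 := by field_simp
        have hc0' : c0 = (c1/c3)^2 := by
          refine mul_right_cancel₀ hc3' ?_
          rw [hc0]
          conv_lhs => rw [hc1']
          ring
        refine ⟨c1/c3, c3, ?_, ?_⟩
        · rw [← h0, hc0']
          ring
        · rw [← h4, hc0', hc2]
          field_simp
          ring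
  · rintro ⟨r, s, hb, hs⟩ hirr
    have e4 : 2*(r^2) + (s^2/2)^2 - 2*(s*r)*s = a := by linear_combination hs/4
    have e6 : 2*(s^2/2) - s^2 = 0 := by ring
    have e2 : 2*(r^2)*(s^2/2) - (s*r)^2 = 0 := by ring
    have e0 : (r^2)^2 = b := by rw [hb]; ring
    have hfac : (X ^ 8 + C a * X ^ 4 + C b : ℚ[X]) =
        (X^4 + C s*X^3 + C (s^2/2)*X^2 + C (s*r)*X + C (r^2)) *
        (X^4 - C s*X^3 + C (s^2/2)*X^2 - C (s*r)*X + C (r^2)) := by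
      rw [key_id (r^2) (s*r) (s^2/2) s, e6, e2, e0, e4]
      simp
    rcases hirr.isUnit_or_isUnit hfac with hu | hu
    · have : (X^4 + C s*X^3 + C (s^2/2)*X^2 + C (s*r)*X + C (r^2) : ℚ[X]).natDegree = 4 := by
        compute_degree!
      have := natDegree_eq_zero_of_isUnit hu
      omega
    · have : (X^4 - C s*X^3 + C (s^2/2)*X^2 - C (s*r)*X + C (r^2) : ℚ[X]).natDegree = 4 := by
        compute_degree!
      have := natDegree_eq_zero_of_isUnit hu
      omega
end

section
/- Let a, b, c, d ∈ ℚ, suppose f(x) = x⁴ + a·x³ + b·x² + c·x + d is irreducible over ℚ, and suppose f(x²) = x⁸ + a·x⁶ + b·x⁴ + c·x² + d is reducible over ℚ. Then there exist n, x₀ ∈ ℚ such that d = n² and x₀⁴ − (2b + 12n)·x₀² + (8c + 8an)·x₀ + (b² − 4ac − 4bn + 4n²) = 0. -/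
open Polynomial

lemma coeff_comp_neg_X' (p : ℚ[X]) (n : ℕ) : (p.comp (-X)).coeff n = (-1)^n * p.coeff n := by
  induction p using Polynomial.induction_on' with
  | add p q hp hq => simp [add_comp, hp, hq, mul_add]
  | monomial m a =>
    have h1 : ((-X : ℚ[X])) ^ m = C ((-1)^m) * X ^ m := by
      rw [neg_pow]; simp [C_neg]
    simp only [monomial_comp, ← C_mul_X_pow_eq_monomial]
    rw [mul_comp, C_comp, pow_comp, X_comp, h1]
    simp only [← mul_assoc, ← C_mul, coeff_C_mul, coeff_X_pow]
    rcases eq_or_ne n m with rfl|h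
    · simp; ring
    · simp [h]

lemma even_eq_expand' {h : ℚ[X]} (hcoeff : ∀ n, h.coeff n = (-1)^n * h.coeff n) :
    expand ℚ 2 (contract 2 h) = h := by
  ext n
  rw [coeff_expand (by norm_num)]
  rcases Nat.even_or_odd n with ⟨k, hk⟩ | hodd
  · have h2 : 2 ∣ n := ⟨k, by omega⟩
    rw [if_pos h2, coeff_contract (by norm_num), Nat.div_mul_cancel h2]
  · have h2 : ¬ (2 ∣ n) := by rcases hodd with ⟨k, hk⟩; omega
    rw [if_neg h2]
    have := hcoeff n
    rcases hodd with ⟨k, hk⟩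
    subst hk
    rw [pow_succ, pow_mul] at this
    simp at this
    linarith [this]

lemma dvd_of_expand_dvd_monic {P Q : ℚ[X]} (hP : P.Monic) (h : expand ℚ 2 P ∣ expand ℚ 2 Q) :
    P ∣ Q := by
  rw [← modByMonic_eq_zero_iff_dvd hP]
  by_contra hne
  have hdecomp : Q %ₘ P + P * (Q /ₘ P) = Q := modByMonic_add_div Q P
  have hdvd : expand ℚ 2 P ∣ expand ℚ 2 (Q %ₘ P) := by
    have : expand ℚ 2 (Q %ₘ P) = expand ℚ 2 Q - expand ℚ 2 P * expand ℚ 2 (Q /ₘ P) := by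
      rw [← map_mul, ← map_sub]
      congr 1
      linear_combination hdecomp
    rw [this]
    exact dvd_sub h (Dvd.intro _ rfl)
  have hlt : (expand ℚ 2 (Q %ₘ P)).degree < (expand ℚ 2 P).degree := by
    have h1 : (Q %ₘ P).degree < P.degree := degree_modByMonic_lt Q hP
    have hP0 : P ≠ 0 := hP.ne_zero
    have hn : (Q %ₘ P).natDegree < P.natDegree := natDegree_lt_natDegree hne h1
    rw [degree_eq_natDegree ((expand_ne_zero two_pos).mpr hne),
      degree_eq_natDegree ((expand_ne_zero two_pos).mpr hP0),
      natDegree_expand, natDegree_expand]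
    exact_mod_cast by omega
  exact hne ((expand_eq_zero two_pos).mp (eq_zero_of_dvd_of_degree_lt hdvd hlt))

lemma dvd_of_expand_dvd' {P Q : ℚ[X]} (hP : P ≠ 0) (h : expand ℚ 2 P ∣ expand ℚ 2 Q) :
    P ∣ Q := by
  have hunit : IsUnit (C P.leadingCoeff⁻¹ : ℚ[X]) :=
    isUnit_C.mpr ((inv_ne_zero (leadingCoeff_ne_zero.mpr hP)).isUnit)
  have hm : (P * C P.leadingCoeff⁻¹).Monic := monic_mul_leadingCoeff_inv hP
  have hassoc : Associated P (P * C P.leadingCoeff⁻¹) := associated_mul_unit_right _ _ hunit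
  refine hassoc.dvd.trans (dvd_of_expand_dvd_monic hm ?_)
  rw [map_mul]
  exact ((associated_mul_unit_right _ _ (hunit.map (expand ℚ 2))).symm.dvd).trans h

theorem stmt2 (a b c d : ℚ)
    (hf : Irreducible (X ^ 4 + C a * X ^ 3 + C b * X ^ 2 + C c * X + C d : ℚ[X]))
    (hred : ¬ Irreducible (X ^ 8 + C a * X ^ 6 + C b * X ^ 4 + C c * X ^ 2 + C d : ℚ[X])) :
    ∃ n x₀ : ℚ, d = n ^ 2 ∧
      x₀ ^ 4 - (2 * b + 12 * n) * x₀ ^ 2 + (8 * c + 8 * a * n) * x₀ +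
        (b ^ 2 - 4 * a * c - 4 * b * n + 4 * n ^ 2) = 0 := by
  set f : ℚ[X] := X ^ 4 + C a * X ^ 3 + C b * X ^ 2 + C c * X + C d with hfdef
  set F : ℚ[X] := X ^ 8 + C a * X ^ 6 + C b * X ^ 4 + C c * X ^ 2 + C d with hFdef
  have hfmonic : f.Monic := by unfold f; monicity!
  have hFf : F = expand ℚ 2 f := by
    unfold F f
    simp only [map_add, map_mul, map_pow, expand_X, expand_C]
    ring
  have hFdeg : F.natDegree = 8 := by unfold F; compute_degree!
  have hF0 : F ≠ 0 := fun h => by simp [h] at hFdeg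
  have hFnu : ¬ IsUnit F := fun h => by
    rw [isUnit_iff_degree_eq_zero, degree_eq_natDegree hF0, hFdeg] at h
    exact absurd h (by decide)
  -- get a factorization
  rw [irreducible_iff] at hred
  push_neg at hred
  obtain ⟨u, v, huv, hu, hv⟩ := hred hFnu
  have hu0 : u ≠ 0 := fun h => hF0 (by rw [huv, h, zero_mul])
  have hv0 : v ≠ 0 := fun h => hF0 (by rw [huv, h, mul_zero])
  have hudeg : 1 ≤ u.natDegree := by
    rcases Nat.eq_zero_or_pos u.natDegree with h0 | h1
    · exact absurd (isUnit_iff_degree_eq_zero.mpr (by rw [degree_eq_natDegree hu0, h0]; rfl)) hu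
    · exact h1
  have hvdeg : 1 ≤ v.natDegree := by
    rcases Nat.eq_zero_or_pos v.natDegree with h0 | h1
    · exact absurd (isUnit_iff_degree_eq_zero.mpr (by rw [degree_eq_natDegree hv0, h0]; rfl)) hv
    · exact h1
  have hsum : u.natDegree + v.natDegree = 8 := by rw [← hFdeg, huv, natDegree_mul hu0 hv0]
  -- irreducible monic factor g of u
  obtain ⟨g0, hg0irr, hg0dvd⟩ := WfDvdMonoid.exists_irreducible_factor hu hu0
  have hg00 : g0 ≠ 0 := hg0irr.ne_zero
  set g : ℚ[X] := g0 * C g0.leadingCoeff⁻¹ with hgdef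
  have hgmonic : g.Monic := monic_mul_leadingCoeff_inv hg00
  have hgassoc : Associated g0 g := by
    apply associated_mul_unit_right
    exact isUnit_C.mpr ((inv_ne_zero (leadingCoeff_ne_zero.mpr hg00)).isUnit)
  have hgirr : Irreducible g := hgassoc.irreducible hg0irr
  have hgdvdF : g ∣ F := (hgassoc.symm.dvd).trans (hg0dvd.trans ⟨v, huv⟩)
  have hg0' : g ≠ 0 := hgmonic.ne_zero
  have hgdegle : g.natDegree ≤ 7 := by
    have := natDegree_le_of_dvd (hgassoc.symm.dvd.trans hg0dvd) hu0
    omega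
  -- the even product
  set h : ℚ[X] := g * g.comp (-X) with hhdef
  have hheven : ∀ n, h.coeff n = (-1)^n * h.coeff n := by
    intro n
    have hc : h.comp (-X) = h := by
      rw [hhdef, mul_comp, comp_neg_X_comp_neg_X, mul_comm]
    conv_lhs => rw [← hc, coeff_comp_neg_X']
  have hhexp : expand ℚ 2 (contract 2 h) = h := even_eq_expand' hheven
  set G : ℚ[X] := contract 2 h with hGdef
  -- h divides F^2
  have hgnegdvd : g.comp (-X) ∣ F := by
    have hFeven : F.comp (-X) = F := by
      rw [hFf, expand_eq_comp_X_pow, comp_assoc]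
      congr 1
      rw [pow_comp, X_comp, neg_pow]
      simp
    exact (dvd_comp_neg_X_iff _ _).mp (by rw [hFeven]; exact hgdvdF)
  have hhdvd : h ∣ F * F := mul_dvd_mul hgdvdF hgnegdvd
  -- degrees
  have hgneg0 : g.comp (-X) ≠ 0 := fun hz => by
    have := congrArg (fun P : ℚ[X] => P.comp (-X)) hz
    simp only [comp_neg_X_comp_neg_X, zero_comp] at this
    exact hg0' this
  have hgnegdeg : (g.comp (-X)).natDegree = g.natDegree := by
    rw [natDegree_comp]
    simp
  have hhdeg : h.natDegree = 2 * g.natDegree := by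
    rw [hhdef, natDegree_mul hg0' hgneg0, hgnegdeg]; ring
  have hGdeg : G.natDegree = g.natDegree := by
    have := natDegree_expand 2 G
    rw [hhexp] at this
    omega
  have hG0 : G ≠ 0 := by
    intro hz
    have : h = 0 := by rw [← hhexp, hz, map_zero]
    exact (mul_ne_zero hg0' hgneg0) this
  have hGnu : ¬ IsUnit G := by
    intro hunit
    have : G.natDegree = 0 := natDegree_eq_zero_of_isUnit hunit
    have hge1 : 1 ≤ g.natDegree := hgirr.natDegree_pos -- name guess
    omega
  have hGdvd : G ∣ f * f := by
    apply dvd_of_expand_dvd' hG0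
    rw [hhexp, map_mul, ← hFf]
    exact hhdvd
  -- G nonunit dividing f^2: f ∣ G
  obtain ⟨w, hwirr, hwdvd⟩ := WfDvdMonoid.exists_irreducible_factor hGnu hG0
  have hwprime : Prime w := hwirr.prime  -- GCD domain
  have hwf : w ∣ f := by
    rcases hwprime.dvd_mul.mp (hwdvd.trans hGdvd) with h1 | h1 <;> exact h1
  have hfG : f ∣ G := ((hwirr.associated_of_dvd hf hwf).symm.dvd).trans hwdvd
  obtain ⟨G₂, hG₂⟩ := hfG
  have hf0 : f ≠ 0 := hfmonic.ne_zero
  have hfdeg : f.natDegree = 4 := by unfold f; compute_degree!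
  have hG₂dvd : G₂ ∣ f := by
    have : f * G₂ ∣ f * f := hG₂ ▸ hGdvd
    exact (mul_dvd_mul_iff_left hf0).mp this
  have hG₂0 : G₂ ≠ 0 := fun hz => hG0 (by rw [hG₂, hz, mul_zero])
  have hG₂deg : G₂.natDegree ≤ 3 := by
    have := natDegree_mul hf0 hG₂0
    rw [← hG₂, hGdeg] at this
    omega
  have hG₂unit : IsUnit G₂ := by
    obtain ⟨t, ht⟩ := hG₂dvd
    rcases hf.isUnit_or_isUnit ht with h1 | h1
    · exact h1
    · exfalso
      have ht0 : t ≠ 0 := fun hz => hf0 (by rw [ht, hz, mul_zero])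
      have : t.natDegree = 0 := natDegree_eq_zero_of_isUnit h1
      have := natDegree_mul hG₂0 ht0
      rw [← ht, hfdeg] at this
      omega
  -- pin down G = f
  obtain ⟨lam, hlamunit, hlam⟩ := Polynomial.isUnit_iff.mp hG₂unit
  have hGdeg4 : G.natDegree = 4 := by
    have := natDegree_mul hf0 hG₂0
    rw [← hG₂, hfdeg, natDegree_eq_zero_of_isUnit hG₂unit] at this
    omega
  have hg4 : g.natDegree = 4 := by rw [← hGdeg, hGdeg4]
  have hhmonic : h.Monic := by
    have h1 : (g.comp (-X)).leadingCoeff = 1 := by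
      rw [comp_neg_X_leadingCoeff_eq, hg4, hgmonic.leadingCoeff]
      norm_num
    have : h.leadingCoeff = 1 := by
      rw [hhdef, leadingCoeff_mul, h1, hgmonic.leadingCoeff, one_mul]
    exact this
  have hGmonic : G.Monic := by
    rw [← monic_expand_iff two_pos (f := G), hhexp]
    exact hhmonic
  have hlam1 : lam = 1 := by
    have := hGmonic
    rw [Monic.def, hG₂, ← hlam, leadingCoeff_mul, hfmonic.leadingCoeff, one_mul,
      leadingCoeff_C] at this
    exact this
  have hGf : G = f := by rw [hG₂, ← hlam, hlam1, map_one, mul_one]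
  have hkey : g * g.comp (-X) = F := by rw [← hhdef, ← hhexp, hGf, hFf]
  -- extract coefficients of g
  set p := g.coeff 3 with hp
  set q := g.coeff 2 with hq
  set r := g.coeff 1 with hr
  set s := g.coeff 0 with hs
  have hgexp : g = X^4 + C p * X^3 + C q * X^2 + C r * X + C s := by
    have h4 : g.coeff 4 = 1 := by
      have := hgmonic.coeff_natDegree
      rwa [hg4] at this
    have hlt : g.natDegree < 5 := by omega
    conv_lhs => rw [g.as_sum_range' 5 hlt]
    rw [Finset.sum_range_succ, Finset.sum_range_succ, Finset.sum_range_succ,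
      Finset.sum_range_succ, Finset.sum_range_succ, Finset.sum_range_zero]
    simp only [← C_mul_X_pow_eq_monomial, h4, map_one, one_mul]
    ring
  have hgcomp : g.comp (-X) = X^4 - C p * X^3 + C q * X^2 - C r * X + C s := by
    rw [hgexp]
    simp only [add_comp, mul_comp, pow_comp, X_comp, C_comp]
    ring
  rw [hgcomp, hgexp] at hkey
  have hprod : (X^8 + C (2*q-p^2) * X^6 + C (q^2+2*s-2*p*r) * X^4 + C (2*q*s-r^2) * X^2
      + C (s^2) : ℚ[X]) = X ^ 8 + C a * X ^ 6 + C b * X ^ 4 + C c * X ^ 2 + C d := by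
    rw [← hFdef, ← hkey]
    simp only [C_add, C_sub, C_mul, C_pow, map_ofNat]
    ring
  have e6 : 2*q-p^2 = a := by
    have := congrArg (fun P : ℚ[X] => P.coeff 6) hprod
    simp only [coeff_add, coeff_C_mul, coeff_X_pow, coeff_C] at this
    norm_num at this
    exact this
  have e4 : q^2+2*s-2*p*r = b := by
    have := congrArg (fun P : ℚ[X] => P.coeff 4) hprod
    simp only [coeff_add, coeff_C_mul, coeff_X_pow, coeff_C] at this
    norm_num at this
    exact this
  have e2 : 2*q*s-r^2 = c := by
    have := congrArg (fun P : ℚ[X] => P.coeff 2) hprod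
    simp only [coeff_add, coeff_C_mul, coeff_X_pow, coeff_C] at this
    norm_num at this
    exact this
  have e0 : s^2 = d := by
    have := congrArg (fun P : ℚ[X] => P.coeff 0) hprod
    simp only [coeff_add, coeff_C_mul, coeff_X_pow, coeff_C] at this
    norm_num at this
    exact this
  refine ⟨s, q, e0.symm, ?_⟩
  rw [← e6, ← e4, ← e2]
  ring
end

section
/- Let a, c ∈ ℚ with c ≥ 0, set b = c², and suppose f(x) = x⁸ + a·x⁴ + b is irreducible over ℚ. Define R₁(x) = x⁴ + (2a + 12c)·x² + (a − 2c)², R₂(x) = x⁴ + (2a − 12c)·x² + (a + 2c)², and R₃(x) = x⁴ − 4a·x² + 16b. Then: (1) R₁(x) is irreducible over ℚ if and only if 2b + ac is not a square in ℚ; (2) R₂(x) is irreducible over ℚ if and only if c is not a square in ℚ and 2b − ac is not a square in ℚ; (3) R₃(x) is irreducible over ℚ if and only if a − 2c is not a square in ℚ and a + 2c is not a square in ℚ. -/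
open Polynomial


lemma nd_pos (g : ℚ[X]) (hg0 : g ≠ 0) (hg : ¬ IsUnit g) : 1 ≤ g.natDegree := by
  by_contra h
  push_neg at h
  interval_cases hgd : g.natDegree
  · exact hg (by
      rw [eq_C_of_natDegree_eq_zero hgd]
      exact isUnit_C.mpr (isUnit_iff_ne_zero.mpr fun hc => hg0 (by
        rw [eq_C_of_natDegree_eq_zero hgd, hc, map_zero])))

lemma monic2 (g : ℚ[X]) (h2 : g.natDegree = 2) (hm : g.Monic) : ∃ m s, g = X^2 + C m * X + C s := by
  have hd : (g - X^2).degree < 2 := by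
    have := degree_sub_lt (by rw [degree_X_pow, degree_eq_natDegree hm.ne_zero, h2]) hm.ne_zero
      (by simp [hm.leadingCoeff])
    rwa [degree_eq_natDegree hm.ne_zero, h2] at this
  have hd1 : (g - X^2).degree ≤ 1 := Order.le_of_lt_succ (by exact_mod_cast hd)
  exact ⟨(g - X^2).coeff 1, (g - X^2).coeff 0, by
    linear_combination (norm := ring_nf) eq_X_add_C_of_degree_le_one hd1⟩

lemma root_case (p q : ℚ) (g h : ℚ[X]) (hgh : (X^4 + C p * X^2 + C q : ℚ[X]) = g * h)
    (h1 : g.natDegree = 1) : ∃ t : ℚ, p^2 - 4*q = t^2 := by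
  have hc1 : g.coeff 1 ≠ 0 := by
    have : g.coeff 1 = g.leadingCoeff := by rw [leadingCoeff, h1]
    rw [this, leadingCoeff_ne_zero]
    intro h0; rw [h0] at h1; simp at h1
  set r : ℚ := -(g.coeff 0) / (g.coeff 1) with hr
  have hgform := eq_X_add_C_of_natDegree_le_one (le_of_eq h1)
  have hgr : eval r g = 0 := by
    rw [hgform]; simp only [eval_add, eval_mul, eval_C, eval_X, hr]; field_simp; ring
  have hfr : r^4 + p * r^2 + q = 0 := by
    have := congrArg (eval r) hgh
    simpa [eval_mul, hgr] using this
  exact ⟨p + 2*r^2, by linear_combination -4*hfr⟩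

lemma quartic_key (p q : ℚ) :
    ¬ Irreducible (X^4 + C p * X^2 + C q : ℚ[X]) ↔
      (∃ t : ℚ, p^2 - 4*q = t^2) ∨ ∃ s m : ℚ, s^2 = q ∧ m^2 = 2*s - p := by
  have hmon : (X^4 + C p * X^2 + C q : ℚ[X]).Monic := by monicity!
  have hdeg : (X^4 + C p * X^2 + C q : ℚ[X]).natDegree = 4 := by compute_degree!
  constructor
  · intro hirr
    rw [irreducible_iff] at hirr
    push_neg at hirr
    obtain ⟨g, h, hgh, hg, hh⟩ := hirr (not_isUnit_of_natDegree_pos _ (by omega))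
    have hg0 : g ≠ 0 := fun h0 => hmon.ne_zero (by simp [hgh, h0])
    have hh0 : h ≠ 0 := fun h0 => hmon.ne_zero (by simp [hgh, h0])
    have hsum : g.natDegree + h.natDegree = 4 := by
      rw [← natDegree_mul hg0 hh0, ← hgh, hdeg]
    have hg1 : 1 ≤ g.natDegree := nd_pos g hg0 hg
    have hh1 : 1 ≤ h.natDegree := nd_pos h hh0 hh
    -- cases on degree of g
    have hg3 : g.natDegree ≤ 3 := by omega
    interval_cases hgd : g.natDegree
    · exact Or.inl (root_case p q g h hgh hgd)
    · -- both quadratic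
      have hhd : h.natDegree = 2 := by omega
      set L := g.leadingCoeff with hL
      have hL0 : L ≠ 0 := leadingCoeff_ne_zero.mpr hg0
      have hlc : g.leadingCoeff * h.leadingCoeff = 1 := by
        rw [← leadingCoeff_mul, ← hgh]; exact hmon
      set G : ℚ[X] := C L⁻¹ * g with hG
      set H : ℚ[X] := C L * h with hH
      have hGH : (X^4 + C p * X^2 + C q : ℚ[X]) = G * H := by
        rw [hG, hH,
          show (C L⁻¹ * g) * (C L * h) = C (L⁻¹ * L) * (g * h) from by rw [C_mul]; ring,
          inv_mul_cancel₀ hL0, map_one, one_mul, hgh]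
      have hGm : G.Monic := by
        have : G.leadingCoeff = L⁻¹ * L := by
          rw [hG, leadingCoeff_mul, leadingCoeff_C]
        rw [Monic, this, inv_mul_cancel₀ hL0]
      have hHm : H.Monic := by
        have : H.leadingCoeff = L * h.leadingCoeff := by
          rw [hH, leadingCoeff_mul, leadingCoeff_C]
        rw [Monic, this, hlc]
      have hGd : G.natDegree = 2 := by rw [hG, natDegree_C_mul (inv_ne_zero hL0), hgd]
      have hHd : H.natDegree = 2 := by rw [hH, natDegree_C_mul hL0, hhd]
      obtain ⟨m, s, hGf⟩ := monic2 G hGd hGm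
      obtain ⟨n, t, hHf⟩ := monic2 H hHd hHm
      have HEV : ∀ x : ℚ, x^4 + p*x^2 + q = (x^2 + m*x + s) * (x^2 + n*x + t) := by
        intro x
        have := congrArg (eval x) hGH
        rw [hGf, hHf] at this
        simpa using this
      have h0 := HEV 0
      have h1' := HEV 1
      have hm1 := HEV (-1)
      have h2' := HEV 2
      have hm2 := HEV (-2)
      have e3 : m + n = 0 := by linear_combination (2*(h2' - hm2) - 4*(h1' - hm1))/(-24)
      have e1 : m*t + n*s = 0 := by linear_combination (8*(h1' - hm1) - (h2' - hm2))/(-12)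
      have e0 : s*t = q := by linear_combination -h0
      have e2 : s + t + m*n = p := by linear_combination (-(h1' + hm1) + 2*h0)/2
      rcases eq_or_ne m 0 with hm0 | hm0
      · refine Or.inl ⟨s - t, ?_⟩
        have hn0 : n = 0 := by linarith [e3, hm0]
        rw [hm0, hn0] at e2
        linear_combination -(p+s+t)*e2 + 4*e0
      · have hts : t = s := by
          have hnm : n = -m := by linarith
          have : m * (t - s) = 0 := by linear_combination e1 - s*e3
          rcases mul_eq_zero.mp this with h' | h'
          · exact absurd h' hm0
          · linarith
        refine Or.inr ⟨s, m, ?_, ?_⟩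
        · rw [hts] at e0; linear_combination e0
        · have hnm : n = -m := by linarith
          rw [hts, hnm] at e2; linear_combination -e2
    · -- g cubic, h linear
      have hhd : h.natDegree = 1 := by omega
      exact Or.inl (root_case p q h g (by rw [hgh]; ring) hhd)
  · rintro (⟨t, ht⟩ | ⟨s, m, hs, hm⟩) <;> intro hirr
    · have e1 : (C ((p+t)/2) + C ((p-t)/2) : ℚ[X]) = C p := by
        rw [← C_add]; congr 1; ring
      have e2 : (C ((p+t)/2) * C ((p-t)/2) : ℚ[X]) = C q := by
        rw [← C_mul]; congr 1; linear_combination ht/4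
      have hfac : (X^4 + C p * X^2 + C q : ℚ[X]) =
          (X^2 + C ((p+t)/2)) * (X^2 + C ((p-t)/2)) := by
        linear_combination (norm := ring_nf) (-(X^2 : ℚ[X])) * e1 - e2
      rcases hirr.isUnit_or_isUnit hfac with hu | hu <;>
        refine not_isUnit_of_natDegree_pos _ ?_ hu
      · have : (X^2 + C ((p+t)/2) : ℚ[X]).natDegree = 2 := by compute_degree!
        omega
      · have : (X^2 + C ((p-t)/2) : ℚ[X]).natDegree = 2 := by compute_degree!
        omega
    · have e1 : (C s * C s : ℚ[X]) = C q := by rw [← C_mul]; congr 1; linear_combination hs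
      have e2 : (C p : ℚ[X]) = 2 * C s - C m * C m := by
        rw [← C_mul, show (2 * C s : ℚ[X]) = C (2*s) from by rw [C_mul, map_ofNat], ← C_sub]
        congr 1; linear_combination hm
      have hfac : (X^4 + C p * X^2 + C q : ℚ[X]) =
          (X^2 + C m * X + C s) * (X^2 - C m * X + C s) := by
        linear_combination (norm := ring_nf) (X^2 : ℚ[X]) * e2 - e1
      rcases hirr.isUnit_or_isUnit hfac with hu | hu <;>
        refine not_isUnit_of_natDegree_pos _ ?_ hu
      · have : (X^2 + C m * X + C s : ℚ[X]).natDegree = 2 := by compute_degree!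
        omega
      · have : (X^2 - C m * X + C s : ℚ[X]).natDegree = 2 := by compute_degree!
        omega

lemma octic_facts (a c : ℚ)
    (hf : Irreducible (X ^ 8 + C a * X ^ 4 + C (c ^ 2) : ℚ[X])) :
    c ≠ 0 ∧ (∀ t : ℚ, a^2 - 4*c^2 ≠ t^2) ∧ (∀ m : ℚ, 2*c - a ≠ m^2) ∧
      (∀ m : ℚ, -(2*c) - a ≠ m^2) := by
  have nd4 : ∀ u v : ℚ, (X^4 + C u * X^2 + C v : ℚ[X]).natDegree = 4 := by
    intro u v; compute_degree!
  refine ⟨?_, ?_, ?_, ?_⟩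
  · intro h0
    have hfac : (X ^ 8 + C a * X ^ 4 + C (c ^ 2) : ℚ[X]) = X^4 * (X^4 + C a) := by
      rw [h0]; simp; ring
    rcases hf.isUnit_or_isUnit hfac with hu | hu <;>
      refine not_isUnit_of_natDegree_pos _ ?_ hu
    · rw [natDegree_X_pow]; omega
    · have : (X^4 + C a : ℚ[X]).natDegree = 4 := by compute_degree!
      omega
  · intro t ht
    have e1 : (C ((a+t)/2) + C ((a-t)/2) : ℚ[X]) = C a := by
      rw [← C_add]; congr 1; ring
    have e2 : (C ((a+t)/2) * C ((a-t)/2) : ℚ[X]) = C (c^2) := by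
      rw [← C_mul]; congr 1; linear_combination ht/4
    have hfac : (X ^ 8 + C a * X ^ 4 + C (c ^ 2) : ℚ[X]) =
        (X^4 + C ((a+t)/2)) * (X^4 + C ((a-t)/2)) := by
      linear_combination (norm := ring_nf) (-(X^4 : ℚ[X])) * e1 - e2
    rcases hf.isUnit_or_isUnit hfac with hu | hu <;>
      refine not_isUnit_of_natDegree_pos _ ?_ hu
    · have : (X^4 + C ((a+t)/2) : ℚ[X]).natDegree = 4 := by compute_degree!
      omega
    · have : (X^4 + C ((a-t)/2) : ℚ[X]).natDegree = 4 := by compute_degree!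
      omega
  · intro m hm
    have e1 : (C c * C c : ℚ[X]) = C (c^2) := by rw [← C_mul]; congr 1; ring
    have e2 : (C a : ℚ[X]) = 2 * C c - C m * C m := by
      rw [← C_mul, show (2 * C c : ℚ[X]) = C (2*c) from by rw [C_mul, map_ofNat], ← C_sub]
      congr 1; linear_combination -hm
    have hfac : (X ^ 8 + C a * X ^ 4 + C (c ^ 2) : ℚ[X]) =
        (X^4 + C m * X^2 + C c) * (X^4 - C m * X^2 + C c) := by
      linear_combination (norm := ring_nf) (X^4 : ℚ[X]) * e2 - e1
    rcases hf.isUnit_or_isUnit hfac with hu | hu <;>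
      refine not_isUnit_of_natDegree_pos _ ?_ hu
    · have : (X^4 + C m * X^2 + C c : ℚ[X]).natDegree = 4 := by compute_degree!
      omega
    · have : (X^4 - C m * X^2 + C c : ℚ[X]).natDegree = 4 := by compute_degree!
      omega
  · intro m hm
    have e1 : (C c * C c : ℚ[X]) = C (c^2) := by rw [← C_mul]; congr 1; ring
    have e2 : (C a : ℚ[X]) = -(2 * C c) - C m * C m := by
      rw [← C_mul, show (2 * C c : ℚ[X]) = C (2*c) from by rw [C_mul, map_ofNat], ← C_neg,
        ← C_sub]
      congr 1; linear_combination -hm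
    have hfac : (X ^ 8 + C a * X ^ 4 + C (c ^ 2) : ℚ[X]) =
        (X^4 + C m * X^2 - C c) * (X^4 - C m * X^2 - C c) := by
      linear_combination (norm := ring_nf) (X^4 : ℚ[X]) * e2 - e1
    rcases hf.isUnit_or_isUnit hfac with hu | hu <;>
      refine not_isUnit_of_natDegree_pos _ ?_ hu
    · have : (X^4 + C m * X^2 - C c : ℚ[X]).natDegree = 4 := by compute_degree!
      omega
    · have : (X^4 - C m * X^2 - C c : ℚ[X]).natDegree = 4 := by compute_degree!
      omega

theorem stmt3 (a c : ℚ) (hc : 0 ≤ c)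
    (hf : Irreducible (X ^ 8 + C a * X ^ 4 + C (c ^ 2) : ℚ[X])) :
    (Irreducible (X ^ 4 + C (2 * a + 12 * c) * X ^ 2 + C ((a - 2 * c) ^ 2) : ℚ[X]) ↔
      ¬ ∃ r : ℚ, 2 * c ^ 2 + a * c = r ^ 2) ∧
    (Irreducible (X ^ 4 + C (2 * a - 12 * c) * X ^ 2 + C ((a + 2 * c) ^ 2) : ℚ[X]) ↔
      (¬ ∃ r : ℚ, c = r ^ 2) ∧ ¬ ∃ r : ℚ, 2 * c ^ 2 - a * c = r ^ 2) ∧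
    (Irreducible (X ^ 4 - C (4 * a) * X ^ 2 + C (16 * c ^ 2) : ℚ[X]) ↔
      (¬ ∃ r : ℚ, a - 2 * c = r ^ 2) ∧ ¬ ∃ r : ℚ, a + 2 * c = r ^ 2) := by
  obtain ⟨hc0, hB, hC, hD⟩ := octic_facts a c hf
  refine ⟨?_, ?_, ?_⟩
  · -- Part 1
    have key : ¬ Irreducible (X ^ 4 + C (2*a + 12*c) * X ^ 2 + C ((a - 2*c) ^ 2) : ℚ[X]) ↔
        ∃ r : ℚ, 2 * c ^ 2 + a * c = r ^ 2 := by
      rw [quartic_key (2*a + 12*c) ((a - 2*c)^2)]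
      constructor
      · rintro (⟨t, ht⟩ | ⟨s, m, hs, hm⟩)
        · exact ⟨t/8, by linear_combination ht/64⟩
        · have hprod : (s - (a - 2*c)) * (s + (a - 2*c)) = 0 := by linear_combination hs
          rcases mul_eq_zero.mp hprod with h' | h'
          · have hs' : s = a - 2*c := by linarith
            rw [hs'] at hm
            have hcneg : c = -((m/4)^2) := by linear_combination hm/16
            have : c = 0 := le_antisymm (by nlinarith) hc
            exact ⟨0, by rw [this]; ring⟩
          · have hs' : s = -(a - 2*c) := by linarith
            rw [hs'] at hm
            exact absurd (by linear_combination -hm/4 : -(2*c) - a = (m/2)^2) (hD (m/2))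
      · rintro ⟨r, hr⟩
        exact Or.inl ⟨8*r, by linear_combination 64*hr⟩
    exact iff_not_comm.mp key.symm
  · -- Part 2
    have key : ¬ Irreducible (X ^ 4 + C (2*a - 12*c) * X ^ 2 + C ((a + 2*c) ^ 2) : ℚ[X]) ↔
        ((∃ r : ℚ, c = r ^ 2) ∨ ∃ r : ℚ, 2 * c ^ 2 - a * c = r ^ 2) := by
      rw [quartic_key (2*a - 12*c) ((a + 2*c)^2)]
      constructor
      · rintro (⟨t, ht⟩ | ⟨s, m, hs, hm⟩)
        · exact Or.inr ⟨t/8, by linear_combination ht/64⟩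
        · have hprod : (s - (a + 2*c)) * (s + (a + 2*c)) = 0 := by linear_combination hs
          rcases mul_eq_zero.mp hprod with h' | h'
          · have hs' : s = a + 2*c := by linarith
            rw [hs'] at hm
            exact Or.inl ⟨m/4, by linear_combination -hm/16⟩
          · have hs' : s = -(a + 2*c) := by linarith
            rw [hs'] at hm
            exact absurd (by linear_combination -hm/4 : 2*c - a = (m/2)^2) (hC (m/2))
      · rintro (⟨r, hr⟩ | ⟨r, hr⟩)
        · exact Or.inr ⟨a + 2*c, 4*r, by ring, by linear_combination -16*hr⟩
        · exact Or.inl ⟨8*r, by linear_combination 64*hr⟩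
    exact (iff_not_comm.mp key.symm).trans not_or
  · -- Part 3
    have hrw : (X ^ 4 - C (4*a) * X ^ 2 + C (16*c^2) : ℚ[X]) =
        X ^ 4 + C (-(4*a)) * X ^ 2 + C (16*c^2) := by rw [map_neg]; ring
    rw [hrw]
    have key : ¬ Irreducible (X ^ 4 + C (-(4*a)) * X ^ 2 + C (16*c^2) : ℚ[X]) ↔
        ((∃ r : ℚ, a - 2*c = r ^ 2) ∨ ∃ r : ℚ, a + 2*c = r ^ 2) := by
      rw [quartic_key (-(4*a)) (16*c^2)]
      constructor
      · rintro (⟨t, ht⟩ | ⟨s, m, hs, hm⟩)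
        · exact absurd (by linear_combination ht/16 : a^2 - 4*c^2 = (t/4)^2) (hB (t/4))
        · have hprod : (s - 4*c) * (s + 4*c) = 0 := by linear_combination hs
          rcases mul_eq_zero.mp hprod with h' | h'
          · have hs' : s = 4*c := by linarith
            rw [hs'] at hm
            exact Or.inr ⟨m/2, by linear_combination -hm/4⟩
          · have hs' : s = -(4*c) := by linarith
            rw [hs'] at hm
            exact Or.inl ⟨m/2, by linear_combination -hm/4⟩
      · rintro (⟨r, hr⟩ | ⟨r, hr⟩)
        · exact Or.inr ⟨-(4*c), 2*r, by ring, by linear_combination -4*hr⟩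
        · exact Or.inr ⟨4*c, 2*r, by ring, by linear_combination -4*hr⟩
    exact (iff_not_comm.mp key.symm).trans not_or
end

section
/- Let a, c ∈ ℚ with c ≥ 0, set b = c², and suppose f(x) = x⁸ + a·x⁴ + b is irreducible over ℚ. Define R₁(x) = x⁴ + (2a + 12c)·x² + (a − 2c)², R₂(x) = x⁴ + (2a − 12c)·x² + (a + 2c)², and R₃(x) = x⁴ − 4a·x² + 16b. Then for each i ∈ {1, 2, 3}, the octic polynomial Rᵢ(x²) is irreducible over ℚ if and only if the quartic polynomial Rᵢ(x) is irreducible over ℚ. -/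
open Polynomial


lemma nonunit_pos_deg {A : ℚ[X]} (h0 : A ≠ 0) (hu : ¬IsUnit A) : 0 < A.natDegree := by
  rcases Nat.eq_zero_or_pos A.natDegree with h | h
  · exact absurd (isUnit_iff_degree_eq_zero.mpr (by rw [degree_eq_natDegree h0, h]; rfl)) hu
  · exact h

lemma deg_factor_eq {R E : ℚ[X]} (hR : Irreducible R) (hd : E ∣ R) (he : ¬IsUnit E) :
    E.natDegree = R.natDegree := by
  obtain ⟨g, hg⟩ := hd
  rcases hR.isUnit_or_isUnit hg with h | h
  · exact absurd h he
  · have hR0 : R ≠ 0 := hR.ne_zero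
    have hE0 : E ≠ 0 := by rintro rfl; simp at hg; exact hR0 hg
    have hg0 : g ≠ 0 := by rintro rfl; simp at hg; exact hR0 hg
    have : g.natDegree = 0 := natDegree_eq_zero_of_isUnit h
    rw [hg, natDegree_mul hE0 hg0, this, add_zero]

lemma dvd_of_comp_sq_dvd {E R : ℚ[X]} (h : E.comp (X ^ 2) ∣ R.comp (X ^ 2)) : E ∣ R := by
  rcases eq_or_ne E 0 with rfl | hE
  · rw [zero_comp, zero_dvd_iff, comp_eq_zero_iff] at h
    rcases h with h | ⟨_, h⟩
    · simp [h]
    · exfalso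
      have := congrArg natDegree h
      simp [natDegree_X_pow] at this
  · set l := E.leadingCoeff with hl
    have hl0 : l ≠ 0 := leadingCoeff_ne_zero.mpr hE
    set E' := E * C l⁻¹ with hE'
    have hmon : E'.Monic := monic_mul_leadingCoeff_inv hE
    have hdvd' : E'.comp (X ^ 2) ∣ R.comp (X ^ 2) := by
      rw [hE', mul_comp, C_comp]
      exact ((isUnit_C.mpr (isUnit_iff_ne_zero.mpr (inv_ne_zero hl0))).mul_right_dvd).mpr h
    -- division
    have hdm := modByMonic_add_div R E'
    set r := R %ₘ E' with hr
    set q := R /ₘ E' with hq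
    have hcomp : R.comp (X ^ 2) = E'.comp (X ^ 2) * q.comp (X ^ 2) + r.comp (X ^ 2) := by
      conv_lhs => rw [← hdm]
      rw [add_comp, mul_comp]; ring
    have hdr : E'.comp (X ^ 2) ∣ r.comp (X ^ 2) := by
      have : r.comp (X ^ 2) = R.comp (X ^ 2) - E'.comp (X ^ 2) * q.comp (X ^ 2) := by
        rw [hcomp]; ring
      rw [this]
      exact dvd_sub hdvd' (Dvd.intro _ rfl)
    have hr0 : r = 0 := by
      by_contra hr0
      have hdeglt : r.natDegree < E'.natDegree :=
        natDegree_lt_natDegree hr0 (degree_modByMonic_lt R hmon)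
      have h1 : (r.comp (X ^ 2)).natDegree < (E'.comp (X ^ 2)).natDegree := by
        rw [natDegree_comp, natDegree_comp, natDegree_X_pow]
        omega
      have hrc0 : r.comp (X ^ 2) ≠ 0 := by
        rw [Ne, comp_eq_zero_iff]
        push_neg
        refine ⟨hr0, fun _ h => ?_⟩
        have := congrArg natDegree h
        simp [natDegree_X_pow] at this
      have hEc0 : E'.comp (X ^ 2) ≠ 0 := fun h => by rw [h] at h1; simp at h1
      have hdlt : (r.comp (X ^ 2)).degree < (E'.comp (X ^ 2)).degree := by
        rwa [degree_eq_natDegree hrc0, degree_eq_natDegree hEc0, Nat.cast_lt]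
      exact hrc0 (eq_zero_of_dvd_of_degree_lt hdr hdlt)
    have : E' ∣ R := ⟨q, by rw [← hdm, hr0, zero_add]⟩
    have hEE' : E ∣ E' := Dvd.intro _ rfl
    exact hEE'.trans this
open Polynomial

lemma deg_R4 (P Q : ℚ) : (X ^ 4 + C P * X ^ 2 + C Q : ℚ[X]).natDegree = 4 := by
  compute_degree!

lemma deg_R8 (P Q : ℚ) : (X ^ 8 + C P * X ^ 4 + C Q : ℚ[X]).natDegree = 8 := by
  compute_degree!

lemma monic_R8 (P Q : ℚ) : (X ^ 8 + C P * X ^ 4 + C Q : ℚ[X]).Monic := by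
  unfold Monic leadingCoeff
  rw [deg_R8]
  simp [coeff_X_pow, coeff_C]

lemma comp_R4 (P Q : ℚ) :
    (X ^ 8 + C P * X ^ 4 + C Q : ℚ[X]) = (X ^ 4 + C P * X ^ 2 + C Q).comp (X ^ 2) := by
  simp only [add_comp, mul_comp, C_comp, pow_comp, X_comp]
  ring

lemma red_decomp {p : ℚ[X]} (h0 : p ≠ 0) (hd : 0 < p.natDegree) (h : ¬Irreducible p) :
    ∃ A B : ℚ[X], p = A * B ∧ 0 < A.natDegree ∧ 0 < B.natDegree := by
  have hu : ¬IsUnit p := not_isUnit_of_natDegree_pos p hd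
  rw [irreducible_iff] at h
  push_neg at h
  obtain ⟨A, B, hp, hA, hB⟩ := h hu
  have hA0 : A ≠ 0 := by rintro rfl; simp at hp; exact h0 hp
  have hB0 : B ≠ 0 := by rintro rfl; simp at hp; exact h0 hp
  have h1 : 0 < A.natDegree := by
    rcases Nat.eq_zero_or_pos A.natDegree with h' | h'
    · exact absurd (isUnit_iff_degree_eq_zero.mpr (by rw [degree_eq_natDegree hA0, h']; rfl)) hA
    · exact h'
  have h2 : 0 < B.natDegree := by
    rcases Nat.eq_zero_or_pos B.natDegree with h' | h'
    · exact absurd (isUnit_iff_degree_eq_zero.mpr (by rw [degree_eq_natDegree hB0, h']; rfl)) hB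
    · exact h'
  exact ⟨A, B, hp, h1, h2⟩

lemma keyB (P Q : ℚ) (h8 : Irreducible (X ^ 8 + C P * X ^ 4 + C Q : ℚ[X])) :
    Irreducible (X ^ 4 + C P * X ^ 2 + C Q : ℚ[X]) := by
  by_contra h4
  obtain ⟨A, B, hp, hA, hB⟩ := red_decomp (p := X ^ 4 + C P * X ^ 2 + C Q)
    (fun h => by have := deg_R4 P Q; rw [h] at this; simp at this) (by rw [deg_R4]; norm_num) h4
  have h8eq : (X ^ 8 + C P * X ^ 4 + C Q : ℚ[X]) = A.comp (X ^ 2) * B.comp (X ^ 2) := by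
    rw [comp_R4, hp, mul_comp]
  rcases h8.isUnit_or_isUnit h8eq with h | h
  · exact not_isUnit_of_natDegree_pos _ (by rw [natDegree_comp, natDegree_X_pow]; omega) h
  · exact not_isUnit_of_natDegree_pos _ (by rw [natDegree_comp, natDegree_X_pow]; omega) h
lemma keyA (P Q : ℚ) (h4 : Irreducible (X ^ 4 + C P * X ^ 2 + C Q : ℚ[X]))
    (h8 : ¬Irreducible (X ^ 8 + C P * X ^ 4 + C Q : ℚ[X])) :
    ∃ u v s t : ℚ, v ^ 2 = Q ∧ s ^ 2 = 2 * u ∧ t ^ 2 = 2 * u * v ∧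
      P = u ^ 2 + 2 * v - 2 * s * t := by
  have d8 : (X ^ 8 + C P * X ^ 4 + C Q : ℚ[X]).natDegree = 8 := deg_R8 P Q
  have d4 : (X ^ 4 + C P * X ^ 2 + C Q : ℚ[X]).natDegree = 4 := deg_R4 P Q
  have hR80 : (X ^ 8 + C P * X ^ 4 + C Q : ℚ[X]) ≠ 0 := fun h => by rw [h] at d8; simp at d8
  obtain ⟨A0, B0, hfac, hA0d, hB0d⟩ := red_decomp hR80 (by omega) h8
  have hA00 : A0 ≠ 0 := fun h => by rw [h, zero_mul] at hfac; exact hR80 hfac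
  have hB00 : B0 ≠ 0 := fun h => by rw [h, mul_zero] at hfac; exact hR80 hfac
  have hsum : A0.natDegree + B0.natDegree = 8 := by
    rw [← natDegree_mul hA00 hB00, ← hfac, d8]
  obtain ⟨A1, hA1dvd, hA1d, hA1u⟩ : ∃ A1 : ℚ[X], A1 ∣ (X ^ 8 + C P * X ^ 4 + C Q : ℚ[X]) ∧
      A1.natDegree ≤ 4 ∧ ¬IsUnit A1 := by
    rcases le_or_gt A0.natDegree 4 with h | h
    · exact ⟨A0, ⟨B0, hfac⟩, h, not_isUnit_of_natDegree_pos _ hA0d⟩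
    · exact ⟨B0, ⟨A0, by rw [hfac, mul_comm]⟩, by omega, not_isUnit_of_natDegree_pos _ hB0d⟩
  obtain ⟨A, hAmon, hAirr, hAdvdA1⟩ := Polynomial.exists_monic_irreducible_factor A1 hA1u
  have hAdvd : A ∣ (X ^ 8 + C P * X ^ 4 + C Q : ℚ[X]) := hAdvdA1.trans hA1dvd
  have hA0 : A ≠ 0 := hAmon.ne_zero
  have hA1ne : A1 ≠ 0 := ne_zero_of_dvd_ne_zero hR80 hA1dvd
  have hAd4 : A.natDegree ≤ 4 := le_trans (natDegree_le_of_dvd hAdvdA1 hA1ne) hA1d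
  have hAdpos : 0 < A.natDegree := nonunit_pos_deg hA0 hAirr.not_isUnit
  have hR8even : (X ^ 8 + C P * X ^ 4 + C Q : ℚ[X]).comp (-X)
      = X ^ 8 + C P * X ^ 4 + C Q := by
    simp only [add_comp, mul_comp, C_comp, pow_comp, X_comp]
    ring
  set Ab : ℚ[X] := A.comp (-X) with hAb
  have hAbdvd : Ab ∣ (X ^ 8 + C P * X ^ 4 + C Q : ℚ[X]) := by
    obtain ⟨k, hk⟩ := hAdvd
    exact ⟨k.comp (-X), by rw [← hR8even, hk, mul_comp]⟩
  have hAbd : Ab.natDegree = A.natDegree := by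
    rw [hAb, natDegree_comp, natDegree_neg, natDegree_X, mul_one]
  have hAbb : Ab.comp (-X) = A := by
    rw [hAb, comp_assoc]
    simp
  have hAb0 : Ab ≠ 0 := fun h => by rw [h, zero_comp] at hAbb; exact hA0 hAbb.symm
  set c0 := A.coeff 0 with hc0
  set c1 := A.coeff 1 with hc1
  set c2 := A.coeff 2 with hc2
  set c3 := A.coeff 3 with hc3
  set c4 := A.coeff 4 with hc4
  have hrep : A = C c4 * X ^ 4 + C c3 * X ^ 3 + C c2 * X ^ 2 + C c1 * X + C c0 := by
    conv_lhs => rw [Polynomial.as_sum_range' A 5 (by omega)]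
    simp only [Finset.sum_range_succ, Finset.sum_range_zero, zero_add,
      ← C_mul_X_pow_eq_monomial, ← hc0, ← hc1, ← hc2, ← hc3, ← hc4]
    ring
  have hbrep : Ab = C c4 * X ^ 4 - C c3 * X ^ 3 + C c2 * X ^ 2 - C c1 * X + C c0 := by
    rw [hAb]
    conv_lhs => rw [hrep]
    simp only [add_comp, sub_comp, mul_comp, C_comp, pow_comp, X_comp]
    ring
  by_cases hdvd : A ∣ Ab
  · -- associated case
    obtain ⟨k, hk⟩ := hdvd
    have hk0 : k ≠ 0 := fun h => by rw [h, mul_zero] at hk; exact hAb0 hk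
    have hkd : k.natDegree = 0 := by
      have h := natDegree_mul hA0 hk0
      rw [← hk, hAbd] at h; omega
    obtain ⟨m, hm⟩ : ∃ m : ℚ, k = C m := ⟨k.coeff 0, Polynomial.eq_C_of_natDegree_eq_zero hkd⟩
    have h2 : A = A * C m * C m := by
      conv_lhs => rw [← hAbb]
      rw [hk, hm, mul_comp, C_comp, ← hAb, hk, hm]
    have hm2 : m * m = 1 := by
      have h3 : A * 1 = A * C (m * m) := by
        rw [mul_one]
        conv_lhs => rw [h2]
        rw [mul_assoc, ← C_mul]
      have h5 := mul_left_cancel₀ hA0 h3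
      rw [← C_1] at h5
      exact (C_inj.mp h5).symm
    rcases mul_self_eq_one_iff.mp hm2 with hm1 | hm1
    · -- Ab = A : even polynomial
      have heq : C c4 * X ^ 4 - C c3 * X ^ 3 + C c2 * X ^ 2 - C c1 * X + C c0
          = C c4 * X ^ 4 + C c3 * X ^ 3 + C c2 * X ^ 2 + C c1 * X + C c0 := by
        rw [← hbrep, ← hrep, hk, hm, hm1]; simp
      have hc3' : c3 = 0 := by
        have h := congrArg (fun p => coeff p 3) heq
        simp [coeff_add, coeff_sub, coeff_C_mul, coeff_X_pow, coeff_C, coeff_X] at h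
        linarith
      have hc1' : c1 = 0 := by
        have h := congrArg (fun p => coeff p 1) heq
        simp [coeff_add, coeff_sub, coeff_C_mul, coeff_X_pow, coeff_C, coeff_X] at h
        linarith
      have hlead : A.coeff A.natDegree = 1 := hAmon.coeff_natDegree
      interval_cases hd : A.natDegree
      · exfalso
        have : c1 = 1 := hc1.trans hlead
        rw [hc1'] at this; norm_num at this
      · -- natDegree = 2
        exfalso
        have hc4' : c4 = 0 := by rw [hc4]; exact coeff_eq_zero_of_natDegree_lt (by omega)
        have hc2' : c2 = 1 := hc2.trans hlead
        have hArep : A = (X + C c0).comp (X ^ 2) := by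
          rw [hrep, hc4', hc3', hc1', hc2']
          simp only [add_comp, mul_comp, C_comp, pow_comp, X_comp, map_zero, map_one]
          ring
        have hEdvd : (X + C c0 : ℚ[X]) ∣ (X ^ 4 + C P * X ^ 2 + C Q : ℚ[X]) := by
          apply dvd_of_comp_sq_dvd
          rw [← hArep, ← comp_R4]
          exact hAdvd
        have := deg_factor_eq h4 hEdvd (not_isUnit_of_natDegree_pos _ (by
          rw [natDegree_X_add_C]; norm_num))
        rw [natDegree_X_add_C, d4] at this
        norm_num at this
      · exfalso
        have : c3 = 1 := hc3.trans hlead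
        rw [hc3'] at this; norm_num at this
      · -- natDegree = 4
        exfalso
        have hc4' : c4 = 1 := hc4.trans hlead
        have hArep : A = (X ^ 2 + C c2 * X + C c0).comp (X ^ 2) := by
          rw [hrep, hc4', hc3', hc1']
          simp only [add_comp, mul_comp, C_comp, pow_comp, X_comp, map_zero, map_one]
          ring
        have hEdvd : (X ^ 2 + C c2 * X + C c0 : ℚ[X]) ∣ (X ^ 4 + C P * X ^ 2 + C Q : ℚ[X]) := by
          apply dvd_of_comp_sq_dvd
          rw [← hArep, ← comp_R4]
          exact hAdvd
        have hdE : (X ^ 2 + C c2 * X + C c0 : ℚ[X]).natDegree = 2 := by compute_degree!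
        have := deg_factor_eq h4 hEdvd (not_isUnit_of_natDegree_pos _ (by rw [hdE]; norm_num))
        rw [hdE, d4] at this
        norm_num at this
    · -- Ab = -A : odd
      exfalso
      have heq : Ab = -A := by rw [hk, hm, hm1]; simp
      have hc0' : c0 = 0 := by
        have h := congrArg (fun p => coeff p 0) heq
        rw [hbrep, hrep] at h
        simp [coeff_add, coeff_sub, coeff_neg, coeff_C_mul, coeff_X_pow, coeff_C, coeff_X] at h
        linarith
      have hQ0 : Q = 0 := by
        obtain ⟨k2, hk2⟩ := hAdvd
        have h := congrArg (fun p => eval 0 p) hk2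
        simp only [eval_add, eval_mul, eval_pow, eval_X, eval_C] at h
        have hA0eval : A.eval 0 = 0 := by
          rw [hrep]; simp [hc0']
        rw [hA0eval, zero_mul] at h
        norm_num at h
        exact h
      have hXdvd : (X : ℚ[X]) ∣ (X ^ 4 + C P * X ^ 2 + C Q : ℚ[X]) :=
        ⟨X ^ 3 + C P * X, by rw [hQ0, map_zero]; ring⟩
      have := deg_factor_eq h4 hXdvd not_isUnit_X
      rw [natDegree_X, d4] at this
      norm_num at this
  · -- coprime case
    have hcop : IsCoprime A Ab := hAirr.coprime_iff_not_dvd.mpr hdvd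
    have hmuldvd : A * Ab ∣ (X ^ 8 + C P * X ^ 4 + C Q : ℚ[X]) := hcop.mul_dvd hAdvd hAbdvd
    set E : ℚ[X] := C (c4 ^ 2) * X ^ 4 + C (2 * c2 * c4 - c3 ^ 2) * X ^ 3
        + C (c2 ^ 2 + 2 * c0 * c4 - 2 * c1 * c3) * X ^ 2
        + C (2 * c0 * c2 - c1 ^ 2) * X + C (c0 ^ 2) with hE
    have hEcomp : E.comp (X ^ 2) = A * Ab := by
      rw [hE, hrep, hbrep]
      simp only [add_comp, sub_comp, mul_comp, C_comp, pow_comp, X_comp]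
      simp only [map_sub, map_add, map_mul, map_pow, map_ofNat]
      ring
    have hEdvd : E ∣ (X ^ 4 + C P * X ^ 2 + C Q : ℚ[X]) := by
      apply dvd_of_comp_sq_dvd
      rw [hEcomp, ← comp_R4]
      exact hmuldvd
    have hEdeg2 : 2 * E.natDegree = 2 * A.natDegree := by
      have h1 : (E.comp (X ^ 2)).natDegree = 2 * E.natDegree := by
        rw [natDegree_comp, natDegree_X_pow]; ring
      have h2 : (A * Ab).natDegree = 2 * A.natDegree := by
        rw [natDegree_mul hA0 hAb0, hAbd]; ring
      rw [hEcomp, h2] at h1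
      omega
    have hEnu : ¬IsUnit E := not_isUnit_of_natDegree_pos _ (by omega)
    have hEd : E.natDegree = 4 := (deg_factor_eq h4 hEdvd hEnu).trans d4
    have hAd : A.natDegree = 4 := by omega
    have hc4' : c4 = 1 := by rw [hc4, ← hAd]; exact hAmon.coeff_natDegree
    obtain ⟨g, hg⟩ := hEdvd
    have hE0 : E ≠ 0 := fun h => by rw [h] at hEd; simp at hEd
    have hg0 : g ≠ 0 := fun h => by
      rw [h, mul_zero] at hg
      rw [hg] at d4; simp at d4
    have hgd : g.natDegree = 0 := by
      have h := natDegree_mul hE0 hg0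
      rw [← hg, d4, hEd] at h; omega
    obtain ⟨w, hw⟩ : ∃ w : ℚ, g = C w := ⟨g.coeff 0, Polynomial.eq_C_of_natDegree_eq_zero hgd⟩
    have hw1 : w = 1 := by
      have h := congrArg (fun p => coeff p 4) hg
      rw [hw, hE] at h
      simp only [coeff_add, coeff_mul_C, coeff_C_mul, coeff_X_pow, coeff_C, coeff_X] at h
      norm_num [hc4'] at h
      linarith
    have hER4 : (X ^ 4 + C P * X ^ 2 + C Q : ℚ[X]) = E := by
      rw [hg, hw, hw1, C_1, mul_one]
    rw [hE] at hER4
    refine ⟨c2, c0, c3, c1, ?_, ?_, ?_, ?_⟩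
    · have h := congrArg (fun p => coeff p 0) hER4
      simp only [coeff_add, coeff_C_mul, coeff_X_pow, coeff_C, coeff_X] at h
      norm_num at h
      linarith
    · have h := congrArg (fun p => coeff p 3) hER4
      simp only [coeff_add, coeff_C_mul, coeff_X_pow, coeff_C, coeff_X] at h
      norm_num at h
      rw [hc4'] at h
      linarith
    · have h := congrArg (fun p => coeff p 1) hER4
      simp only [coeff_add, coeff_C_mul, coeff_X_pow, coeff_C, coeff_X] at h
      norm_num at h
      linarith
    · have h := congrArg (fun p => coeff p 2) hER4
      simp only [coeff_add, coeff_C_mul, coeff_X_pow, coeff_C, coeff_X] at h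
      norm_num at h
      rw [hc4'] at h
      linarith
lemma deg_X4C (r : ℚ) : (X ^ 4 + C r : ℚ[X]).natDegree = 4 := by compute_degree!


theorem stmt4 (a c : ℚ) (hc : 0 ≤ c)
    (hf : Irreducible (X ^ 8 + C a * X ^ 4 + C (c ^ 2) : ℚ[X])) :
    (Irreducible (X ^ 8 + C (2 * a + 12 * c) * X ^ 4 + C ((a - 2 * c) ^ 2) : ℚ[X]) ↔
      Irreducible (X ^ 4 + C (2 * a + 12 * c) * X ^ 2 + C ((a - 2 * c) ^ 2) : ℚ[X])) ∧
    (Irreducible (X ^ 8 + C (2 * a - 12 * c) * X ^ 4 + C ((a + 2 * c) ^ 2) : ℚ[X]) ↔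
      Irreducible (X ^ 4 + C (2 * a - 12 * c) * X ^ 2 + C ((a + 2 * c) ^ 2) : ℚ[X])) ∧
    (Irreducible (X ^ 8 - C (4 * a) * X ^ 4 + C (16 * c ^ 2) : ℚ[X]) ↔
      Irreducible (X ^ 4 - C (4 * a) * X ^ 2 + C (16 * c ^ 2) : ℚ[X])) := by
  have hnu4 : ∀ e r : ℚ, ¬IsUnit (X ^ 4 + C e * X ^ 2 + C r : ℚ[X]) := fun e r =>
    not_isUnit_of_natDegree_pos _ (by rw [deg_R4]; norm_num)
  have hnuX4C : ∀ r : ℚ, ¬IsUnit (X ^ 4 + C r : ℚ[X]) := fun r =>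
    not_isUnit_of_natDegree_pos _ (by rw [deg_X4C]; norm_num)
  have hc0 : c ≠ 0 := by
    rintro rfl
    have hz : ((0 : ℚ) ^ 2 : ℚ) = 0 := by norm_num
    have hfac : (X ^ 8 + C a * X ^ 4 + C ((0 : ℚ) ^ 2) : ℚ[X]) = X ^ 4 * (X ^ 4 + C a) := by
      rw [hz, map_zero]; ring
    rcases hf.isUnit_or_isUnit hfac with h | h
    · exact not_isUnit_of_natDegree_pos _ (by rw [natDegree_X_pow]; norm_num) h
    · exact hnuX4C a h
  have h1 : ∀ e : ℚ, e ^ 2 ≠ 2 * c - a := by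
    intro e he
    have hfac : (X ^ 8 + C a * X ^ 4 + C (c ^ 2) : ℚ[X])
        = (X ^ 4 + C e * X ^ 2 + C c) * (X ^ 4 + C (-e) * X ^ 2 + C c) := by
      have ha : a = 2 * c - e ^ 2 := by linarith
      rw [ha]
      simp only [map_sub, map_add, map_mul, map_pow, map_ofNat, map_neg]
      ring
    rcases hf.isUnit_or_isUnit hfac with h | h
    · exact hnu4 e c h
    · exact hnu4 (-e) c h
  have h2 : ∀ e : ℚ, e ^ 2 ≠ -(2 * c) - a := by
    intro e he
    have hfac : (X ^ 8 + C a * X ^ 4 + C (c ^ 2) : ℚ[X])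
        = (X ^ 4 + C e * X ^ 2 + C (-c)) * (X ^ 4 + C (-e) * X ^ 2 + C (-c)) := by
      have ha : a = -(2 * c) - e ^ 2 := by linarith
      rw [ha]
      simp only [map_sub, map_add, map_mul, map_pow, map_ofNat, map_neg]
      ring
    rcases hf.isUnit_or_isUnit hfac with h | h
    · exact hnu4 e (-c) h
    · exact hnu4 (-e) (-c) h
  have h3 : ∀ e : ℚ, e ^ 2 ≠ a ^ 2 - 4 * c ^ 2 := by
    intro e he
    have hfac : (X ^ 8 + C a * X ^ 4 + C (c ^ 2) : ℚ[X])
        = (X ^ 4 + C ((a - e) / 2)) * (X ^ 4 + C ((a + e) / 2)) := by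
      have key : (X ^ 4 + C ((a - e) / 2)) * (X ^ 4 + C ((a + e) / 2))
          = X ^ 8 + C ((a - e) / 2 + (a + e) / 2) * X ^ 4 + C ((a - e) / 2 * ((a + e) / 2)) := by
        rw [C_add, C_mul]; ring
      rw [key, show (a - e) / 2 + (a + e) / 2 = a by ring,
        show (a - e) / 2 * ((a + e) / 2) = c ^ 2 by linear_combination (-1/4 : ℚ) * he]
    rcases hf.isUnit_or_isUnit hfac with h | h
    · exact hnuX4C _ h
    · exact hnuX4C _ h
  refine ⟨⟨fun h8 => keyB _ _ h8, fun h4 => ?_⟩, ⟨fun h8 => keyB _ _ h8, fun h4 => ?_⟩, ?_⟩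
  · -- R1 backward
    by_contra h8
    obtain ⟨u, v, s, t, hv, hs, ht, hP⟩ := keyA _ _ h4 h8
    have hv' : (v - (a - 2 * c)) * (v + (a - 2 * c)) = 0 := by linear_combination hv
    rcases mul_eq_zero.mp hv' with hve | hve
    · have hveq : v = a - 2 * c := by linarith
      by_cases hs0 : s = 0
      · have hu : u = 0 := by rw [hs0] at hs; norm_num at hs; linarith
        have ht0 : t = 0 := by rw [hu] at ht; simpa using ht
        refine hc0 ?_
        rw [hveq, hu, hs0, ht0] at hP
        norm_num at hP
        linarith
      · have hts : t ^ 2 = (a - 2 * c) * s ^ 2 := by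
          linear_combination ht + 2 * u * hveq - (a - 2 * c) * hs
        set e := t / s with hedef
        have he : e ^ 2 = a - 2 * c := by
          rw [hedef, div_pow, hts, mul_div_assoc, div_self (pow_ne_zero 2 hs0), mul_one]
        have hst : s * t = 2 * u * e := by
          rw [hedef]; field_simp; linear_combination t * hs
        have h2st : 2 * (s * t) = u ^ 2 - 16 * c := by linear_combination hP + 2 * hveq
        have h16 : 16 * c = u ^ 2 - 4 * e * u := by linear_combination h2st - 2 * hst
        exact h3 (e * (u - 2 * e) / 2) (by
          linear_combination ((u - 2 * e) ^ 2 / 4 + (a - 2 * c)) * he - ((a - 2 * c) / 4) * h16)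
    · have hveq : v = 2 * c - a := by linarith
      by_cases hs0 : s = 0
      · have hu : u = 0 := by rw [hs0] at hs; norm_num at hs; linarith
        have ht0 : t = 0 := by rw [hu] at ht; simpa using ht
        refine h2 0 ?_
        rw [hveq, hu, hs0, ht0] at hP
        norm_num at hP ⊢
        linarith
      · have hts : t ^ 2 = (2 * c - a) * s ^ 2 := by
          linear_combination ht + 2 * u * hveq - (2 * c - a) * hs
        refine h1 (t / s) ?_
        rw [div_pow, hts, mul_div_assoc, div_self (pow_ne_zero 2 hs0), mul_one]
  · -- R2 backward
    by_contra h8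
    obtain ⟨u, v, s, t, hv, hs, ht, hP⟩ := keyA _ _ h4 h8
    have hv' : (v - (a + 2 * c)) * (v + (a + 2 * c)) = 0 := by linear_combination hv
    rcases mul_eq_zero.mp hv' with hve | hve
    · have hveq : v = a + 2 * c := by linarith
      by_cases hs0 : s = 0
      · have hu : u = 0 := by rw [hs0] at hs; norm_num at hs; linarith
        have ht0 : t = 0 := by rw [hu] at ht; simpa using ht
        refine hc0 ?_
        rw [hveq, hu, hs0, ht0] at hP
        norm_num at hP
        linarith
      · have hts : t ^ 2 = (a + 2 * c) * s ^ 2 := by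
          linear_combination ht + 2 * u * hveq - (a + 2 * c) * hs
        set e := t / s with hedef
        have he : e ^ 2 = a + 2 * c := by
          rw [hedef, div_pow, hts, mul_div_assoc, div_self (pow_ne_zero 2 hs0), mul_one]
        have hst : s * t = 2 * u * e := by
          rw [hedef]; field_simp; linear_combination t * hs
        have h2st : 2 * (s * t) = u ^ 2 + 16 * c := by linear_combination hP + 2 * hveq
        have h16 : 16 * c = 4 * e * u - u ^ 2 := by linear_combination 2 * hst - h2st
        exact h3 (e * (u - 2 * e) / 2) (by
          linear_combination ((u - 2 * e) ^ 2 / 4 + (a + 2 * c)) * he + ((a + 2 * c) / 4) * h16)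
    · have hveq : v = -(2 * c) - a := by linarith
      by_cases hs0 : s = 0
      · have hu : u = 0 := by rw [hs0] at hs; norm_num at hs; linarith
        have ht0 : t = 0 := by rw [hu] at ht; simpa using ht
        refine h3 0 ?_
        rw [hveq, hu, hs0, ht0] at hP
        norm_num at hP ⊢
        nlinarith [hP]
      · have hts : t ^ 2 = (-(2 * c) - a) * s ^ 2 := by
          linear_combination ht + 2 * u * hveq - (-(2 * c) - a) * hs
        refine h2 (t / s) ?_
        rw [div_pow, hts, mul_div_assoc, div_self (pow_ne_zero 2 hs0), mul_one]
  · -- R3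
    have e8 : (X ^ 8 - C (4 * a) * X ^ 4 + C (16 * c ^ 2) : ℚ[X])
        = X ^ 8 + C (-(4 * a)) * X ^ 4 + C (16 * c ^ 2) := by rw [map_neg]; ring
    have e4 : (X ^ 4 - C (4 * a) * X ^ 2 + C (16 * c ^ 2) : ℚ[X])
        = X ^ 4 + C (-(4 * a)) * X ^ 2 + C (16 * c ^ 2) := by rw [map_neg]; ring
    rw [e8, e4]
    refine ⟨fun h8 => keyB _ _ h8, fun h4 => ?_⟩
    by_contra h8
    obtain ⟨u, v, s, t, hv, hs, ht, hP⟩ := keyA _ _ h4 h8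
    have hv' : (v - 4 * c) * (v + 4 * c) = 0 := by linear_combination hv
    rcases mul_eq_zero.mp hv' with hve | hve
    · have hveq : v = 4 * c := by linarith
      by_cases hs0 : s = 0
      · have hu : u = 0 := by rw [hs0] at hs; norm_num at hs; linarith
        have ht0 : t = 0 := by rw [hu] at ht; simpa using ht
        refine h2 0 ?_
        rw [hveq, hu, hs0, ht0] at hP
        norm_num at hP ⊢
        linarith
      · have hts : t ^ 2 = (4 * c) * s ^ 2 := by
          linear_combination ht + 2 * u * hveq - (4 * c) * hs
        set e := t / s with hedef
        have he : e ^ 2 = 4 * c := by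
          rw [hedef, div_pow, hts, mul_div_assoc, div_self (pow_ne_zero 2 hs0), mul_one]
        have hst : s * t = 2 * u * e := by
          rw [hedef]; field_simp; linear_combination t * hs
        have h2st : 2 * (s * t) = u ^ 2 + 8 * c + 4 * a := by linear_combination hP + 2 * hveq
        have h16 : 4 * e * u = u ^ 2 + 8 * c + 4 * a := by linear_combination h2st - 2 * hst
        exact h1 ((u - 2 * e) / 2) (by linear_combination he - h16 / 4)
    · have hveq : v = -(4 * c) := by linarith
      have hcpos : 0 < c := lt_of_le_of_ne hc (Ne.symm hc0)
      rw [hveq] at ht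
      have hu : u = 0 := by nlinarith [sq_nonneg t, sq_nonneg s, ht, hs, hcpos]
      have hs0 : s = 0 := by rw [hu] at hs; norm_num at hs; simpa using hs
      have ht0 : t = 0 := by rw [hu] at ht; simpa using ht
      refine h1 0 ?_
      rw [hveq, hu, hs0, ht0] at hP
      norm_num at hP ⊢
      linarith
end

section
/- Let a, c ∈ ℚ with c ≥ 0, set b = c², and suppose f(x) = x⁸ + a·x⁴ + b is irreducible over ℚ. Define R₁(x) = x⁴ + (2a + 12c)·x² + (a − 2c)², R₂(x) = x⁴ + (2a − 12c)·x² + (a + 2c)², and R₃(x) = x⁴ − 4a·x² + 16b. Then: (1) if 2b + ac = d² with d ∈ ℚ, d ≥ 0, then R₁(x²) = (x⁴ + a + 6c + 4d)·(x⁴ + a + 6c − 4d), and both quartic factors are irreducible over ℚ and distinct; (2a) if c = e² with e ∈ ℚ, e ≥ 0, then R₂(x²) = (x⁴ + 4e·x² + a + 2c)·(x⁴ − 4e·x² + a + 2c), and both quartic factors are irreducible over ℚ and distinct; (2b) if 2b − ac = d² with d ∈ ℚ, d ≥ 0, then R₂(x²) = (x⁴ + a − 6c + 4d)·(x⁴ +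 a − 6c − 4d), and both quartic factors are irreducible over ℚ and distinct; (3a) if a − 2c = e² with e ∈ ℚ, e ≥ 0, then R₃(x²) = (x⁴ + 2e·x² − 4c)·(x⁴ − 2e·x² − 4c), and both quartic factors are irreducible over ℚ and distinct; (3b) if a + 2c = e² with e ∈ ℚ, e ≥ 0, then R₃(x²) = (x⁴ + 2e·x² + 4c)·(x⁴ − 2e·x² + 4c), and both quartic factors are irreducible over ℚ and distinct. -/
open Polynomial

set_option maxHeartbeats 1000000


lemma notunit_of_deg4 (p : ℚ[X]) (h : p.natDegree = 4) : ¬ IsUnit p := by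
  intro hu; have := Polynomial.natDegree_eq_zero_of_isUnit hu; omega

lemma F1 (a c u : ℚ) (hu : u^2 = a^2 - 4*c^2) :
    ¬ Irreducible (X ^ 8 + C a * X ^ 4 + C (c ^ 2) : ℚ[X]) := by
  intro hf
  have hfac : (X ^ 8 + C a * X ^ 4 + C (c ^ 2) : ℚ[X]) =
      (X^4 + C ((a-u)/2)) * (X^4 + C ((a+u)/2)) := by
    have e1 : a = (a-u)/2 + (a+u)/2 := by ring
    have e2 : c^2 = ((a-u)/2) * ((a+u)/2) := by linear_combination (1/4) * hu
    rw [show (C a : ℚ[X]) = C ((a-u)/2) + C ((a+u)/2) by rw [← C_add, ← e1],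
        show (C (c^2) : ℚ[X]) = C ((a-u)/2) * C ((a+u)/2) by rw [← C_mul, ← e2]]
    ring
  rcases hf.2 hfac with h | h
  · exact notunit_of_deg4 _ (by compute_degree!) h
  · exact notunit_of_deg4 _ (by compute_degree!) h

lemma F2 (a c s : ℚ) (hs : s^2 = 2*c - a) :
    ¬ Irreducible (X ^ 8 + C a * X ^ 4 + C (c ^ 2) : ℚ[X]) := by
  intro hf
  have hfac : (X ^ 8 + C a * X ^ 4 + C (c ^ 2) : ℚ[X]) =
      (X^4 + C s * X^2 + C c) * (X^4 - C s * X^2 + C c) := by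
    have ha : a = 2*c - s^2 := by linarith
    rw [ha]
    simp only [C_sub, C_mul, C_add, C_pow, map_ofNat]
    ring
  rcases hf.2 hfac with h | h
  · exact notunit_of_deg4 _ (by compute_degree!) h
  · exact notunit_of_deg4 _ (by compute_degree!) h

lemma F3 (a c e t u : ℚ) (hc : c = e^2) (ht : a + 2*c = t^2) (hu : u^2 = 2*t + 4*e) :
    ¬ Irreducible (X ^ 8 + C a * X ^ 4 + C (c ^ 2) : ℚ[X]) := by
  intro hf
  set v : ℚ := u^2/2 with hvdef
  have ha : a = v^2 - 4*v*e + 2*e^2 := by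
    have hv2 : u^2 = 2*v := by rw [hvdef]; ring
    have htv : t = v - 2*e := by linarith
    linear_combination ht - 2*hc + (t + v - 2*e) * htv
  have hce : c^2 = e^4 := by rw [hc]; ring
  have hv : (C u : ℚ[X])^2 = 2 * C v := by
    rw [← C_pow, show u^2 = 2*v by rw [hvdef]; ring, C_mul, map_ofNat]
  have hfac : (X ^ 8 + C a * X ^ 4 + C (c ^ 2) : ℚ[X]) =
      (X^4 + C u * X^3 + C v * X^2 + C u * C e * X + C e^2) *
      (X^4 - C u * X^3 + C v * X^2 - C u * C e * X + C e^2) := by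
    rw [ha, hce]
    simp only [C_sub, C_add, C_mul, C_pow, map_ofNat]
    linear_combination (X^3 + C e * X : ℚ[X])^2 * hv
  rcases hf.2 hfac with h | h
  · exact notunit_of_deg4 _ (by compute_degree!) h
  · exact notunit_of_deg4 _ (by compute_degree!) h

lemma quad_eq (g : ℚ[X]) (h : g.natDegree ≤ 2) :
    g = C (g.coeff 2) * X^2 + C (g.coeff 1) * X + C (g.coeff 0) := by
  ext n
  match n with
  | 0 => simp
  | 1 => simp
  | 2 => simp
  | (n+3) =>
    rw [Polynomial.coeff_eq_zero_of_natDegree_lt (by omega)]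
    simp [Polynomial.coeff_X_pow]

lemma biquad (p q : ℚ)
    (h1 : ∀ s : ℚ, s^2 ≠ p^2 - 4*q)
    (h2 : ∀ β s : ℚ, β^2 = q → s^2 ≠ 2*β - p) :
    Irreducible (X^4 + C p * X^2 + C q : ℚ[X]) := by
  set g : ℚ[X] := X^4 + C p * X^2 + C q with hgdef
  have hdeg : g.natDegree = 4 := by rw [hgdef]; compute_degree!
  have hmon : g.Monic := by
    unfold Polynomial.Monic Polynomial.leadingCoeff
    rw [hdeg, hgdef]
    simp [coeff_X_pow]
  have hg0 : g ≠ 0 := hmon.ne_zero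
  have hroot : ∀ r : ℚ, g.eval r ≠ 0 := by
    intro r hr
    have hr' : r^4 + p*r^2 + q = 0 := by
      rw [hgdef] at hr; simpa using hr
    exact h1 (2*r^2 + p) (by linear_combination 4*hr')
  have hfac1 : ∀ h k : ℚ[X], g = h * k → h.natDegree = 1 → False := by
    intro h k hhk hd1
    have hne : h ≠ 0 := fun h0 => by simp [h0] at hd1
    have hc1 : h.coeff 1 ≠ 0 := by
      have := Polynomial.leadingCoeff_ne_zero.mpr hne
      rwa [Polynomial.leadingCoeff, hd1] at this
    set r : ℚ := -(h.coeff 0)/(h.coeff 1) with hrdef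
    have hev : h.eval r = 0 := by
      conv_lhs => rw [Polynomial.eq_X_add_C_of_natDegree_le_one (le_of_eq hd1)]
      simp only [eval_add, eval_mul, eval_C, eval_X, hrdef]
      field_simp
      ring
    exact hroot r (by rw [hhk, eval_mul, hev, zero_mul])
  rw [irreducible_iff]
  constructor
  · intro hu; have := Polynomial.natDegree_eq_zero_of_isUnit hu; omega
  intro g1 g2 heq
  by_contra hcon
  push_neg at hcon
  obtain ⟨hu1, hu2⟩ := hcon
  have hg1 : g1 ≠ 0 := fun h0 => by simp [h0] at heq; exact hg0 heq
  have hg2 : g2 ≠ 0 := fun h0 => by simp [h0] at heq; exact hg0 heq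
  have hdd : g1.natDegree + g2.natDegree = 4 := by
    rw [← Polynomial.natDegree_mul hg1 hg2, ← heq, hdeg]
  have hd1 : g1.natDegree ≠ 0 := by
    intro h0
    have := Polynomial.eq_C_of_natDegree_eq_zero h0
    exact hu1 (this ▸ isUnit_C.mpr (isUnit_iff_ne_zero.mpr (fun hz => hg1 (by rw [this, hz, map_zero]))))
  have hd2 : g2.natDegree ≠ 0 := by
    intro h0
    have := Polynomial.eq_C_of_natDegree_eq_zero h0
    exact hu2 (this ▸ isUnit_C.mpr (isUnit_iff_ne_zero.mpr (fun hz => hg2 (by rw [this, hz, map_zero]))))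
  -- case on degree of g1
  rcases (show g1.natDegree = 1 ∨ g1.natDegree = 2 ∨ g2.natDegree = 1 by omega) with h|h|h
  · exact hfac1 g1 g2 heq h
  swap
  · exact hfac1 g2 g1 (by rw [heq, mul_comm]) h
  -- 2-2 case
  have hdg2 : g2.natDegree = 2 := by omega
  set l := g1.leadingCoeff with hldef
  have hl : l ≠ 0 := Polynomial.leadingCoeff_ne_zero.mpr hg1
  set q1 : ℚ[X] := C l⁻¹ * g1 with hq1def
  set q2 : ℚ[X] := C l * g2 with hq2def
  have heq' : g = q1 * q2 := by
    rw [hq1def, hq2def, show C l⁻¹ * g1 * (C l * g2) = (C l⁻¹ * C l) * (g1 * g2) by ring,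
      ← C_mul, inv_mul_cancel₀ hl, C_1, one_mul, heq]
  have hq1m : q1.Monic := by
    unfold Polynomial.Monic
    rw [hq1def, Polynomial.leadingCoeff_mul, Polynomial.leadingCoeff_C, ← hldef,
      inv_mul_cancel₀ hl]
  have hll : l * g2.leadingCoeff = 1 := by
    have := hmon
    unfold Polynomial.Monic at this
    rw [heq, Polynomial.leadingCoeff_mul] at this
    exact this
  have hq2m : q2.Monic := by
    unfold Polynomial.Monic
    rw [hq2def, Polynomial.leadingCoeff_mul, Polynomial.leadingCoeff_C, hll]
  have hnd1 : q1.natDegree = 2 := by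
    rw [hq1def, Polynomial.natDegree_mul (by simpa using inv_ne_zero hl) hg1,
      Polynomial.natDegree_C, zero_add, h]
  have hnd2 : q2.natDegree = 2 := by
    rw [hq2def, Polynomial.natDegree_mul (by simpa using hl) hg2,
      Polynomial.natDegree_C, zero_add, hdg2]
  set α := q1.coeff 1 with hα
  set β := q1.coeff 0 with hβ
  set α' := q2.coeff 1 with hα'
  set β' := q2.coeff 0 with hβ'
  have hc2 : q1.coeff 2 = 1 := by
    have := hq1m.coeff_natDegree; rwa [hnd1] at this
  have hc2' : q2.coeff 2 = 1 := by
    have := hq2m.coeff_natDegree; rwa [hnd2] at this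
  have hq1e : q1 = X^2 + C α * X + C β := by
    conv_lhs => rw [quad_eq q1 (le_of_eq hnd1)]
    rw [hc2, C_1, one_mul]
  have hq2e : q2 = X^2 + C α' * X + C β' := by
    conv_lhs => rw [quad_eq q2 (le_of_eq hnd2)]
    rw [hc2', C_1, one_mul]
  have heqc : (X^4 + C p * X^2 + C q : ℚ[X]) =
      X^4 + C (α+α') * X^3 + C (β+β'+α*α') * X^2 + C (α*β'+α'*β) * X + C (β*β') := by
    rw [hgdef] at heq'
    rw [heq', hq1e, hq2e]
    simp only [C_add, C_mul]
    ring
  rw [Polynomial.ext_iff] at heqc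
  have E3 := heqc 3
  have E2 := heqc 2
  have E1 := heqc 1
  have E0 := heqc 0
  simp [coeff_X_pow, add_mul, mul_add, mul_assoc] at E3 E2 E1 E0
  have hαα : α' = -α := by linarith
  have hB : p = β + β' - α^2 := by linear_combination E2 + α*hαα
  have hsplit : α * (β' - β) = 0 := by linear_combination -E1 - β*hαα
  rcases mul_eq_zero.mp hsplit with hα0 | hββ
  · exact h1 (β - β')
      (by linear_combination 4*E0 - (p+β+β')*hB + ((p+β+β')*α)*hα0)
  · exact h2 β α (by linear_combination -E0 - β*hββ) (by linear_combination hB + hββ)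

theorem stmt5 (a c : ℚ) (hc : 0 ≤ c)
    (hf : Irreducible (X ^ 8 + C a * X ^ 4 + C (c ^ 2) : ℚ[X])) :
    (∀ d : ℚ, 0 ≤ d → 2 * c ^ 2 + a * c = d ^ 2 →
      (X ^ 8 + C (2 * a + 12 * c) * X ^ 4 + C ((a - 2 * c) ^ 2) : ℚ[X]) =
        (X ^ 4 + C (a + 6 * c + 4 * d)) * (X ^ 4 + C (a + 6 * c - 4 * d)) ∧
      Irreducible (X ^ 4 + C (a + 6 * c + 4 * d) : ℚ[X]) ∧
      Irreducible (X ^ 4 + C (a + 6 * c - 4 * d) : ℚ[X]) ∧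
      (X ^ 4 + C (a + 6 * c + 4 * d) : ℚ[X]) ≠ X ^ 4 + C (a + 6 * c - 4 * d)) ∧
    (∀ e : ℚ, 0 ≤ e → c = e ^ 2 →
      (X ^ 8 + C (2 * a - 12 * c) * X ^ 4 + C ((a + 2 * c) ^ 2) : ℚ[X]) =
        (X ^ 4 + C (4 * e) * X ^ 2 + C (a + 2 * c)) *
          (X ^ 4 - C (4 * e) * X ^ 2 + C (a + 2 * c)) ∧
      Irreducible (X ^ 4 + C (4 * e) * X ^ 2 + C (a + 2 * c) : ℚ[X]) ∧
      Irreducible (X ^ 4 - C (4 * e) * X ^ 2 + C (a + 2 * c) : ℚ[X]) ∧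
      (X ^ 4 + C (4 * e) * X ^ 2 + C (a + 2 * c) : ℚ[X]) ≠
        X ^ 4 - C (4 * e) * X ^ 2 + C (a + 2 * c)) ∧
    (∀ d : ℚ, 0 ≤ d → 2 * c ^ 2 - a * c = d ^ 2 →
      (X ^ 8 + C (2 * a - 12 * c) * X ^ 4 + C ((a + 2 * c) ^ 2) : ℚ[X]) =
        (X ^ 4 + C (a - 6 * c + 4 * d)) * (X ^ 4 + C (a - 6 * c - 4 * d)) ∧
      Irreducible (X ^ 4 + C (a - 6 * c + 4 * d) : ℚ[X]) ∧
      Irreducible (X ^ 4 + C (a - 6 * c - 4 * d) : ℚ[X]) ∧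
      (X ^ 4 + C (a - 6 * c + 4 * d) : ℚ[X]) ≠ X ^ 4 + C (a - 6 * c - 4 * d)) ∧
    (∀ e : ℚ, 0 ≤ e → a - 2 * c = e ^ 2 →
      (X ^ 8 - C (4 * a) * X ^ 4 + C (16 * c ^ 2) : ℚ[X]) =
        (X ^ 4 + C (2 * e) * X ^ 2 - C (4 * c)) *
          (X ^ 4 - C (2 * e) * X ^ 2 - C (4 * c)) ∧
      Irreducible (X ^ 4 + C (2 * e) * X ^ 2 - C (4 * c) : ℚ[X]) ∧
      Irreducible (X ^ 4 - C (2 * e) * X ^ 2 - C (4 * c) : ℚ[X]) ∧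
      (X ^ 4 + C (2 * e) * X ^ 2 - C (4 * c) : ℚ[X]) ≠
        X ^ 4 - C (2 * e) * X ^ 2 - C (4 * c)) ∧
    (∀ e : ℚ, 0 ≤ e → a + 2 * c = e ^ 2 →
      (X ^ 8 - C (4 * a) * X ^ 4 + C (16 * c ^ 2) : ℚ[X]) =
        (X ^ 4 + C (2 * e) * X ^ 2 + C (4 * c)) *
          (X ^ 4 - C (2 * e) * X ^ 2 + C (4 * c)) ∧
      Irreducible (X ^ 4 + C (2 * e) * X ^ 2 + C (4 * c) : ℚ[X]) ∧
      Irreducible (X ^ 4 - C (2 * e) * X ^ 2 + C (4 * c) : ℚ[X]) ∧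
      (X ^ 4 + C (2 * e) * X ^ 2 + C (4 * c) : ℚ[X]) ≠
        X ^ 4 - C (2 * e) * X ^ 2 + C (4 * c)) := by
  have hc0 : 0 < c := by
    rcases hc.lt_or_eq with h|h
    · exact h
    · exact absurd hf (F1 a c a (by rw [← h]; ring))
  have hns : ∀ u : ℚ, u^2 = a^2 - 4*c^2 → False := fun u hu => (F1 a c u hu) hf
  have hns2 : ∀ s : ℚ, s^2 = 2*c - a → False := fun s hs => (F2 a c s hs) hf
  have hW : ∀ e t u : ℚ, c = e^2 → a + 2*c = t^2 → u^2 = 2*t + 4*e → False :=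
    fun e t u h1 h2 h3 => (F3 a c e t u h1 h2 h3) hf
  -- key lemma for case 1 (h2-style)
  have key1b : ∀ d' β s : ℚ, 2*c^2 + a*c = d'^2 → β^2 = a+6*c+4*d' → s^2 = 2*β → False := by
    intro d' β s hd hβ hs
    have hck : c*(a+6*c+4*d') = (d'+2*c)^2 := by linear_combination hd
    have h1' : c*β^2 = (d'+2*c)^2 := by linear_combination c*hβ + hck
    by_cases hb0 : β = 0
    · have h4 : (d'+2*c)^2 = 0 := by rw [hb0] at h1'; linarith [h1']
      have h5 : d'+2*c = 0 := (pow_eq_zero_iff (by norm_num : (2:ℕ) ≠ 0)).mp h4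
      have ha : a = 2*c := mul_right_cancel₀ hc0.ne' (by linear_combination hd + (d' - 2*c)*h5)
      exact hns 0 (by rw [ha]; ring)
    · set e := (d'+2*c)/β with hedef
      have hce : c = e^2 := by rw [hedef]; field_simp; linear_combination h1'
      have he0 : e ≠ 0 := by intro h0; rw [h0] at hce; simp at hce; exact hc0.ne' hce
      have hbe : β*e = d'+2*c := by rw [hedef]; field_simp
      set t := d'/e with htdef
      have hte : t*e = d' := by rw [htdef]; field_simp
      have h6 : (a+2*c)*e^2 = t^2*e^2 := by
        rw [show t^2*e^2 = (t*e)^2 by ring, hte]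
        linear_combination -(a+2*c)*hce + hd
      have ht : a+2*c = t^2 := mul_right_cancel₀ (pow_ne_zero 2 he0) h6
      have hkey : e*s^2 = e*(2*t+4*e) := by linear_combination e*hs + 2*hbe - 2*hte + 4*hce
      exact hW e t s hce ht (mul_left_cancel₀ he0 hkey)
  -- key lemma for case 1 (h1-style)
  have key1a : ∀ d' s : ℚ, 2*c^2 + a*c = d'^2 → s^2 = 0^2 - 4*(a+6*c+4*d') → False := by
    intro d' s hd hs
    have hck : c*(a+6*c+4*d') = (d'+2*c)^2 := by linear_combination hd
    have key : s^2*c + 4*(d'+2*c)^2 = 0 := by linear_combination c*hs - 4*hck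
    have h4 : (d'+2*c)^2 = 0 := le_antisymm (by nlinarith [mul_nonneg (sq_nonneg s) hc0.le]) (sq_nonneg _)
    have h5 : d'+2*c = 0 := (pow_eq_zero_iff (by norm_num : (2:ℕ) ≠ 0)).mp h4
    have ha : a = 2*c := mul_right_cancel₀ hc0.ne' (by linear_combination hd + (d' - 2*c)*h5)
    exact hns 0 (by rw [ha]; ring)
  -- key lemmas for case 2b
  have key2a' : ∀ d' s : ℚ, 2*c^2 - a*c = d'^2 → s^2 = 0^2 - 4*(a-6*c+4*d') → False := by
    intro d' s hd hs
    have hck : c*(a-6*c+4*d') = -((d'-2*c)^2) := by linear_combination -hd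
    have key : s^2*c = 4*(d'-2*c)^2 := by linear_combination c*hs - 4*hck
    by_cases hs0 : s = 0
    · have h4 : (d'-2*c)^2 = 0 := by rw [hs0] at key; linarith [key]
      have h5 : d'-2*c = 0 := (pow_eq_zero_iff (by norm_num : (2:ℕ) ≠ 0)).mp h4
      have ha : a = -(2*c) := mul_right_cancel₀ hc0.ne' (by linear_combination -hd - (d'+2*c)*h5)
      exact hns 0 (by rw [ha]; ring)
    · set e := 2*(d'-2*c)/s with hedef
      have hce : c = e^2 := by rw [hedef]; field_simp; linear_combination key
      have he0 : e ≠ 0 := by intro h0; rw [h0] at hce; simp at hce; exact hc0.ne' hce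
      set t := d'/e with htdef
      have hte : t*e = d' := by rw [htdef]; field_simp
      have h6 : (2*c-a)*e^2 = t^2*e^2 := by
        rw [show t^2*e^2 = (t*e)^2 by ring, hte]
        linear_combination -(2*c-a)*hce + hd
      have ht : 2*c-a = t^2 := mul_right_cancel₀ (pow_ne_zero 2 he0) h6
      exact hns2 t ht.symm
  have key2b' : ∀ d' β s : ℚ, 2*c^2 - a*c = d'^2 → β^2 = a-6*c+4*d' → s^2 = 2*β → False := by
    intro d' β s hd hβ hs
    have hck : c*(a-6*c+4*d') = -((d'-2*c)^2) := by linear_combination -hd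
    have h1' : c*β^2 + (d'-2*c)^2 = 0 := by linear_combination c*hβ + hck
    have h4 : (d'-2*c)^2 = 0 := le_antisymm (by nlinarith [mul_nonneg (sq_nonneg β) hc0.le]) (sq_nonneg _)
    have h5 : d'-2*c = 0 := (pow_eq_zero_iff (by norm_num : (2:ℕ) ≠ 0)).mp h4
    have ha : a = -(2*c) := mul_right_cancel₀ hc0.ne' (by linear_combination -hd - (d'+2*c)*h5)
    exact hns 0 (by rw [ha]; ring)
  refine ⟨?_, ?_, ?_, ?_, ?_⟩
  · -- Case 1
    intro d hd0 hd
    refine ⟨?_, ?_, ?_, ?_⟩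
    · have e2 : (a-2*c)^2 = (a+6*c+4*d)*(a+6*c-4*d) := by linear_combination -16*hd
      rw [show (C (2*a+12*c) : ℚ[X]) = C (a+6*c+4*d) + C (a+6*c-4*d) by
            rw [← C_add]; congr 1; ring,
          show (C ((a-2*c)^2) : ℚ[X]) = C (a+6*c+4*d) * C (a+6*c-4*d) by rw [← C_mul, ← e2]]
      ring
    · rw [show (X^4 + C (a+6*c+4*d) : ℚ[X]) = X^4 + C 0 * X^2 + C (a+6*c+4*d) by simp]
      exact biquad 0 _ (fun s hs => key1a d s hd hs)
        (fun β s hβ hs => key1b d β s hd hβ (by linarith))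
    · rw [show (X^4 + C (a+6*c-4*d) : ℚ[X]) = X^4 + C 0 * X^2 + C (a+6*c-4*d) by simp]
      exact biquad 0 _
        (fun s hs => key1a (-d) s (by linear_combination hd) (by linear_combination hs))
        (fun β s hβ hs => key1b (-d) β s (by linear_combination hd) (by linear_combination hβ)
          (by linarith))
    · intro hEq
      have h0 := congrArg (fun p : ℚ[X] => p.coeff 0) hEq
      simp [coeff_X_pow] at h0
      have hd0' : d = 0 := by linarith
      rw [hd0'] at hd
      have ha : a = -(2*c) := mul_right_cancel₀ hc0.ne' (by linear_combination hd)
      exact hns 0 (by rw [ha]; ring)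
  · -- Case 2a
    intro e he0 he2
    refine ⟨?_, ?_, ?_, ?_⟩
    · rw [show (C (2*a-12*c) : ℚ[X]) = C (a+2*c) + C (a+2*c) - C (4*e) * C (4*e) by
            rw [← C_mul, ← C_add, ← C_sub]; congr 1; linear_combination -16*he2,
          show (C ((a+2*c)^2) : ℚ[X]) = C (a+2*c) * C (a+2*c) by rw [← C_mul]; congr 1; ring]
      ring
    · exact biquad (4*e) (a+2*c)
        (fun s hs => hns2 (s/2) (by linear_combination (1/4)*hs - 4*he2))
        (fun β s hβ hs => hW (-e) β s (by rw [neg_sq]; exact he2) hβ.symm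
          (by linear_combination hs))
    · rw [show (X^4 - C (4*e)*X^2 + C (a+2*c) : ℚ[X])
            = X^4 + C (-(4*e))*X^2 + C (a+2*c) by rw [map_neg]; ring]
      exact biquad (-(4*e)) (a+2*c)
        (fun s hs => hns2 (s/2) (by linear_combination (1/4)*hs - 4*he2))
        (fun β s hβ hs => hW e β s he2 hβ.symm (by linear_combination hs))
    · intro hEq
      have h2' := congrArg (fun p : ℚ[X] => p.coeff 2) hEq
      simp [coeff_X_pow, mul_assoc] at h2'
      have he0' : e = 0 := by linarith
      rw [he0'] at he2; simp at he2; exact hc0.ne' he2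
  · -- Case 2b
    intro d hd0 hd
    refine ⟨?_, ?_, ?_, ?_⟩
    · have e2 : (a+2*c)^2 = (a-6*c+4*d)*(a-6*c-4*d) := by linear_combination -16*hd
      rw [show (C (2*a-12*c) : ℚ[X]) = C (a-6*c+4*d) + C (a-6*c-4*d) by
            rw [← C_add]; congr 1; ring,
          show (C ((a+2*c)^2) : ℚ[X]) = C (a-6*c+4*d) * C (a-6*c-4*d) by rw [← C_mul, ← e2]]
      ring
    · rw [show (X^4 + C (a-6*c+4*d) : ℚ[X]) = X^4 + C 0 * X^2 + C (a-6*c+4*d) by simp]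
      exact biquad 0 _ (fun s hs => key2a' d s hd hs)
        (fun β s hβ hs => key2b' d β s hd hβ (by linarith))
    · rw [show (X^4 + C (a-6*c-4*d) : ℚ[X]) = X^4 + C 0 * X^2 + C (a-6*c-4*d) by simp]
      exact biquad 0 _
        (fun s hs => key2a' (-d) s (by linear_combination hd) (by linear_combination hs))
        (fun β s hβ hs => key2b' (-d) β s (by linear_combination hd) (by linear_combination hβ)
          (by linarith))
    · intro hEq
      have h0 := congrArg (fun p : ℚ[X] => p.coeff 0) hEq
      simp [coeff_X_pow] at h0
      have hd0' : d = 0 := by linarith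
      rw [hd0'] at hd
      have ha : a = 2*c := mul_right_cancel₀ hc0.ne' (by linear_combination -hd)
      exact hns 0 (by rw [ha]; ring)
  · -- Case 3a
    intro e he0 he2
    refine ⟨?_, ?_, ?_, ?_⟩
    · rw [show (C (4*a) : ℚ[X]) = C (2*e) * C (2*e) + C (4*c) + C (4*c) by
            rw [← C_mul, ← C_add, ← C_add]; congr 1; linear_combination 4*he2,
          show (C (16*c^2) : ℚ[X]) = C (4*c) * C (4*c) by rw [← C_mul]; congr 1; ring]
      ring
    · rw [show (X^4 + C (2*e)*X^2 - C (4*c) : ℚ[X])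
            = X^4 + C (2*e)*X^2 + C (-(4*c)) by rw [map_neg]; ring]
      exact biquad (2*e) (-(4*c))
        (fun s hs => hns (e*s/2) (by linear_combination (e^2/4)*hs - (e^2+a+2*c)*he2))
        (fun β s hβ hs => by nlinarith [hβ, sq_nonneg β, hc0])
    · rw [show (X^4 - C (2*e)*X^2 - C (4*c) : ℚ[X])
            = X^4 + C (-(2*e))*X^2 + C (-(4*c)) by rw [map_neg, map_neg]; ring]
      exact biquad (-(2*e)) (-(4*c))
        (fun s hs => hns (e*s/2) (by linear_combination (e^2/4)*hs - (e^2+a+2*c)*he2))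
        (fun β s hβ hs => by nlinarith [hβ, sq_nonneg β, hc0])
    · intro hEq
      have h2' := congrArg (fun p : ℚ[X] => p.coeff 2) hEq
      simp [coeff_X_pow, mul_assoc] at h2'
      have he0' : e = 0 := by linarith
      rw [he0'] at he2
      have he' : a - 2*c = 0 := by simpa using he2
      exact hns 0 (by linear_combination -(a+2*c)*he')
  · -- Case 3b
    intro e he0 he2
    refine ⟨?_, ?_, ?_, ?_⟩
    · rw [show (C (4*a) : ℚ[X]) = C (2*e) * C (2*e) - C (4*c) - C (4*c) by
            rw [← C_mul, ← C_sub, ← C_sub]; congr 1; linear_combination 4*he2,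
          show (C (16*c^2) : ℚ[X]) = C (4*c) * C (4*c) by rw [← C_mul]; congr 1; ring]
      ring
    · exact biquad (2*e) (4*c)
        (fun s hs => hns (e*s/2) (by linear_combination (e^2/4)*hs - (e^2-2*c+a)*he2))
        (fun β s hβ hs => hW (β/2) (-e) s (by linear_combination (-1/4 : ℚ)*hβ)
          (by rw [neg_sq]; exact he2) (by linear_combination hs))
    · rw [show (X^4 - C (2*e)*X^2 + C (4*c) : ℚ[X])
            = X^4 + C (-(2*e))*X^2 + C (4*c) by rw [map_neg]; ring]
      exact biquad (-(2*e)) (4*c)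
        (fun s hs => hns (e*s/2) (by linear_combination (e^2/4)*hs - (e^2-2*c+a)*he2))
        (fun β s hβ hs => hW (β/2) e s (by linear_combination (-1/4 : ℚ)*hβ) he2
          (by linear_combination hs))
    · intro hEq
      have h2' := congrArg (fun p : ℚ[X] => p.coeff 2) hEq
      simp [coeff_X_pow, mul_assoc] at h2'
      have he0' : e = 0 := by linarith
      rw [he0'] at he2
      have he' : a + 2*c = 0 := by simpa using he2
      exact hns 0 (by linear_combination -(a-2*c)*he')
end

section
/- Let a, b ∈ ℚ with b a square in ℚ, and suppose f(x) = x⁸ + a·x⁴ + b is irreducible over ℚ. Then the Galois group of f over ℚ is not isomorphic to the quaternion group of order 8. -/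
open Polynomial

theorem stmt7 (a b : ℚ) (hb : ∃ r : ℚ, b = r ^ 2)
    (hf : Irreducible (X ^ 8 + C a * X ^ 4 + C b : ℚ[X])) :
    IsEmpty ((X ^ 8 + C a * X ^ 4 + C b : ℚ[X]).Gal ≃* QuaternionGroup 2) := by
  constructor
  intro e
  set f : ℚ[X] := X ^ 8 + C a * X ^ 4 + C b with hfdef
  have hfne : f ≠ 0 := hf.ne_zero
  have hdeg : f.natDegree = 8 := by
    unfold f; compute_degree!
  have hdeg' : f.degree = 8 := by
    rw [degree_eq_natDegree hfne, hdeg]; rfl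
  set K := f.SplittingField with hK
  set A := algebraMap ℚ K with hA
  have hsp : (f.map A).Splits := SplittingField.splits f
  obtain ⟨α, hα⟩ := hsp.exists_eval_eq_zero (by rw [degree_map, hdeg']; exact (by norm_num))
  have hαeq : α ^ 8 + A a * α ^ 4 + A b = 0 := by
    have := hα
    simp only [hfdef, eval_map, eval₂_add, eval₂_mul, eval₂_pow, eval₂_X, eval₂_C] at this
    exact this
  have hb0 : b ≠ 0 := by
    intro h
    have : f = X ^ 4 * (X ^ 4 + C a) := by
      rw [hfdef, h]; ring_nf; simp
    rcases hf.isUnit_or_isUnit this with h1 | h1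
    · exact (by simpa using (Polynomial.natDegree_eq_zero_of_isUnit h1))
    · have := Polynomial.natDegree_eq_zero_of_isUnit h1
      rw [natDegree_X_pow_add_C] at this; norm_num at this
  have hα0 : α ≠ 0 := by
    intro h
    rw [h] at hαeq
    simp at hαeq
    exact hb0 (by exact_mod_cast (_root_.map_eq_zero A).mp (by simpa using hαeq))
  -- factorization of f over K
  have hb2 : (C (A b) : K[X]) = -(C (A a) * C α ^ 4 + C α ^ 8) := by
    have hb' : A b = -(A a * α ^ 4 + α ^ 8) := by linear_combination hαeq
    rw [hb']
    simp only [map_neg, map_add, map_mul, map_pow]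
  have key : f.map A = (X ^ 2 + C (α ^ 2)) *
      ((X ^ 2 - C (α ^ 2)) * (X ^ 4 + C (A a + α ^ 4))) := by
    show (X ^ 8 + C a * X ^ 4 + C b : ℚ[X]).map A = _
    simp only [Polynomial.map_add, Polynomial.map_mul, Polynomial.map_pow, map_X, map_C,
      map_add, map_pow]
    linear_combination hb2
  -- get ι with ι ^ 2 = -1
  have hsp2 : (X ^ 2 + C (α ^ 2) : K[X]).Splits := by
    apply Splits.of_dvd (g := f.map A) hsp
    · simpa using hfne
    · exact ⟨_, key⟩
  obtain ⟨γ, hγ⟩ := hsp2.exists_eval_eq_zero (by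
    rw [degree_X_pow_add_C (by norm_num : 0 < 2)]; norm_num)
  have hγeq : γ ^ 2 = -α ^ 2 := by
    simp only [eval_add, eval_pow, eval_X, eval_C] at hγ
    linear_combination hγ
  set ι : K := γ * α⁻¹ with hι
  have hι2 : ι ^ 2 = -1 := by
    rw [hι, mul_pow, hγeq]
    rw [inv_pow, neg_mul, mul_inv_cancel₀ (pow_ne_zero 2 hα0)]
  have hιne : ι ≠ -ι := by
    intro h
    have h2 : (2 : K) * ι = 0 := by linear_combination h
    have hι0 : ι = 0 := by
      rcases mul_eq_zero.mp h2 with h3 | h3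
      · exact absurd h3 two_ne_zero
      · exact h3
    rw [hι0] at hι2; norm_num at hι2
  -- every Galois element sends ι to ± ι, so every square fixes ι
  have hpm : ∀ σ : f.Gal, σ ι = ι ∨ σ ι = -ι := by
    intro σ
    have h1 : (σ ι) ^ 2 = ι ^ 2 := by
      rw [hι2, ← map_pow, hι2, map_neg, map_one]
    have h2 : (σ ι - ι) * (σ ι + ι) = 0 := by linear_combination h1
    rcases mul_eq_zero.mp h2 with h3 | h3
    · left; linear_combination h3
    · right; linear_combination h3
  have hsqfix : ∀ σ : f.Gal, σ (σ ι) = ι := by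
    intro σ
    rcases hpm σ with h | h
    · rw [h, h]
    · rw [h, map_neg, h, neg_neg]
  -- complex conjugation gives an element of order dividing 2 moving ι
  haveI : Fact ((f.map (algebraMap ℚ ℂ)).Splits) := ⟨IsAlgClosed.splits _⟩
  set cc : ℂ ≃ₐ[ℚ] ℂ := Complex.conjAe.restrictScalars ℚ with hcc
  set c : f.Gal := Polynomial.Gal.restrict f ℂ cc with hc
  have hcommut : ∀ x : K, algebraMap K ℂ (c x) = cc (algebraMap K ℂ x) := fun x =>
    haveI : Normal ℚ K := SplittingField.instNormal f; AlgEquiv.restrictNormal_commutes cc K x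
  have hcι : c ι = -ι := by
    have hw : (algebraMap K ℂ ι) ^ 2 = -1 := by
      rw [← map_pow, hι2, map_neg, map_one]
    have hw2 : (starRingEnd ℂ) (algebraMap K ℂ ι) = -(algebraMap K ℂ ι) := by
      have hz : (algebraMap K ℂ ι - Complex.I) * (algebraMap K ℂ ι + Complex.I) = 0 := by
        linear_combination hw - Complex.I_sq
      rcases mul_eq_zero.mp hz with h3 | h3
      · have h4 : algebraMap K ℂ ι = Complex.I := by linear_combination h3
        rw [h4, Complex.conj_I]
      · have h4 : algebraMap K ℂ ι = -Complex.I := by linear_combination h3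
        rw [h4]; simp
    apply (algebraMap K ℂ).injective
    rw [hcommut ι, map_neg]
    calc cc (algebraMap K ℂ ι) = (starRingEnd ℂ) (algebraMap K ℂ ι) := rfl
      _ = -(algebraMap K ℂ ι) := hw2
  have hcsq : c * c = 1 := by
    have h1 : cc * cc = 1 := by
      apply AlgEquiv.ext
      intro z
      have : cc (cc z) = z := Complex.conj_conj z
      simpa [AlgEquiv.mul_apply] using this
    rw [hc, ← map_mul, h1, map_one]
  -- transfer to the quaternion group: every square root there
  have hq : ∀ x : QuaternionGroup 2, x * x = 1 → ∃ y : QuaternionGroup 2, y * y = x := by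
    decide
  have hec : e c * e c = 1 := by rw [← map_mul, hcsq, map_one]
  obtain ⟨y, hy⟩ := hq (e c) hec
  have hσ : e.symm y * e.symm y = c := by
    rw [← map_mul, hy, MulEquiv.symm_apply_apply]
  have hfix : c ι = ι := by
    rw [← hσ]
    exact hsqfix (e.symm y)
  rw [hcι] at hfix
  exact hιne hfix.symm
end

section
/- Let a, b ∈ ℚ with b a square in ℚ, and suppose f(x) = x⁸ + a·x⁴ + b is irreducible over ℚ. Then the order of the Galois group of f over ℚ divides 32. -/
open Polynomial IntermediateField Module

lemma quadstep {F L : Type*} [Field F] [Field L] [Algebra F L] (x : L) (c : F)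
    (h : x ^ 2 = algebraMap F L c) : Module.finrank F F⟮x⟯ ∣ 2 := by
  have hint : IsIntegral F x := by
    refine ⟨X ^ 2 - C c, monic_X_pow_sub_C c (by norm_num), ?_⟩
    simp [eval₂, h]
  rw [IntermediateField.adjoin.finrank hint]
  have hdvd : minpoly F x ∣ X ^ 2 - C c := minpoly.dvd F x (by simp [map_sub, h])
  have h2 : (minpoly F x).natDegree ≤ 2 := by
    have := Polynomial.natDegree_le_of_dvd hdvd (by
      intro h0
      simpa [h0] using (monic_X_pow_sub_C c (two_ne_zero)).ne_zero)
    simpa [natDegree_X_pow_sub_C] using this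
  have h1 : 0 < (minpoly F x).natDegree := minpoly.natDegree_pos hint
  interval_cases h : (minpoly F x).natDegree <;> norm_num

theorem stmt8 (a b : ℚ) (hb : ∃ r : ℚ, b = r ^ 2)
    (hf : Irreducible (X ^ 8 + C a * X ^ 4 + C b : ℚ[X])) :
    Nat.card (X ^ 8 + C a * X ^ 4 + C b : ℚ[X]).Gal ∣ 32 := by
  classical
  obtain ⟨r, rfl⟩ := hb
  set f : ℚ[X] := X ^ 8 + C a * X ^ 4 + C (r ^ 2) with hfdef
  have hmon : f.Monic := by
    have h : f = X ^ 8 + (C a * X ^ 4 + C (r ^ 2)) := by ring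
    rw [h]
    apply monic_X_pow_add
    have : (C a * X ^ 4 + C (r ^ 2) : ℚ[X]).degree ≤ 4 := by compute_degree
    exact lt_of_le_of_lt this (by norm_num)
  have hdeg : f.natDegree = 8 := by rw [hfdef]; compute_degree!
  have hfz : f ≠ 0 := hmon.ne_zero
  set L := f.SplittingField with hL
  have hcard : Nat.card f.Gal = finrank ℚ L := by
    rw [Polynomial.Gal.card_of_separable hf.separable]
  rw [hcard]
  set φ : ℚ →+* L := algebraMap ℚ L with hφ
  set A : L := φ a with hA
  set Rr : L := φ r with hRr
  set Rb := (f.map φ).roots with hRb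
  have hmapf : f.map φ = X ^ 8 + C A * X ^ 4 + C Rr ^ 2 := by
    simp only [hfdef]
    simp only [Polynomial.map_add, Polynomial.map_mul, Polynomial.map_pow, map_C, map_X, map_pow]
    rfl
  have haevf : ∀ x : L, aeval x f = x ^ 8 + A * x ^ 4 + Rr ^ 2 := by
    intro x
    simp only [hfdef]
    simp only [map_add, map_mul, map_pow, aeval_X, aeval_C]
    rfl
  have hmem : ∀ η : L, η ∈ Rb ↔ η ^ 8 + A * η ^ 4 + Rr ^ 2 = 0 := by
    intro η
    rw [hRb, mem_roots ((Polynomial.map_ne_zero_iff φ.injective).mpr hfz), IsRoot.def, hmapf]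
    simp
  have hcardR : Multiset.card Rb = 8 := by
    have := (SplittingField.splits f).natDegree_eq_card_roots
    rw [natDegree_map, hdeg] at this
    rw [hRb]; exact this.symm
  have hnodup : Rb.Nodup := nodup_roots (Separable.map hf.separable)
  -- a root θ
  obtain ⟨θ, hθR⟩ : ∃ θ, θ ∈ Rb := Multiset.card_pos_iff_exists_mem.mp (by rw [hcardR]; norm_num)
  have hθ : θ ^ 8 + A * θ ^ 4 + Rr ^ 2 = 0 := (hmem θ).mp hθR
  -- θ ≠ 0
  have hθ0 : θ ≠ 0 := by
    intro h0
    have hr0 : Rr = 0 := by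
      have h2 : Rr ^ 2 = 0 := by rw [h0] at hθ; linear_combination hθ
      exact pow_eq_zero_iff (by norm_num) |>.mp h2
    have hrq : r = 0 := φ.injective (by rw [map_zero]; exact hr0)
    subst hrq
    have hfac : f = X ^ 4 * (X ^ 4 + C a) := by
      rw [hfdef, show ((0:ℚ)^2) = 0 by norm_num, map_zero, add_zero]; ring
    rcases hf.isUnit_or_isUnit hfac with h | h
    · have := natDegree_eq_zero_of_isUnit h
      simp [natDegree_X_pow] at this
    · have h1 := natDegree_eq_zero_of_isUnit h
      have h4 : ((X:ℚ[X]) ^ 4 + C a).natDegree = 4 := by compute_degree!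
      omega
  -- counting helper
  have hcount : ∀ q : L[X], q ≠ 0 → (∀ η ∈ Rb, q.IsRoot η) → 8 ≤ q.natDegree := by
    intro q hq hall
    have hsub : Rb.toFinset ⊆ q.roots.toFinset := by
      intro x hx
      rw [Multiset.mem_toFinset] at hx ⊢
      exact (mem_roots hq).mpr (hall x hx)
    have h8 : Rb.toFinset.card = 8 := by
      rw [Multiset.toFinset_card_of_nodup hnodup, hcardR]
    have hc1 := Finset.card_le_card hsub
    have hc2 := Multiset.toFinset_card_le q.roots
    have hc3 := Polynomial.card_roots' q
    omega
  -- existence of μ with μ^4 ≠ θ^4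
  obtain ⟨μ, hμR, hμ4⟩ : ∃ μ ∈ Rb, μ ^ 4 ≠ θ ^ 4 := by
    by_contra hcon
    push_neg at hcon
    have h8 := hcount (X ^ 4 - C (θ ^ 4)) (X_pow_sub_C_ne_zero (by norm_num) _)
      (fun η hη => by simp [IsRoot, sub_eq_zero, hcon η hη])
    rw [natDegree_X_pow_sub_C] at h8; omega
  have hμ : μ ^ 8 + A * μ ^ 4 + Rr ^ 2 = 0 := (hmem μ).mp hμR
  have hsum : θ ^ 4 + μ ^ 4 + A = 0 := by
    have hne : θ ^ 4 - μ ^ 4 ≠ 0 := sub_ne_zero.mpr (Ne.symm hμ4)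
    have hz : (θ ^ 4 - μ ^ 4) * (θ ^ 4 + μ ^ 4 + A) = 0 := by linear_combination hθ - hμ
    exact (mul_eq_zero.mp hz).resolve_left hne
  have hprod : θ ^ 4 * μ ^ 4 = Rr ^ 2 := by linear_combination θ ^ 4 * hsum - hθ
  -- dichotomy
  have hdich : ∀ η ∈ Rb, η ^ 4 = θ ^ 4 ∨ η ^ 4 = μ ^ 4 := by
    intro η hη
    have hη0 := (hmem η).mp hη
    have hz : (η ^ 4 - θ ^ 4) * (η ^ 4 - μ ^ 4) = 0 := by
      linear_combination hη0 + hprod - η ^ 4 * hsum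
    rcases mul_eq_zero.mp hz with h | h
    · exact Or.inl (sub_eq_zero.mp h)
    · exact Or.inr (sub_eq_zero.mp h)
  -- existence of ν
  obtain ⟨ν, hνR, hν2, hν4⟩ : ∃ ν ∈ Rb, ν ^ 2 ≠ θ ^ 2 ∧ ν ^ 4 ≠ μ ^ 4 := by
    by_contra hcon
    push_neg at hcon
    have h8 := hcount ((X ^ 2 - C (θ ^ 2)) * (X ^ 4 - C (μ ^ 4)))
      (mul_ne_zero (X_pow_sub_C_ne_zero (by norm_num) _) (X_pow_sub_C_ne_zero (by norm_num) _))
      (fun η hη => by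
        have hor : η ^ 2 = θ ^ 2 ∨ η ^ 4 = μ ^ 4 := by
          by_cases h : η ^ 2 = θ ^ 2
          · exact Or.inl h
          · exact Or.inr (hcon η hη h)
        simp only [IsRoot, eval_mul, eval_sub, eval_pow, eval_X, eval_C]
        rcases hor with h | h <;> simp [sub_eq_zero, h])
    rw [natDegree_mul (X_pow_sub_C_ne_zero (by norm_num) _) (X_pow_sub_C_ne_zero (by norm_num) _),
      natDegree_X_pow_sub_C, natDegree_X_pow_sub_C] at h8
    omega
  have hν4' : ν ^ 4 = θ ^ 4 := ((hdich ν hνR).resolve_right hν4)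
  have hννθ : ν ^ 2 = -θ ^ 2 := by
    have hz : (ν ^ 2 - θ ^ 2) * (ν ^ 2 + θ ^ 2) = 0 := by linear_combination hν4'
    rcases mul_eq_zero.mp hz with h | h
    · exact absurd (sub_eq_zero.mp h) hν2
    · exact eq_neg_of_add_eq_zero_left h
  have hμ2 : μ ^ 2 * θ ^ 2 = Rr ∨ μ ^ 2 * θ ^ 2 = -Rr := by
    have hz : (μ ^ 2 * θ ^ 2 - Rr) * (μ ^ 2 * θ ^ 2 + Rr) = 0 := by linear_combination hprod
    rcases mul_eq_zero.mp hz with h | h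
    · exact Or.inl (sub_eq_zero.mp h)
    · exact Or.inr (eq_neg_of_add_eq_zero_left h)
  -- the tower
  have hθint : IsIntegral ℚ θ := IsIntegral.of_finite ℚ θ
  have haev : aeval θ f = 0 := by rw [haevf]; exact hθ
  have hmin : minpoly ℚ θ = f := (minpoly.eq_of_irreducible_of_monic hf haev hmon).symm
  set F0 : IntermediateField ℚ L := ℚ⟮θ⟯ with hF0def
  have hF0 : finrank ℚ F0 = 8 := by rw [hF0def, adjoin.finrank hθint, hmin, hdeg]
  set F1 : IntermediateField F0 L := F0⟮ν⟯ with hF1def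
  have d1 : finrank F0 F1 ∣ 2 := quadstep ν (-(AdjoinSimple.gen ℚ θ) ^ 2) (by
    rw [map_neg, map_pow, AdjoinSimple.algebraMap_gen]; exact hννθ)
  have hθmem : θ ∈ F0 := mem_adjoin_simple_self ℚ θ
  have hRrmem : Rr ∈ F0 := F0.algebraMap_mem r
  set t0 : F0 := AdjoinSimple.gen ℚ θ with ht0def
  have ht0 : algebraMap F0 L t0 = θ := AdjoinSimple.algebraMap_gen ℚ θ
  obtain ⟨c0, hc0⟩ : ∃ c0 : F0, μ ^ 2 = algebraMap F0 L c0 := by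
    rcases hμ2 with h | h
    · refine ⟨⟨Rr, hRrmem⟩ / t0 ^ 2, ?_⟩
      rw [map_div₀, map_pow, ht0]
      have hh : algebraMap F0 L ⟨Rr, hRrmem⟩ = Rr := rfl
      rw [hh, eq_div_iff (pow_ne_zero 2 hθ0)]
      exact h
    · refine ⟨-⟨Rr, hRrmem⟩ / t0 ^ 2, ?_⟩
      rw [map_div₀, map_neg, map_pow, ht0]
      have hh : algebraMap F0 L ⟨Rr, hRrmem⟩ = Rr := rfl
      rw [hh, eq_div_iff (pow_ne_zero 2 hθ0)]
      exact h
  set F2 : IntermediateField F1 L := F1⟮μ⟯ with hF2def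
  have d2 : finrank F1 F2 ∣ 2 := quadstep μ (algebraMap F0 F1 c0) (by
    rw [← IsScalarTower.algebraMap_apply F0 F1 L]; exact hc0)
  -- memberships
  have hm01 : ∀ x : L, x ∈ F0 → x ∈ F1 := fun x hx => by
    have h := F1.algebraMap_mem (⟨x, hx⟩ : F0)
    exact h
  have hm12 : ∀ x : L, x ∈ F1 → x ∈ F2 := fun x hx => by
    have h := F2.algebraMap_mem (⟨x, hx⟩ : F1)
    exact h
  have hθF2 : θ ∈ F2 := hm12 _ (hm01 _ hθmem)
  have hνF2 : ν ∈ F2 := hm12 _ (mem_adjoin_simple_self F0 ν)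
  have hμF2 : μ ∈ F2 := mem_adjoin_simple_self F1 μ
  -- all roots in F2
  have hrootsF2 : ∀ η ∈ Rb, η ∈ F2 := by
    intro η hη
    rcases hdich η hη with h4 | h4
    · have hz : (η ^ 2 - θ ^ 2) * (η ^ 2 + θ ^ 2) = 0 := by linear_combination h4
      rcases mul_eq_zero.mp hz with h | h
      · have hz2 : (η - θ) * (η + θ) = 0 := by linear_combination h
        rcases mul_eq_zero.mp hz2 with h' | h'
        · rw [sub_eq_zero.mp h']; exact hθF2
        · rw [eq_neg_of_add_eq_zero_left h']; exact F2.neg_mem hθF2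
      · have hz2 : (η - ν) * (η + ν) = 0 := by linear_combination h - hννθ
        rcases mul_eq_zero.mp hz2 with h' | h'
        · rw [sub_eq_zero.mp h']; exact hνF2
        · rw [eq_neg_of_add_eq_zero_left h']; exact F2.neg_mem hνF2
    · have hz : (η ^ 2 - μ ^ 2) * (η ^ 2 + μ ^ 2) = 0 := by linear_combination h4
      rcases mul_eq_zero.mp hz with h | h
      · have hz2 : (η - μ) * (η + μ) = 0 := by linear_combination h
        rcases mul_eq_zero.mp hz2 with h' | h'
        · rw [sub_eq_zero.mp h']; exact hμF2
        · rw [eq_neg_of_add_eq_zero_left h']; exact F2.neg_mem hμF2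
      · have hw : (ν * μ * θ⁻¹) ^ 2 = -μ ^ 2 := by
          rw [mul_pow, mul_pow, hννθ, inv_pow, neg_mul, neg_mul, mul_right_comm,
            mul_inv_cancel₀ (pow_ne_zero 2 hθ0), one_mul]
        have hz2 : (η - ν * μ * θ⁻¹) * (η + ν * μ * θ⁻¹) = 0 := by linear_combination h - hw
        have hmem' : ν * μ * θ⁻¹ ∈ F2 := mul_mem (mul_mem hνF2 hμF2) (F2.inv_mem hθF2)
        rcases mul_eq_zero.mp hz2 with h' | h'
        · rw [sub_eq_zero.mp h']; exact hmem'
        · rw [eq_neg_of_add_eq_zero_left h']; exact F2.neg_mem hmem'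
  -- F2 = ⊤
  have hF2top : F2 = ⊤ := by
    have hST : ∀ q : ℚ, algebraMap ℚ L q ∈ F2.toSubfield := fun q =>
      hm12 _ (hm01 _ (F0.algebraMap_mem q))
    set S : IntermediateField ℚ L := Subfield.toIntermediateField F2.toSubfield hST with hSdef
    have hadj : IntermediateField.adjoin ℚ (f.rootSet L) = ⊤ := by
      have h1 := IntermediateField.algebra_adjoin_le_adjoin ℚ (f.rootSet L)
      rw [show Algebra.adjoin ℚ (f.rootSet L) = ⊤ from
        Polynomial.SplittingField.adjoin_rootSet (f := f)] at h1
      exact eq_top_iff.mpr fun x _ => h1 Algebra.mem_top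
    have hle : IntermediateField.adjoin ℚ (f.rootSet L) ≤ S := by
      apply IntermediateField.adjoin_le_iff.mpr
      intro x hx
      rw [Polynomial.mem_rootSet] at hx
      have hx' : x ∈ Rb := by
        rw [hmem]
        rw [haevf] at hx
        exact hx.2
      exact hrootsF2 x hx'
    rw [eq_top_iff]
    intro x _
    have hxS : x ∈ S := hle (hadj ▸ IntermediateField.mem_top)
    exact hxS
  rw [hF2top, IntermediateField.finrank_top'] at d2
  have e1 : finrank ℚ F0 * finrank F0 L = finrank ℚ L := Module.finrank_mul_finrank ℚ F0 L
  have e2 : finrank F0 F1 * finrank F1 L = finrank F0 L := Module.finrank_mul_finrank F0 F1 L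
  rw [← e1, hF0, ← e2]
  have h32 : (32 : ℕ) = 8 * (2 * 2) := by norm_num
  rw [h32]
  exact Nat.mul_dvd_mul_left 8 (Nat.mul_dvd_mul d1 d2)
end

section
/- Let a, c ∈ ℚ with c ≥ 0 and c not a square in ℚ, set b = c², and suppose f(x) = x⁸ + a·x⁴ + b is irreducible over ℚ. Let K = ℚ(θ) be the field obtained by adjoining a root θ of f to ℚ. Then for each r ∈ {−1, c, −c}, the image of r in K is a square in K if and only if at least one of r·(a² − 4b), r·(−a + 2c), or r·(−a − 2c) is a square in ℚ. -/
open Polynomial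

lemma aux_r0 (c r : ℚ) (hc0 : c ≠ 0) (h : (4:ℚ)*c*r^2 = 0) : r = 0 := by
  rcases mul_eq_zero.mp h with h' | h'
  · rcases mul_eq_zero.mp h' with h'' | h''
    · norm_num at h''
    · exact absurd h'' hc0
  · exact pow_eq_zero_iff two_ne_zero |>.mp h'

/-- Even case core. -/
lemma sq_core_even (a c r P Q S T : ℚ)
    (h1 : ¬ ∃ u : ℚ, a^2 - 4*c^2 = u^2)
    (hrs : ¬ ∃ u : ℚ, r = u^2)
    (hG1 : P^2 + (2*c-a)*Q^2 + (-2*c-a)*S^2 + (2*c-a)*((-2*c-a))*T^2 = r)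
    (hG2 : P*Q + (-2*c-a)*S*T = 0)
    (hG3 : P*S + (2*c-a)*Q*T = 0)
    (hG4 : P*T + Q*S = 0) :
    (∃ u : ℚ, r*(a^2-4*c^2) = u^2) ∨ (∃ u : ℚ, r*(-a+2*c) = u^2) ∨
      (∃ u : ℚ, r*(-a-2*c) = u^2) := by
  by_cases hP : P = 0
  · subst hP
    simp only [zero_mul, zero_add] at hG2 hG3 hG4
    by_cases hT : T = 0
    · subst hT
      by_cases hQ : Q = 0
      · subst hQ
        right; right
        exact ⟨(-a-2*c)*S, by linear_combination (a+2*c) * hG1⟩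
      · have hS : S = 0 := by
          rcases mul_eq_zero.mp hG4 with h | h
          · exact absurd h hQ
          · exact h
        subst hS
        right; left
        exact ⟨(-a+2*c)*Q, by linear_combination (a-2*c) * hG1⟩
    · have hS : S = 0 := by
        rcases mul_eq_zero.mp hG2 with h | h
        · rcases mul_eq_zero.mp h with h' | h'
          · exact absurd (by linear_combination (2*c-a)*h' : a^2-4*c^2 = (0:ℚ)^2) (fun hh => h1 ⟨0, hh⟩)
          · exact h'
        · exact absurd h hT
      have hQ : Q = 0 := by
        rcases mul_eq_zero.mp hG3 with h | h
        · rcases mul_eq_zero.mp h with h' | h'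
          · exact absurd (by linear_combination (-(a+2*c))*h' : a^2-4*c^2 = (0:ℚ)^2) (fun hh => h1 ⟨0, hh⟩)
          · exact h'
        · exact absurd h hT
      subst hS; subst hQ
      left
      exact ⟨(a^2-4*c^2)*T, by linear_combination (4*c^2-a^2)*hG1⟩
  · exfalso
    by_cases hS : S = 0
    · subst hS
      have hQ : Q = 0 := by
        simp only [mul_zero, zero_mul, add_zero] at hG2
        rcases mul_eq_zero.mp hG2 with h | h
        · exact absurd h hP
        · exact h
      subst hQ
      have hT : T = 0 := by
        simp only [mul_zero, zero_mul, add_zero] at hG4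
        rcases mul_eq_zero.mp hG4 with h | h
        · exact absurd h hP
        · exact h
      subst hT
      exact hrs ⟨P, by linear_combination -hG1⟩
    · have key : S * (P^2 - (a^2-4*c^2)*T^2) = 0 := by
        linear_combination P * hG3 - (2*c-a)*T*hG2
      have h2 : P^2 = (a^2-4*c^2)*T^2 := by
        rcases mul_eq_zero.mp key with h | h
        · exact absurd h hS
        · linarith [sub_eq_zero.mp h]
      have hT : T ≠ 0 := by
        intro h; subst h
        exact hP (pow_eq_zero_iff two_ne_zero |>.mp (by linear_combination h2))
      exact h1 ⟨P/T, by rw [div_pow, eq_div_iff (pow_ne_zero 2 hT)]; linear_combination -h2⟩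

/-- Odd case core. -/
lemma sq_core_odd (a c r P Q S T : ℚ) (hc0 : c ≠ 0) (hr0 : r ≠ 0)
    (hcns : ¬ ∃ u : ℚ, c = u^2) (hmcns : ¬ ∃ u : ℚ, -c = u^2)
    (hG1 : P^2 + (2*c-a)*Q^2 + (-2*c-a)*S^2 + (2*c-a)*((-2*c-a))*T^2 = 0)
    (hG4 : P*T + Q*S = 0)
    (hG2 : 4*c*(P*Q + (-2*c-a)*S*T) = r)
    (hG3 : 4*c*(P*S + (2*c-a)*Q*T) = -r) :
    (∃ u : ℚ, c*(2*c-a) = u^2) ∧ (∃ u : ℚ, (-c)*(-2*c-a) = u^2) := by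
  constructor
  · obtain ⟨X, hX⟩ : ∃ X : ℚ, X = P^2 + (2*c-a)*Q^2 - (-2*c-a)*S^2 - (2*c-a)*(-2*c-a)*T^2 :=
      ⟨_, rfl⟩
    obtain ⟨Y, hY⟩ : ∃ Y : ℚ, Y = 2*(P*Q - (-2*c-a)*S*T) := ⟨_, rfl⟩
    have hXY : X * Y = 0 := by
      rw [hX, hY]
      linear_combination (2*(P*Q + (-2*c-a)*S*T))*hG1 - ((-2*c-a)*(P*S + (2*c-a)*Q*T))*hG4*4
    have hX2 : 4*c^2*(X^2 + (2*c-a)*Y^2) = 4*c*r^2 := by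
      rw [hX, hY]
      linear_combination (4*c^2*(P^2 + (2*c-a)*Q^2 + (-2*c-a)*S^2 + (2*c-a)*((-2*c-a))*T^2))*hG1 +
        ((2*c-a)*(4*c*(P*Q + (-2*c-a)*S*T) + r))*hG2 -
        ((-2*c-a)*(4*c*(P*S + (2*c-a)*Q*T) - r))*hG3 -
        (16*c^2*(2*c-a)*(-2*c-a)*(P*T + Q*S))*hG4
    rcases mul_eq_zero.mp hXY with h | h
    · subst h
      have hY0 : Y ≠ 0 := by
        intro h'; subst h'
        exact hr0 (aux_r0 c r hc0 (by linear_combination -hX2))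
      have hkey : c*(2*c-a)*Y^2 = r^2 :=
        mul_left_cancel₀ (by positivity : (4:ℚ)*c^2 ≠ 0)
          (by linear_combination c*hX2)
      exact ⟨r/Y, by rw [div_pow, eq_div_iff (pow_ne_zero 2 hY0)]; linear_combination hkey⟩
    · subst h
      exfalso
      have hX0 : X ≠ 0 := by
        intro h'; subst h'
        exact hr0 (aux_r0 c r hc0 (by linear_combination -hX2))
      have hkey : c*X^2 = r^2 :=
        mul_left_cancel₀ (mul_ne_zero (by norm_num : (4:ℚ) ≠ 0) hc0)
          (by linear_combination hX2)
      exact hcns ⟨r/X, by rw [div_pow, eq_div_iff (pow_ne_zero 2 hX0)]; linear_combination hkey⟩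
  · obtain ⟨X, hX⟩ : ∃ X : ℚ, X = P^2 - (2*c-a)*Q^2 + (-2*c-a)*S^2 - (2*c-a)*(-2*c-a)*T^2 :=
      ⟨_, rfl⟩
    obtain ⟨Y, hY⟩ : ∃ Y : ℚ, Y = 2*(P*S - (2*c-a)*Q*T) := ⟨_, rfl⟩
    have hXY : X * Y = 0 := by
      rw [hX, hY]
      linear_combination (2*(P*S + (2*c-a)*Q*T))*hG1 - ((2*c-a)*(P*Q + (-2*c-a)*S*T))*hG4*4
    have hX2 : 4*c^2*(X^2 + (-2*c-a)*Y^2) = -(4*c*r^2) := by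
      rw [hX, hY]
      linear_combination (4*c^2*(P^2 + (2*c-a)*Q^2 + (-2*c-a)*S^2 + (2*c-a)*((-2*c-a))*T^2))*hG1 -
        ((2*c-a)*(4*c*(P*Q + (-2*c-a)*S*T) + r))*hG2 +
        ((-2*c-a)*(4*c*(P*S + (2*c-a)*Q*T) - r))*hG3 -
        (16*c^2*(2*c-a)*(-2*c-a)*(P*T + Q*S))*hG4
    rcases mul_eq_zero.mp hXY with h | h
    · subst h
      have hY0 : Y ≠ 0 := by
        intro h'; subst h'
        exact hr0 (aux_r0 c r hc0 (by linear_combination hX2))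
      have hkey : (-c)*(-2*c-a)*Y^2 = r^2 :=
        mul_left_cancel₀ (by positivity : (4:ℚ)*c^2 ≠ 0)
          (by linear_combination -c*hX2)
      exact ⟨r/Y, by rw [div_pow, eq_div_iff (pow_ne_zero 2 hY0)]; linear_combination hkey⟩
    · subst h
      exfalso
      have hX0 : X ≠ 0 := by
        intro h'; subst h'
        exact hr0 (aux_r0 c r hc0 (by linear_combination hX2))
      have hkey : (-c)*X^2 = r^2 :=
        mul_left_cancel₀ (mul_ne_zero (by norm_num : (4:ℚ) ≠ 0) hc0)
          (by linear_combination -hX2)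
      exact hmcns ⟨r/X, by rw [div_pow, eq_div_iff (pow_ne_zero 2 hX0)]; linear_combination hkey⟩

open Polynomial

lemma lin_indep8 (f : ℚ[X]) (hm : f.Monic) (hdeg : f.natDegree = 8) (z : ℕ → ℚ)
    (h : ∑ i ∈ Finset.range 8,
        algebraMap ℚ (AdjoinRoot f) (z i) * (AdjoinRoot.root f)^i = 0) :
    ∀ i < 8, z i = 0 := by
  have hP : (∑ i ∈ Finset.range 8, C (z i) * X^i : ℚ[X]) = 0 := by
    by_contra h0
    have hdvd : f ∣ ∑ i ∈ Finset.range 8, C (z i) * X^i := by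
      rw [← AdjoinRoot.mk_eq_zero]
      rw [map_sum]
      simpa only [map_mul, map_pow, AdjoinRoot.mk_C, AdjoinRoot.mk_X,
        ← AdjoinRoot.algebraMap_eq] using h
    have hle := Polynomial.natDegree_le_of_dvd hdvd h0
    have hlt : (∑ i ∈ Finset.range 8, C (z i) * X^i : ℚ[X]).natDegree ≤ 7 := by
      apply Polynomial.natDegree_sum_le_of_forall_le
      intro i hi
      refine le_trans (Polynomial.natDegree_C_mul_X_pow_le _ _) ?_
      simp only [Finset.mem_range] at hi
      omega
    omega
  intro i hi
  have := congrArg (fun p : ℚ[X] => p.coeff i) hP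
  simp only [Polynomial.finset_sum_coeff, Polynomial.coeff_C_mul, Polynomial.coeff_X_pow,
    Polynomial.coeff_zero, mul_ite, mul_one, mul_zero] at this
  rwa [Finset.sum_ite_eq (Finset.range 8) i z, if_pos (Finset.mem_range.mpr hi)] at this

lemma lin_indep8' (f : ℚ[X]) (hm : f.Monic) (hdeg : f.natDegree = 8)
    (z0 z1 z2 z3 z4 z5 z6 z7 : ℚ)
    (h : algebraMap ℚ (AdjoinRoot f) z0 + algebraMap ℚ (AdjoinRoot f) z1 * AdjoinRoot.root f
        + algebraMap ℚ (AdjoinRoot f) z2 * (AdjoinRoot.root f)^2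
        + algebraMap ℚ (AdjoinRoot f) z3 * (AdjoinRoot.root f)^3
        + algebraMap ℚ (AdjoinRoot f) z4 * (AdjoinRoot.root f)^4
        + algebraMap ℚ (AdjoinRoot f) z5 * (AdjoinRoot.root f)^5
        + algebraMap ℚ (AdjoinRoot f) z6 * (AdjoinRoot.root f)^6
        + algebraMap ℚ (AdjoinRoot f) z7 * (AdjoinRoot.root f)^7 = 0) :
    z0 = 0 ∧ z1 = 0 ∧ z2 = 0 ∧ z3 = 0 ∧ z4 = 0 ∧ z5 = 0 ∧ z6 = 0 ∧ z7 = 0 := by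
  set zf : ℕ → ℚ := fun i =>
    if i = 0 then z0 else if i = 1 then z1 else if i = 2 then z2 else if i = 3 then z3
    else if i = 4 then z4 else if i = 5 then z5 else if i = 6 then z6 else z7 with hzf
  have key := lin_indep8 f hm hdeg zf (by
    rw [show (8:ℕ) = 7 + 1 from rfl, Finset.sum_range_succ, Finset.sum_range_succ,
      Finset.sum_range_succ, Finset.sum_range_succ, Finset.sum_range_succ,
      Finset.sum_range_succ, Finset.sum_range_succ, Finset.sum_range_succ]
    norm_num [hzf, AdjoinRoot.algebraMap_eq]
    simp only [AdjoinRoot.algebraMap_eq] at h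
    linear_combination h)
  have e0 := key 0 (by norm_num); have e1 := key 1 (by norm_num)
  have e2 := key 2 (by norm_num); have e3 := key 3 (by norm_num)
  have e4 := key 4 (by norm_num); have e5 := key 5 (by norm_num)
  have e6 := key 6 (by norm_num); have e7 := key 7 (by norm_num)
  norm_num [hzf] at e0 e1 e2 e3 e4 e5 e6 e7
  exact ⟨e0, e1, e2, e3, e4, e5, e6, e7⟩

lemma exists_coords (f : ℚ[X]) (hm : f.Monic) (hdeg : f.natDegree = 8) (y : AdjoinRoot f) :
    ∃ v : ℕ → ℚ, y = ∑ i ∈ Finset.range 8,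
      algebraMap ℚ (AdjoinRoot f) (v i) * (AdjoinRoot.root f)^i := by
  obtain ⟨g, rfl⟩ := AdjoinRoot.mk_surjective y
  refine ⟨fun i => (g %ₘ f).coeff i, ?_⟩
  have h1 : AdjoinRoot.mk f g = AdjoinRoot.mk f (g %ₘ f) := by
    rw [AdjoinRoot.mk_eq_mk]
    exact ⟨g /ₘ f, by rw [Polynomial.modByMonic_eq_sub_mul_div g f]; ring⟩
  rw [h1, ← AdjoinRoot.aeval_eq]
  have hlt : (g %ₘ f).natDegree < 8 := by
    by_cases h0 : g %ₘ f = 0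
    · simp [h0]
    · have h2 := Polynomial.degree_modByMonic_lt g hm
      rw [Polynomial.degree_eq_natDegree h0, Polynomial.degree_eq_natDegree hm.ne_zero,
        hdeg] at h2
      exact_mod_cast h2
  rw [Polynomial.aeval_eq_sum_range' hlt]
  exact Finset.sum_congr rfl fun i _ => by rw [Algebra.smul_def]

open Polynomial

lemma deg4_not_unit (p : ℚ[X]) (hdeg : p.natDegree = 4) : ¬ IsUnit p := fun h => by
  have := Polynomial.natDegree_eq_zero_of_isUnit h
  omega

lemma nsq_d2 (a c u : ℚ) (hf : Irreducible (X^8 + C a*X^4 + C (c^2) : ℚ[X]))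
    (hu : -a + 2*c = u^2) : False := by
  have hCa : (C a : ℚ[X]) = 2 * C c - (C u)^2 := by
    rw [show a = 2*c - u^2 by linarith, map_sub, map_mul, map_pow, map_ofNat]
  have key : (X^8 + C a*X^4 + C (c^2) : ℚ[X])
      = (X^4 - C u*X^2 + C c) * (X^4 + C u*X^2 + C c) := by
    rw [hCa, map_pow]; ring
  rcases hf.isUnit_or_isUnit key with h | h
  · exact deg4_not_unit _ (by compute_degree!) h
  · exact deg4_not_unit _ (by compute_degree!) h

lemma nsq_d3 (a c u : ℚ) (hf : Irreducible (X^8 + C a*X^4 + C (c^2) : ℚ[X]))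
    (hu : -a - 2*c = u^2) : False := by
  have hCa : (C a : ℚ[X]) = -(2 * C c) - (C u)^2 := by
    rw [show a = -(2*c) - u^2 by linarith, map_sub, map_neg, map_mul, map_pow, map_ofNat]
  have key : (X^8 + C a*X^4 + C (c^2) : ℚ[X])
      = (X^4 - C u*X^2 - C c) * (X^4 + C u*X^2 - C c) := by
    rw [hCa, map_pow]; ring
  rcases hf.isUnit_or_isUnit key with h | h
  · exact deg4_not_unit _ (by compute_degree!) h
  · exact deg4_not_unit _ (by compute_degree!) h

lemma nsq_d1 (a c u : ℚ) (hf : Irreducible (X^8 + C a*X^4 + C (c^2) : ℚ[X]))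
    (hu : a^2 - 4*c^2 = u^2) : False := by
  have key : (X^8 + C a*X^4 + C (c^2) : ℚ[X])
      = (X^4 + C ((a-u)/2)) * (X^4 + C ((a+u)/2)) := by
    have h1 : (C (c^2) : ℚ[X]) = C ((a-u)/2) * C ((a+u)/2) := by
      rw [← map_mul]; exact congrArg C (by linear_combination -hu/4)
    have h2 : (C a : ℚ[X]) = C ((a-u)/2) + C ((a+u)/2) := by
      rw [← map_add]; exact congrArg C (by ring)
    rw [h1, h2]; ring
  rcases hf.isUnit_or_isUnit key with h | h
  · exact deg4_not_unit _ (by compute_degree!) h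
  · exact deg4_not_unit _ (by compute_degree!) h


lemma hard_dir (f : ℚ[X]) (hm : f.Monic) (hdeg : f.natDegree = 8)
    (a c r : ℚ)
    (hθ : (AdjoinRoot.root f)^8 + algebraMap ℚ (AdjoinRoot f) a * (AdjoinRoot.root f)^4 + (algebraMap ℚ (AdjoinRoot f) c)^2 = 0)
    (σ : AdjoinRoot f →ₐ[ℚ] AdjoinRoot f) (hσθ : σ (AdjoinRoot.root f) = -(AdjoinRoot.root f))
    (hc0 : c ≠ 0) (hr0 : r ≠ 0) (hr : r = -1 ∨ r = c ∨ r = -c)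
    (hrns : ¬ ∃ u : ℚ, r = u^2) (hcns : ¬ ∃ u : ℚ, c = u^2) (hmc : ¬ ∃ u : ℚ, -c = u^2)
    (hd1 : ¬ ∃ u : ℚ, a^2 - 4*c^2 = u^2)
    (hnzd : ∀ x y : AdjoinRoot f, x * y = 0 → x = 0 ∨ y = 0)
    (y : AdjoinRoot f) (hy2 : algebraMap ℚ (AdjoinRoot f) r = y^2) :
    (∃ s : ℚ, r * (a ^ 2 - 4 * c ^ 2) = s ^ 2) ∨ (∃ s : ℚ, r * (-a + 2 * c) = s ^ 2) ∨
      (∃ s : ℚ, r * (-a - 2 * c) = s ^ 2) := by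
  obtain ⟨v, hv⟩ := exists_coords f hm hdeg y
  have hy : y = algebraMap ℚ (AdjoinRoot f) (v 0) + algebraMap ℚ (AdjoinRoot f) (v 1) * (AdjoinRoot.root f)
      + algebraMap ℚ (AdjoinRoot f) (v 2) * (AdjoinRoot.root f)^2 + algebraMap ℚ (AdjoinRoot f) (v 3) * (AdjoinRoot.root f)^3
      + algebraMap ℚ (AdjoinRoot f) (v 4) * (AdjoinRoot.root f)^4 + algebraMap ℚ (AdjoinRoot f) (v 5) * (AdjoinRoot.root f)^5
      + algebraMap ℚ (AdjoinRoot f) (v 6) * (AdjoinRoot.root f)^6 + algebraMap ℚ (AdjoinRoot f) (v 7) * (AdjoinRoot.root f)^7 := by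
    rw [hv, show (8:ℕ) = 7+1 from rfl]
    rw [Finset.sum_range_succ, Finset.sum_range_succ, Finset.sum_range_succ,
      Finset.sum_range_succ, Finset.sum_range_succ, Finset.sum_range_succ,
      Finset.sum_range_succ, Finset.sum_range_succ, Finset.sum_range_zero]
    ring
  have hσy : σ y = algebraMap ℚ (AdjoinRoot f) (v 0) - algebraMap ℚ (AdjoinRoot f) (v 1) * (AdjoinRoot.root f)
      + algebraMap ℚ (AdjoinRoot f) (v 2) * (AdjoinRoot.root f)^2 - algebraMap ℚ (AdjoinRoot f) (v 3) * (AdjoinRoot.root f)^3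
      + algebraMap ℚ (AdjoinRoot f) (v 4) * (AdjoinRoot.root f)^4 - algebraMap ℚ (AdjoinRoot f) (v 5) * (AdjoinRoot.root f)^5
      + algebraMap ℚ (AdjoinRoot f) (v 6) * (AdjoinRoot.root f)^6 - algebraMap ℚ (AdjoinRoot f) (v 7) * (AdjoinRoot.root f)^7 := by
    rw [hy]
    simp only [map_add, map_mul, map_pow, hσθ, AlgHom.commutes]
    ring
  have hpar : σ y = y ∨ σ y = -y := by
    have h2 : (σ y)^2 = y^2 := by
      rw [← map_pow, ← hy2]
      exact σ.commutes r
    have h1 : (σ y - y) * (σ y + y) = 0 := by linear_combination h2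
    rcases hnzd _ _ h1 with h | h
    · exact Or.inl (sub_eq_zero.mp h)
    · exact Or.inr (eq_neg_of_add_eq_zero_left h)
  rcases hpar with hps | hps
  · -- even case
    obtain ⟨-, h1, -, h3, -, h5, -, h7⟩ := lin_indep8' f hm hdeg
      0 (2*(v 1)) 0 (2*(v 3)) 0 (2*(v 5)) 0 (2*(v 7)) (by
        simp only [map_zero, zero_mul, map_mul, map_ofNat, zero_add, add_zero]
        linear_combination hσy - hy - hps)
    have hv1 : v 1 = 0 := by linarith
    have hv3 : v 3 = 0 := by linarith
    have hv5 : v 5 = 0 := by linarith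
    have hv7 : v 7 = 0 := by linarith
    have hye : y = (algebraMap ℚ (AdjoinRoot f) (v 0) + algebraMap ℚ (AdjoinRoot f) (v 2) * (AdjoinRoot.root f)^2 + algebraMap ℚ (AdjoinRoot f) (v 4) * (AdjoinRoot.root f)^4 + algebraMap ℚ (AdjoinRoot f) (v 6) * (AdjoinRoot.root f)^6) := by
      rw [hy, hv1, hv3, hv5, hv7]
      simp only [map_zero, zero_mul, add_zero, zero_add]
    obtain ⟨hD0, -, hD2, -, hD4, -, hD6, -⟩ := lin_indep8' f hm hdeg
      ((v 0)^2 - c^2*(v 4)^2 - 2*c^2*(v 2)*(v 6) + a*c^2*(v 6)^2 - r) 0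
      (2*(v 0)*(v 2) - 2*c^2*(v 4)*(v 6)) 0
      ((v 2)^2 + 2*(v 0)*(v 4) - c^2*(v 6)^2 - a*(v 4)^2 - 2*a*(v 2)*(v 6) + a^2*(v 6)^2) 0
      (2*(v 2)*(v 4) + 2*(v 0)*(v 6) - 2*a*(v 4)*(v 6)) 0 (by
        simp only [map_zero, zero_mul, add_zero, zero_add, map_add, map_sub, map_mul,
          map_pow, map_ofNat]
        linear_combination (-1:AdjoinRoot f)*hy2 - (y + (algebraMap ℚ (AdjoinRoot f) (v 0) + algebraMap ℚ (AdjoinRoot f) (v 2) * (AdjoinRoot.root f)^2 + algebraMap ℚ (AdjoinRoot f) (v 4) * (AdjoinRoot.root f)^4 + algebraMap ℚ (AdjoinRoot f) (v 6) * (AdjoinRoot.root f)^6))*hye - ((algebraMap ℚ (AdjoinRoot f) (v 6))^2*(AdjoinRoot.root f)^4 + 2*(algebraMap ℚ (AdjoinRoot f) (v 4))*(algebraMap ℚ (AdjoinRoot f) (v 6))*(AdjoinRoot.root f)^2 + (algebraMap ℚ (AdjoinRoot f) (v 4))^2 + 2*(algebraMap ℚ (AdjoinRoot f) (v 2))*(algebraMap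 ℚ (AdjoinRoot f) (v 6)) - (algebraMap ℚ (AdjoinRoot f) a)*(algebraMap ℚ (AdjoinRoot f) (v 6))^2)*hθ)
    exact sq_core_even a c r (v 0 - a*(v 4)/2) ((v 2 - (a+c)*(v 6))/2)
      ((v 2 - (a-c)*(v 6))/2) ((v 4)/2) hd1 hrns
      (by linear_combination hD0 - (a/2)*hD4)
      (by linear_combination (1/4)*hD2 - ((a+c)/4)*hD6)
      (by linear_combination (1/4)*hD2 - ((a-c)/4)*hD6)
      (by linear_combination (1/4)*hD4)
  · -- odd case
    obtain ⟨h0, -, h2, -, h4, -, h6, -⟩ := lin_indep8' f hm hdeg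
      (2*(v 0)) 0 (2*(v 2)) 0 (2*(v 4)) 0 (2*(v 6)) 0 (by
        simp only [map_zero, zero_mul, map_mul, map_ofNat, zero_add, add_zero]
        linear_combination hps - hy - hσy)
    have hv0 : v 0 = 0 := by linarith
    have hv2 : v 2 = 0 := by linarith
    have hv4 : v 4 = 0 := by linarith
    have hv6 : v 6 = 0 := by linarith
    have hyo : y = (algebraMap ℚ (AdjoinRoot f) (v 1) * (AdjoinRoot.root f) + algebraMap ℚ (AdjoinRoot f) (v 3) * (AdjoinRoot.root f)^3 + algebraMap ℚ (AdjoinRoot f) (v 5) * (AdjoinRoot.root f)^5 + algebraMap ℚ (AdjoinRoot f) (v 7) * (AdjoinRoot.root f)^7) := by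
      rw [hy, hv0, hv2, hv4, hv6]
      simp only [map_zero, zero_mul, add_zero, zero_add]
    obtain ⟨hz0, -, hz2, -, hz4, -, hz6, -⟩ := lin_indep8' f hm hdeg
      (-(2*c^2*(v 3)*(v 5)) - 2*c^2*(v 1)*(v 7) + 2*a*c^2*(v 5)*(v 7) - r) 0
      ((v 1)^2 - c^2*(v 5)^2 - 2*c^2*(v 3)*(v 7) + a*c^2*(v 7)^2) 0
      (2*(v 1)*(v 3) - 2*c^2*(v 5)*(v 7) - 2*a*(v 3)*(v 5) - 2*a*(v 1)*(v 7)
        + 2*a^2*(v 5)*(v 7)) 0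
      ((v 3)^2 + 2*(v 1)*(v 5) - c^2*(v 7)^2 - a*(v 5)^2 - 2*a*(v 3)*(v 7) + a^2*(v 7)^2) 0 (by
        simp only [map_zero, zero_mul, add_zero, zero_add, map_add, map_sub, map_mul,
          map_pow, map_ofNat, map_neg]
        linear_combination (-1:AdjoinRoot f)*hy2 - (y + (algebraMap ℚ (AdjoinRoot f) (v 1) * (AdjoinRoot.root f) + algebraMap ℚ (AdjoinRoot f) (v 3) * (AdjoinRoot.root f)^3 + algebraMap ℚ (AdjoinRoot f) (v 5) * (AdjoinRoot.root f)^5 + algebraMap ℚ (AdjoinRoot f) (v 7) * (AdjoinRoot.root f)^7))*hyo - ((algebraMap ℚ (AdjoinRoot f) (v 7))^2*(AdjoinRoot.root f)^6 + 2*(algebraMap ℚ (AdjoinRoot f) (v 5))*(algebraMap ℚ (AdjoinRoot f) (v 7))*(AdjoinRoot.root f)^4 + ((algebraMap ℚ (AdjoinRoot f) (v 5))^2 + 2*(algebraMap ℚ (AdjoinRoot f) (v 3))*(algebraMap ℚ (AdjoinRoot f) (v 7)) - (algebraMap ℚ (AdjoinRoot f) a)*(algebraMap ℚ (AdjoinRoot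 f) (v 7))^2)*(AdjoinRoot.root f)^2 + (2*(algebraMap ℚ (AdjoinRoot f) (v 3))*(algebraMap ℚ (AdjoinRoot f) (v 5)) + 2*(algebraMap ℚ (AdjoinRoot f) (v 1))*(algebraMap ℚ (AdjoinRoot f) (v 7)) - 2*(algebraMap ℚ (AdjoinRoot f) a)*(algebraMap ℚ (AdjoinRoot f) (v 5))*(algebraMap ℚ (AdjoinRoot f) (v 7))))*hθ)
    obtain ⟨⟨u, hu⟩, ⟨w, hw⟩⟩ := sq_core_odd a c r
      ((v 1) - a*(v 5)/2) (((v 3) - (a+c)*(v 7))/2) (((v 3) - (a-c)*(v 7))/2) ((v 5)/2)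
      hc0 hr0 hcns hmc
      (by linear_combination hz2 - (a/2)*hz6)
      (by linear_combination (1/4)*hz6)
      (by linear_combination c*hz4 + hz0)
      (by linear_combination c*hz4 - hz0)
    rcases hr with rfl | rfl | rfl
    · left
      refine ⟨u*w/c, ?_⟩
      rw [div_pow, eq_div_iff (pow_ne_zero 2 hc0)]
      linear_combination ((-c)*(-2*c-a))*hu + u^2*hw
    · right; left
      exact ⟨u, by linear_combination hu⟩
    · right; right
      exact ⟨w, by linear_combination hw⟩


set_option maxHeartbeats 1000000 in
theorem stmt9 (a c : ℚ) (hc : 0 ≤ c) (hcsq : ¬ ∃ r : ℚ, c = r ^ 2)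
    (hf : Irreducible (X ^ 8 + C a * X ^ 4 + C (c ^ 2) : ℚ[X])) :
    ∀ r : ℚ, (r = -1 ∨ r = c ∨ r = -c) →
      ((∃ y : AdjoinRoot (X ^ 8 + C a * X ^ 4 + C (c ^ 2) : ℚ[X]),
          algebraMap ℚ (AdjoinRoot (X ^ 8 + C a * X ^ 4 + C (c ^ 2) : ℚ[X])) r = y ^ 2) ↔
        (∃ s : ℚ, r * (a ^ 2 - 4 * c ^ 2) = s ^ 2) ∨
        (∃ s : ℚ, r * (-a + 2 * c) = s ^ 2) ∨
        (∃ s : ℚ, r * (-a - 2 * c) = s ^ 2)) := by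
  intro r hr
  haveI : Fact (Irreducible (X ^ 8 + C a * X ^ 4 + C (c ^ 2) : ℚ[X])) := ⟨hf⟩
  have hm : ((X ^ 8 + C a * X ^ 4 + C (c ^ 2) : ℚ[X])).Monic := by monicity!
  have hdeg : ((X ^ 8 + C a * X ^ 4 + C (c ^ 2) : ℚ[X])).natDegree = 8 := by compute_degree!
  have hθ : (AdjoinRoot.root (X ^ 8 + C a * X ^ 4 + C (c ^ 2) : ℚ[X]))^8 + algebraMap ℚ (AdjoinRoot (X ^ 8 + C a * X ^ 4 + C (c ^ 2) : ℚ[X])) a * (AdjoinRoot.root (X ^ 8 + C a * X ^ 4 + C (c ^ 2) : ℚ[X]))^4 + (algebraMap ℚ (AdjoinRoot (X ^ 8 + C a * X ^ 4 + C (c ^ 2) : ℚ[X])) c)^2 = 0 := by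
    have h0 := AdjoinRoot.eval₂_root (X ^ 8 + C a * X ^ 4 + C (c ^ 2) : ℚ[X])
    simp only [Polynomial.eval₂_add, Polynomial.eval₂_mul, Polynomial.eval₂_pow,
      Polynomial.eval₂_X, Polynomial.eval₂_C, ← AdjoinRoot.algebraMap_eq] at h0
    simp only [map_pow] at h0
    exact h0
  have hc0 : c ≠ 0 := fun h => hcsq ⟨0, by rw [h]; norm_num⟩
  have hmc : ¬ ∃ u : ℚ, -c = u^2 := fun ⟨u, hu⟩ => hcsq ⟨0, by nlinarith [sq_nonneg u]⟩
  have hm1 : ¬ ∃ u : ℚ, (-1 : ℚ) = u^2 := fun ⟨u, hu⟩ => by nlinarith [sq_nonneg u]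
  have hcsq' : ¬ ∃ u : ℚ, c = u^2 := fun ⟨u, hu⟩ => hcsq ⟨u, by rw [hu]⟩
  have hr0 : r ≠ 0 := by
    rcases hr with rfl | rfl | rfl
    · norm_num
    · exact hc0
    · exact neg_ne_zero.mpr hc0
  have hrns : ¬ ∃ u : ℚ, r = u^2 := by
    rcases hr with rfl | rfl | rfl
    · exact hm1
    · exact hcsq'
    · exact hmc
  have hd1 : ¬ ∃ u : ℚ, a^2 - 4*c^2 = u^2 := fun ⟨u, hu⟩ => nsq_d1 a c u hf hu
  have hd2 : ¬ ∃ u : ℚ, -a + 2*c = u^2 := fun ⟨u, hu⟩ => nsq_d2 a c u hf hu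
  have hd3 : ¬ ∃ u : ℚ, -a - 2*c = u^2 := fun ⟨u, hu⟩ => nsq_d3 a c u hf hu
  have hd1ne : a^2 - 4*c^2 ≠ 0 := fun h => hd1 ⟨0, by rw [h]; norm_num⟩
  have hd2ne : -a + 2*c ≠ 0 := fun h => hd2 ⟨0, by rw [h]; norm_num⟩
  have hd3ne : -a - 2*c ≠ 0 := fun h => hd3 ⟨0, by rw [h]; norm_num⟩
  have hinj : Function.Injective (algebraMap ℚ (AdjoinRoot (X ^ 8 + C a * X ^ 4 + C (c ^ 2) : ℚ[X]))) := (algebraMap ℚ (AdjoinRoot (X ^ 8 + C a * X ^ 4 + C (c ^ 2) : ℚ[X]))).injective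
  have hθ0 : (AdjoinRoot.root (X ^ 8 + C a * X ^ 4 + C (c ^ 2) : ℚ[X])) ≠ 0 := by
    intro h
    rw [h] at hθ
    have h2 : (algebraMap ℚ (AdjoinRoot (X ^ 8 + C a * X ^ 4 + C (c ^ 2) : ℚ[X])) c) ^ 2 = 0 := by linear_combination hθ
    have h3 : algebraMap ℚ (AdjoinRoot (X ^ 8 + C a * X ^ 4 + C (c ^ 2) : ℚ[X])) c = 0 := pow_eq_zero_iff two_ne_zero |>.mp h2
    exact hc0 (hinj (by rw [h3, map_zero]))
  constructor
  · rintro ⟨y, hy2⟩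
    have hσzero : Polynomial.aeval (-(AdjoinRoot.root (X ^ 8 + C a * X ^ 4 + C (c ^ 2) : ℚ[X]))) (X ^ 8 + C a * X ^ 4 + C (c ^ 2) : ℚ[X]) = 0 := by
      simp only [map_add, map_mul, map_pow, Polynomial.aeval_X, Polynomial.aeval_C]
      linear_combination hθ
    exact hard_dir (X ^ 8 + C a * X ^ 4 + C (c ^ 2) : ℚ[X]) hm hdeg a c r hθ (AdjoinRoot.liftAlgHom (X ^ 8 + C a * X ^ 4 + C (c ^ 2) : ℚ[X]) (Algebra.ofId ℚ _) (-(AdjoinRoot.root (X ^ 8 + C a * X ^ 4 + C (c ^ 2) : ℚ[X]))) hσzero)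
      (AdjoinRoot.liftAlgHom_root _ _ _ _) hc0 hr0 hr hrns hcsq' hmc hd1
      (fun x z h => mul_eq_zero.mp h) y hy2
  · rintro (⟨u, hu⟩ | ⟨u, hu⟩ | ⟨u, hu⟩)
    · refine ⟨algebraMap ℚ (AdjoinRoot (X ^ 8 + C a * X ^ 4 + C (c ^ 2) : ℚ[X])) (u/(a^2-4*c^2)) * (algebraMap ℚ (AdjoinRoot (X ^ 8 + C a * X ^ 4 + C (c ^ 2) : ℚ[X])) a + 2*(AdjoinRoot.root (X ^ 8 + C a * X ^ 4 + C (c ^ 2) : ℚ[X]))^4), ?_⟩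
      have hw : (algebraMap ℚ (AdjoinRoot (X ^ 8 + C a * X ^ 4 + C (c ^ 2) : ℚ[X])) a + 2*(AdjoinRoot.root (X ^ 8 + C a * X ^ 4 + C (c ^ 2) : ℚ[X]))^4)^2 = algebraMap ℚ (AdjoinRoot (X ^ 8 + C a * X ^ 4 + C (c ^ 2) : ℚ[X])) (a^2-4*c^2) := by
        have hmap : algebraMap ℚ (AdjoinRoot (X ^ 8 + C a * X ^ 4 + C (c ^ 2) : ℚ[X])) (a^2-4*c^2) = (algebraMap ℚ (AdjoinRoot (X ^ 8 + C a * X ^ 4 + C (c ^ 2) : ℚ[X])) a)^2 - 4*(algebraMap ℚ (AdjoinRoot (X ^ 8 + C a * X ^ 4 + C (c ^ 2) : ℚ[X])) c)^2 := by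
          simp only [map_sub, map_pow, map_mul, map_ofNat]
        rw [hmap]
        linear_combination (4 : AdjoinRoot (X ^ 8 + C a * X ^ 4 + C (c ^ 2) : ℚ[X]))*hθ
      rw [mul_pow, hw, ← map_pow, ← map_mul]
      refine congrArg (algebraMap ℚ (AdjoinRoot (X ^ 8 + C a * X ^ 4 + C (c ^ 2) : ℚ[X]))) ?_
      rw [div_pow, div_mul_eq_mul_div, eq_div_iff (pow_ne_zero 2 hd1ne)]
      linear_combination (a^2-4*c^2)*hu
    · refine ⟨algebraMap ℚ (AdjoinRoot (X ^ 8 + C a * X ^ 4 + C (c ^ 2) : ℚ[X])) (u/(-a+2*c)) * (((AdjoinRoot.root (X ^ 8 + C a * X ^ 4 + C (c ^ 2) : ℚ[X]))^4 + algebraMap ℚ (AdjoinRoot (X ^ 8 + C a * X ^ 4 + C (c ^ 2) : ℚ[X])) c)/(AdjoinRoot.root (X ^ 8 + C a * X ^ 4 + C (c ^ 2) : ℚ[X]))^2), ?_⟩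
      have hw : (((AdjoinRoot.root (X ^ 8 + C a * X ^ 4 + C (c ^ 2) : ℚ[X]))^4 + algebraMap ℚ (AdjoinRoot (X ^ 8 + C a * X ^ 4 + C (c ^ 2) : ℚ[X])) c)/(AdjoinRoot.root (X ^ 8 + C a * X ^ 4 + C (c ^ 2) : ℚ[X]))^2)^2 = algebraMap ℚ (AdjoinRoot (X ^ 8 + C a * X ^ 4 + C (c ^ 2) : ℚ[X])) (-a+2*c) := by
        rw [div_pow, div_eq_iff (pow_ne_zero 2 (pow_ne_zero 2 hθ0))]
        have hmap : algebraMap ℚ (AdjoinRoot (X ^ 8 + C a * X ^ 4 + C (c ^ 2) : ℚ[X])) (-a+2*c) = -(algebraMap ℚ (AdjoinRoot (X ^ 8 + C a * X ^ 4 + C (c ^ 2) : ℚ[X])) a) + 2*(algebraMap ℚ (AdjoinRoot (X ^ 8 + C a * X ^ 4 + C (c ^ 2) : ℚ[X])) c) := by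
          simp only [map_add, map_neg, map_mul, map_ofNat]
        rw [hmap]
        linear_combination hθ
      rw [mul_pow, hw, ← map_pow, ← map_mul]
      refine congrArg (algebraMap ℚ (AdjoinRoot (X ^ 8 + C a * X ^ 4 + C (c ^ 2) : ℚ[X]))) ?_
      rw [div_pow, div_mul_eq_mul_div, eq_div_iff (pow_ne_zero 2 hd2ne)]
      linear_combination (-a+2*c)*hu
    · refine ⟨algebraMap ℚ (AdjoinRoot (X ^ 8 + C a * X ^ 4 + C (c ^ 2) : ℚ[X])) (u/(-a-2*c)) * (((AdjoinRoot.root (X ^ 8 + C a * X ^ 4 + C (c ^ 2) : ℚ[X]))^4 - algebraMap ℚ (AdjoinRoot (X ^ 8 + C a * X ^ 4 + C (c ^ 2) : ℚ[X])) c)/(AdjoinRoot.root (X ^ 8 + C a * X ^ 4 + C (c ^ 2) : ℚ[X]))^2), ?_⟩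
      have hw : (((AdjoinRoot.root (X ^ 8 + C a * X ^ 4 + C (c ^ 2) : ℚ[X]))^4 - algebraMap ℚ (AdjoinRoot (X ^ 8 + C a * X ^ 4 + C (c ^ 2) : ℚ[X])) c)/(AdjoinRoot.root (X ^ 8 + C a * X ^ 4 + C (c ^ 2) : ℚ[X]))^2)^2 = algebraMap ℚ (AdjoinRoot (X ^ 8 + C a * X ^ 4 + C (c ^ 2) : ℚ[X])) (-a-2*c) := by
        rw [div_pow, div_eq_iff (pow_ne_zero 2 (pow_ne_zero 2 hθ0))]
        have hmap : algebraMap ℚ (AdjoinRoot (X ^ 8 + C a * X ^ 4 + C (c ^ 2) : ℚ[X])) (-a-2*c) = -(algebraMap ℚ (AdjoinRoot (X ^ 8 + C a * X ^ 4 + C (c ^ 2) : ℚ[X])) a) - 2*(algebraMap ℚ (AdjoinRoot (X ^ 8 + C a * X ^ 4 + C (c ^ 2) : ℚ[X])) c) := by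
          simp only [map_sub, map_neg, map_mul, map_ofNat]
        rw [hmap]
        linear_combination hθ
      rw [mul_pow, hw, ← map_pow, ← map_mul]
      refine congrArg (algebraMap ℚ (AdjoinRoot (X ^ 8 + C a * X ^ 4 + C (c ^ 2) : ℚ[X]))) ?_
      rw [div_pow, div_mul_eq_mul_div, eq_div_iff (pow_ne_zero 2 hd3ne)]
      linear_combination (-a-2*c)*hu
end

section
/- Let a, b ∈ ℚ and suppose g(x) = x⁴ + a·x³ + b·x² + a·x + 1 is irreducible over ℚ. Then Gal(g) is isomorphic to C₂ × C₂ if and only if there exist p, q, t ∈ ℚ such that a = p·q·t and b = (p² + q²)·t − 2. -/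
open Polynomial IntermediateField

theorem stmt15 (a b : ℚ)
    (hg : Irreducible (X ^ 4 + C a * X ^ 3 + C b * X ^ 2 + C a * X + 1 : ℚ[X])) :
    Nonempty ((X ^ 4 + C a * X ^ 3 + C b * X ^ 2 + C a * X + 1 : ℚ[X]).Gal ≃*
        Multiplicative (ZMod 2 × ZMod 2)) ↔
      ∃ p q t : ℚ, a = p * q * t ∧ b = (p ^ 2 + q ^ 2) * t - 2 := by
  classical
  set g : ℚ[X] := X ^ 4 + C a * X ^ 3 + C b * X ^ 2 + C a * X + 1 with hgdef
  have hmonic : g.Monic := by rw [hgdef]; monicity!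
  have hdeg : g.natDegree = 4 := by rw [hgdef]; compute_degree!
  have hg0 : g ≠ 0 := hmonic.ne_zero
  have hsep : g.Separable := hg.separable
  set L := g.SplittingField with hL
  set A : L := (a : L) with hA
  set B : L := (b : L) with hB
  have haeval : ∀ x : L, aeval x g = x^4 + A*x^3 + B*x^2 + A*x + 1 := by
    intro x
    simp [hgdef, map_add, map_mul, map_pow, aeval_X, aeval_C, map_one, hA, hB]
  -- no rational roots
  have hnorat : ∀ r : ℚ, g.eval r ≠ 0 := by
    intro r hr
    have hdvd : (X - C r) ∣ g := dvd_iff_isRoot.mpr hr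
    obtain ⟨c, hc⟩ := hdvd
    rcases hg.isUnit_or_isUnit hc with h | h
    · exact Polynomial.not_isUnit_X_sub_C r h
    · have hc0 : c ≠ 0 := fun h0 => by rw [h0, mul_zero] at hc; exact hg0 hc
      have : g.natDegree = 1 + c.natDegree := by
        rw [hc, natDegree_mul (X_sub_C_ne_zero r) hc0, natDegree_X_sub_C]
      rw [hdeg, Polynomial.natDegree_eq_zero_of_isUnit h] at this
      omega
  have heval1 : (2 + 2*a + b : ℚ) ≠ 0 := by
    intro h; apply hnorat 1; rw [hgdef]; simp; linarith
  have heval2 : (2 - 2*a + b : ℚ) ≠ 0 := by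
    intro h; apply hnorat (-1); rw [hgdef]; simp; linarith
  -- roots
  have hmem : ∀ x : L, x ∈ (g.map (algebraMap ℚ L)).roots ↔
      x^4 + A*x^3 + B*x^2 + A*x + 1 = 0 := by
    intro x
    rw [mem_roots_map hg0, ← aeval_def, haeval x]
  have hcard : (g.map (algebraMap ℚ L)).roots.card = 4 := by
    have hs : (g.map (algebraMap ℚ L)).Splits := Polynomial.SplittingField.splits g
    rw [splits_iff_card_roots.mp hs, natDegree_map, hdeg]
  have hnodup : (g.map (algebraMap ℚ L)).roots.Nodup := nodup_roots (hsep.map)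
  set F4 := (g.map (algebraMap ℚ L)).roots.toFinset with hF4
  have hcardF : F4.card = 4 := by
    rw [hF4, Multiset.toFinset_card_of_nodup hnodup, hcard]
  have hne : F4.Nonempty := by rw [← Finset.card_pos, hcardF]; norm_num
  obtain ⟨α, hαF⟩ := hne
  have hα : α^4 + A*α^3 + B*α^2 + A*α + 1 = 0 := by
    rw [← hmem]; exact Multiset.mem_toFinset.mp hαF
  have hα0 : α ≠ 0 := by
    intro h; rw [h] at hα; norm_num at hα
  have hαα : α * α⁻¹ = 1 := mul_inv_cancel₀ hα0
  -- a root equal to its own inverse would be ±1, contradicting no rational roots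
  have hself : ∀ x : L, x^4 + A*x^3 + B*x^2 + A*x + 1 = 0 → x ≠ x⁻¹ := by
    intro x hx hxx
    have hx0 : x ≠ 0 := by intro h; rw [h] at hx; norm_num at hx
    have hx2 : (x - 1) * (x + 1) = 0 := by
      have h1 : x * x = 1 := by
        nth_rewrite 2 [hxx]
        exact mul_inv_cancel₀ hx0
      linear_combination h1
    rcases mul_eq_zero.mp hx2 with h | h
    · have hx1 : x = 1 := by linear_combination h
      rw [hx1] at hx
      have : ((2 + 2*a + b : ℚ) : L) = 0 := by push_cast [hA, hB] at hx ⊢; linear_combination hx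
      exact heval1 (by exact_mod_cast this)
    · have hx1 : x = -1 := by linear_combination h
      rw [hx1] at hx
      have : ((2 - 2*a + b : ℚ) : L) = 0 := by push_cast [hA, hB] at hx ⊢; linear_combination hx
      exact heval2 (by exact_mod_cast this)
  have hnαα : α ≠ α⁻¹ := hself α hα
  -- the inverse of a root is a root
  have hinvroot : ∀ x : L, x^4 + A*x^3 + B*x^2 + A*x + 1 = 0 →
      x⁻¹^4 + A*x⁻¹^3 + B*x⁻¹^2 + A*x⁻¹ + 1 = 0 := by
    intro x hx
    have hx0 : x ≠ 0 := by intro h; rw [h] at hx; norm_num at hx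
    have hxx : x * x⁻¹ = 1 := mul_inv_cancel₀ hx0
    linear_combination x⁻¹^4 * hx - (A*x⁻¹^3 + B*x⁻¹^2*(1+x*x⁻¹)
      + A*x⁻¹*(1+x*x⁻¹+(x*x⁻¹)^2) + (1+x*x⁻¹+(x*x⁻¹)^2+(x*x⁻¹)^3)) * hxx
  have hαinv := hinvroot α hα
  have hαinvF : α⁻¹ ∈ F4 := Multiset.mem_toFinset.mpr ((hmem _).mpr hαinv)
  -- pick a second pair of roots
  have hsd : (F4 \ {α, α⁻¹}).Nonempty := by
    rw [← Finset.card_pos]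
    have h1 : (F4 \ {α, α⁻¹}).card ≥ F4.card - ({α, α⁻¹} : Finset L).card :=
      Finset.le_card_sdiff _ _
    have h2 : ({α, α⁻¹} : Finset L).card ≤ 2 := Finset.card_insert_le _ _ |>.trans (by simp)
    omega
  obtain ⟨β, hβsd⟩ := hsd
  rw [Finset.mem_sdiff] at hβsd
  obtain ⟨hβF, hβni⟩ := hβsd
  have hβα : β ≠ α := fun h => hβni (by simp [h])
  have hβα' : β ≠ α⁻¹ := fun h => hβni (by simp [h])
  have hβ : β^4 + A*β^3 + B*β^2 + A*β + 1 = 0 := (hmem _).mp (Multiset.mem_toFinset.mp hβF)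
  have hβ0 : β ≠ 0 := by intro h; rw [h] at hβ; norm_num at hβ
  have hββ : β * β⁻¹ = 1 := mul_inv_cancel₀ hβ0
  have hnββ : β ≠ β⁻¹ := hself β hβ
  have hβinv := hinvroot β hβ
  have hβinvα : β⁻¹ ≠ α := fun h => hβα' (by rw [← h]; exact (inv_inv β).symm)
  have hβinvα' : β⁻¹ ≠ α⁻¹ := fun h => hβα (inv_injective h)
  -- these are all the roots
  have hallroots : ∀ x : L, x^4 + A*x^3 + B*x^2 + A*x + 1 = 0 →
      x = α ∨ x = α⁻¹ ∨ x = β ∨ x = β⁻¹ := by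
    intro x hx
    have hT : ({α, α⁻¹, β, β⁻¹} : Finset L) ⊆ F4 := by
      intro y hy
      simp only [Finset.mem_insert, Finset.mem_singleton] at hy
      rcases hy with rfl | rfl | rfl | rfl
      · exact hαF
      · exact hαinvF
      · exact hβF
      · exact Multiset.mem_toFinset.mpr ((hmem _).mpr hβinv)
    have hcardT : ({α, α⁻¹, β, β⁻¹} : Finset L).card = 4 := by
      rw [Finset.card_insert_of_notMem (by
            simp only [Finset.mem_insert, Finset.mem_singleton]; push_neg
            exact ⟨hnαα, Ne.symm hβα, Ne.symm hβinvα⟩),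
          Finset.card_insert_of_notMem (by
            simp only [Finset.mem_insert, Finset.mem_singleton]; push_neg
            exact ⟨Ne.symm hβα', Ne.symm hβinvα'⟩),
          Finset.card_insert_of_notMem (by simpa using hnββ),
          Finset.card_singleton]
    have hFT : F4 = ({α, α⁻¹, β, β⁻¹} : Finset L) :=
      (Finset.eq_of_subset_of_card_le hT (by omega)).symm
    have : x ∈ F4 := Multiset.mem_toFinset.mpr ((hmem _).mpr hx)
    rw [hFT] at this
    simpa using this
  -- symmetric function identities
  set s : L := α + α⁻¹ with hsdef
  set s' : L := β + β⁻¹ with hs'def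
  have hs : s^2 + A*s + (B - 2) = 0 := by
    rw [hsdef]
    linear_combination α⁻¹^2 * hα - ((α^2 + A*α + B)*(1 + α*α⁻¹) + A*α⁻¹ - 2) * hαα
  have hs' : s'^2 + A*s' + (B - 2) = 0 := by
    rw [hs'def]
    linear_combination β⁻¹^2 * hβ - ((β^2 + A*β + B)*(1 + β*β⁻¹) + A*β⁻¹ - 2) * hββ
  have hssne : s ≠ s' := by
    intro h
    apply mul_ne_zero (sub_ne_zero.mpr hβα) (sub_ne_zero.mpr hβα')
    rw [hsdef, hs'def] at h
    linear_combination hαα - hββ - β * h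
  have hsum : s + s' = -A := by
    have h0 : (s - s') * (s + s' + A) = 0 := by linear_combination hs - hs'
    rcases mul_eq_zero.mp h0 with h | h
    · exact absurd (sub_eq_zero.mp h) hssne
    · linear_combination h
  have hprod : s * s' = B - 2 := by linear_combination s * hsum - hs
  set e : L := (α - α⁻¹) * (β - β⁻¹) with hedef
  have he0 : e ≠ 0 :=
    mul_ne_zero (sub_ne_zero.mpr hnαα) (sub_ne_zero.mpr hnββ)
  have hd : (α - α⁻¹)^2 = s^2 - 4 := by rw [hsdef]; linear_combination (-4) * hαα
  have hd' : (β - β⁻¹)^2 = s'^2 - 4 := by rw [hs'def]; linear_combination (-4) * hββ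
  have he2 : e^2 = (B+2)^2 - 4*A^2 := by
    have hu2 : (s + s')^2 = A^2 := by rw [hsum]; ring
    have hv2 : (s * s')^2 = (B-2)^2 := by rw [hprod]
    calc e^2 = (α - α⁻¹)^2 * (β - β⁻¹)^2 := by rw [hedef]; ring
    _ = (s^2-4) * (s'^2-4) := by rw [hd, hd']
    _ = (B+2)^2 - 4*A^2 := by linear_combination hv2 - 4*hu2 + 8*hprod
  -- Galois setup
  haveI : IsGalois ℚ L := @IsGalois.of_separable_splitting_field ℚ _ L _ _ g (Polynomial.IsSplittingField.splittingField g) hsep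
  have hFD : FiniteDimensional ℚ L := inferInstance
  have hcardaut : Fintype.card g.Gal = Module.finrank ℚ L :=
    by rw [← Nat.card_eq_fintype_card]; exact IsGalois.card_aut_eq_finrank ℚ L
  -- action of the Galois group on roots
  have hσroot : ∀ (σ : g.Gal) (x : L), x^4 + A*x^3 + B*x^2 + A*x + 1 = 0 →
      (σ x)^4 + A*(σ x)^3 + B*(σ x)^2 + A*(σ x) + 1 = 0 := by
    intro σ x hx
    have := congrArg σ hx
    simpa only [map_add, map_mul, map_pow, map_one, map_zero, hA, hB,
      map_ratCast] using this
  have hσinv : ∀ (σ : g.Gal) (x : L), σ x⁻¹ = (σ x)⁻¹ := fun σ x => map_inv₀ σ x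
  have hσQ : ∀ (σ : g.Gal) (r : ℚ), σ (r : L) = (r : L) := by
    intro σ r
    exact map_ratCast σ r
  -- minimal polynomial facts
  have hminp : ∀ x : L, x^4 + A*x^3 + B*x^2 + A*x + 1 = 0 →
      Module.finrank ℚ ℚ⟮x⟯ = 4 := by
    intro x hx
    have hint : IsIntegral ℚ x := IsIntegral.of_finite ℚ x
    have haev : aeval x g = 0 := by rw [haeval x]; exact hx
    have hmp : minpoly ℚ x = g := (minpoly.eq_of_irreducible_of_monic hg haev hmonic).symm
    rw [IntermediateField.adjoin.finrank hint, hmp, hdeg]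
  -- a Galois element fixing a generator is the identity
  have hgen : ∀ (x : L), ℚ⟮x⟯ = ⊤ → ∀ σ : g.Gal, σ x = x → σ = 1 := by
    intro x hx σ hfixx
    have hint : IsIntegral ℚ x := IsIntegral.of_finite ℚ x
    have hadj : Algebra.adjoin ℚ ({x} : Set L) = ⊤ := by
      rw [← IntermediateField.adjoin_simple_toSubalgebra_of_isAlgebraic hint.isAlgebraic, hx,
        IntermediateField.top_toSubalgebra]
    have hle : (⊤ : Subalgebra ℚ L) ≤ AlgHom.equalizer (σ : L ≃ₐ[ℚ] L).toAlgHom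
        (AlgHom.id ℚ L) := by
      rw [← hadj]
      apply Algebra.adjoin_le
      intro y hy
      rw [Set.mem_singleton_iff] at hy
      subst hy
      exact hfixx
    apply AlgEquiv.ext
    intro y
    exact hle (Algebra.mem_top : y ∈ (⊤ : Subalgebra ℚ L))
  -- the splitting field is generated by any subfield containing all roots
  have htop_of_mem : ∀ K : IntermediateField ℚ L,
      α ∈ K → α⁻¹ ∈ K → β ∈ K → β⁻¹ ∈ K → K = ⊤ := by
    intro K h1 h2 h3 h4
    have hadj : Algebra.adjoin ℚ (g.rootSet L) = ⊤ := Polynomial.SplittingField.adjoin_rootSet g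
    have hle : (⊤ : Subalgebra ℚ L) ≤ K.toSubalgebra := by
      rw [← hadj]
      apply Algebra.adjoin_le
      intro y hy
      rw [Polynomial.mem_rootSet] at hy
      have : y^4 + A*y^3 + B*y^2 + A*y + 1 = 0 := by rw [← haeval y]; exact hy.2
      rcases hallroots y this with rfl | rfl | rfl | rfl <;> assumption
    apply IntermediateField.toSubalgebra_injective
    exact le_antisymm le_top (by rw [IntermediateField.top_toSubalgebra]; exact hle)
  have hinj : ∀ σ : g.Gal, Function.Injective σ := fun σ => EquivLike.injective σ
  -- if σ fixes e, then σ² fixes α and β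
  have hsq1 : ∀ σ : g.Gal, σ e = e → σ (σ α) = α ∧ σ (σ β) = β := by
    intro σ hσe
    have hσe' : (σ α - (σ α)⁻¹) * (σ β - (σ β)⁻¹) = e := by
      rw [← hσe, hedef, map_mul, map_sub, map_sub, hσinv, hσinv]
    rcases hallroots (σ α) (hσroot σ α hα) with h1 | h1 | h1 | h1 <;>
      rcases hallroots (σ β) (hσroot σ β hβ) with h2 | h2 | h2 | h2
    -- σα = α
    · exact absurd (hinj σ (h2.trans h1.symm)) hβα
    · have : σ β = σ α⁻¹ := by rw [hσinv, h1, h2]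
      exact absurd (hinj σ this) hβα'
    · exact ⟨by rw [h1, h1], by rw [h2, h2]⟩
    · exact ⟨by rw [h1, h1], by rw [h2, hσinv, h2, inv_inv]⟩
    -- σα = α⁻¹
    · have : σ β = σ α⁻¹ := by rw [hσinv, h1, h2, inv_inv]
      exact absurd (hinj σ this) hβα'
    · exact absurd (hinj σ (h2.trans h1.symm)) hβα
    · exact ⟨by rw [h1, hσinv, h1, inv_inv], by rw [h2, h2]⟩
    · exact ⟨by rw [h1, hσinv, h1, inv_inv], by rw [h2, hσinv, h2, inv_inv]⟩
    -- σα = β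
    · exact ⟨by rw [h1, h2], by rw [h2, h1]⟩
    · -- σβ = α⁻¹ : contradiction via e
      exfalso
      apply he0
      have hee : e = -e := by
        conv_lhs => rw [← hσe']
        rw [h1, h2, inv_inv, hedef]
        ring
      have h2e : e + e = 0 := by linear_combination hee
      have := add_self_eq_zero.mp h2e
      exact this
    · exact absurd (hinj σ (h1.trans h2.symm)) hβα.symm
    · have : σ α⁻¹ = σ β := by rw [hσinv, h1, h2]
      exact absurd (hinj σ this) (Ne.symm hβα')
    -- σα = β⁻¹
    · exfalso
      apply he0
      have hee : e = -e := by
        conv_lhs => rw [← hσe']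
        rw [h1, h2, inv_inv, hedef]
        ring
      have h2e : e + e = 0 := by linear_combination hee
      exact add_self_eq_zero.mp h2e
    · exact ⟨by rw [h1, hσinv, h2, inv_inv], by rw [h2, hσinv, h1, inv_inv]⟩
    · have : σ α⁻¹ = σ β := by rw [hσinv, h1, inv_inv, h2]
      exact absurd (hinj σ this) (Ne.symm hβα')
    · exact absurd (hinj σ (h1.trans h2.symm)) (Ne.symm hβα)
  have hQmem : ∀ (K : IntermediateField ℚ L) (r : ℚ), (r : L) ∈ K := by
    intro K r
    have := K.algebraMap_mem r
    rwa [eq_ratCast (algebraMap ℚ L) r] at this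
  have hsum' : α + α⁻¹ + (β + β⁻¹) = -A := by rw [← hsdef, ← hs'def]; exact hsum
  have hmain1 : (∃ m : ℚ, e = (m : L)) →
      Nonempty (g.Gal ≃* Multiplicative (ZMod 2 × ZMod 2)) := by
    rintro ⟨m, hm⟩
    have hσe : ∀ σ : g.Gal, σ e = e := fun σ => by rw [hm]; exact hσQ σ m
    have hdne : α - α⁻¹ ≠ 0 := sub_ne_zero.mpr hnαα
    have h1 : e * (α - α⁻¹)⁻¹ = β - β⁻¹ := by
      rw [hedef, mul_comm (α - α⁻¹) (β - β⁻¹), mul_inv_cancel_right₀ hdne]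
    have hβval : β = ((-A - α - α⁻¹) + e * (α - α⁻¹)⁻¹) / 2 := by
      rw [h1]
      linear_combination (2⁻¹ : L) * hsum'
    -- β lies in ℚ⟮α⟯
    have hαK : α ∈ ℚ⟮α⟯ := IntermediateField.mem_adjoin_simple_self ℚ α
    have hαK' : α⁻¹ ∈ ℚ⟮α⟯ := inv_mem hαK
    have hβK : β ∈ ℚ⟮α⟯ := by
      rw [hβval]
      have h2 : (2 : L) = ((2 : ℚ) : L) := by norm_num
      refine div_mem (add_mem (sub_mem (sub_mem (neg_mem ?_) hαK) hαK')
        (mul_mem ?_ (inv_mem (sub_mem hαK hαK')))) (h2 ▸ hQmem _ 2)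
      · rw [hA]; exact hQmem _ a
      · rw [hm]; exact hQmem _ m
    have hKtop : ℚ⟮α⟯ = ⊤ := htop_of_mem _ hαK hαK' hβK (inv_mem hβK)
    have hfr : Module.finrank ℚ L = 4 := by
      rw [← hminp α hα]
      exact (LinearEquiv.finrank_eq
        (((IntermediateField.equivOfEq hKtop).trans IntermediateField.topEquiv).toLinearEquiv)).symm
    have hcard4 : Fintype.card g.Gal = 4 := by rw [hcardaut, hfr]
    have hexp2 : ∀ σ : g.Gal, σ ^ 2 = 1 := by
      intro σ
      obtain ⟨hA1, hB1⟩ := hsq1 σ (hσe σ)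
      apply Polynomial.Gal.ext
      intro x hx
      rw [Polynomial.mem_rootSet] at hx
      have hxr : x^4 + A*x^3 + B*x^2 + A*x + 1 = 0 := by rw [← haeval x]; exact hx.2
      have hone : (1 : g.Gal) x = x := rfl
      have hpow : (σ ^ 2) x = σ (σ x) := rfl
      rw [hone, hpow]
      rcases hallroots x hxr with rfl | rfl | rfl | rfl
      · exact hA1
      · rw [hσinv, hσinv, hA1]
      · exact hB1
      · rw [hσinv, hσinv, hB1]
    haveI hk4 : IsKleinFour g.Gal := by
      constructor
      · rw [Nat.card_eq_fintype_card, hcard4]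
      · have h2 : Monoid.exponent g.Gal ∣ 2 := Monoid.exponent_dvd_of_forall_pow_eq_one hexp2
        have hnt : Nontrivial g.Gal := by
          apply Fintype.one_lt_card_iff_nontrivial.mp
          omega
        rcases (Nat.dvd_prime Nat.prime_two).mp h2 with h | h
        · exfalso
          obtain ⟨σ0, hσ0⟩ := exists_ne (1 : g.Gal)
          apply hσ0
          have hp := Monoid.pow_exponent_eq_one σ0
          rwa [h, pow_one] at hp
        · exact h
    exact IsKleinFour.nonempty_mulEquiv
  -- the main forward engine: Klein four implies e is rational
  have hmain2 : (Nonempty (g.Gal ≃* Multiplicative (ZMod 2 × ZMod 2))) →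
      ∃ m : ℚ, e = (m : L) := by
    rintro ⟨f⟩
    have hcard4 : Fintype.card g.Gal = 4 := by
      rw [Fintype.card_congr f.toEquiv]
      rfl
    have hexp2 : ∀ σ : g.Gal, σ ^ 2 = 1 := by
      intro σ
      apply f.injective
      rw [map_pow, map_one]
      exact (by decide : ∀ x : Multiplicative (ZMod 2 × ZMod 2), x ^ 2 = 1) (f σ)
    have hσσ : ∀ (σ : g.Gal) (x : L), σ (σ x) = x := by
      intro σ x
      have h : (σ ^ 2) x = σ (σ x) := rfl
      rw [hexp2 σ] at h
      exact h.symm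
    have hfr : Module.finrank ℚ L = 4 := by rw [← hcardaut, hcard4]
    have htopx : ∀ x : L, x^4 + A*x^3 + B*x^2 + A*x + 1 = 0 → ℚ⟮x⟯ = ⊤ := by
      intro x hx
      apply IntermediateField.eq_of_le_of_finrank_le le_top
      have h4 : Module.finrank ℚ (⊤ : IntermediateField ℚ L) = 4 := by
        rw [← hfr]
        exact LinearEquiv.finrank_eq IntermediateField.topEquiv.toLinearEquiv
      rw [h4, hminp x hx]
    have hfixe : ∀ σ : g.Gal, σ e = e := by
      intro σ
      rcases hallroots (σ α) (hσroot σ α hα) with h1 | h1 | h1 | h1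
      · have hσ1 : σ = 1 := hgen α (htopx α hα) σ h1
        rw [hσ1]
        rfl
      · -- σα = α⁻¹ ; analyze σβ
        rcases hallroots (σ β) (hσroot σ β hβ) with h2 | h2 | h2 | h2
        · exfalso
          have : σ α⁻¹ = σ β := by rw [hσinv, h1, inv_inv, h2]
          exact hβα' (hinj σ this).symm
        · exact absurd (hinj σ (h2.trans h1.symm)) hβα
        · exfalso
          have hσ1 : σ = 1 := hgen β (htopx β hβ) σ h2
          rw [hσ1] at h1
          exact hnαα h1
        · rw [hedef, map_mul, map_sub, map_sub, hσinv, hσinv, h1, h2, inv_inv, inv_inv]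
          ring
      · -- σα = β
        have h2 : σ β = α := by rw [← h1, hσσ]
        rw [hedef, map_mul, map_sub, map_sub, hσinv, hσinv, h1, h2]
        ring
      · -- σα = β⁻¹
        have h2 : σ β⁻¹ = α := by rw [← h1, hσσ]
        have h2' : σ β = α⁻¹ := by rw [← inv_inv β, hσinv, h2]
        rw [hedef, map_mul, map_sub, map_sub, hσinv, hσinv, h1, h2', inv_inv, inv_inv]
        ring
    -- hence e is fixed by the full Galois group, so it is rational
    have hbot : IntermediateField.fixedField (⊤ : Subgroup (L ≃ₐ[ℚ] L)) = ⊥ :=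
      ((IsGalois.tfae (F := ℚ) (E := L)).out 0 1).mp (inferInstance : IsGalois ℚ L)
    have hefix : e ∈ IntermediateField.fixedField (⊤ : Subgroup (L ≃ₐ[ℚ] L)) := by
      exact fun σ => hfixe σ.1
    rw [hbot, IntermediateField.mem_bot] at hefix
    obtain ⟨m, hm⟩ := hefix
    exact ⟨m, by rw [← hm, eq_ratCast (algebraMap ℚ L) m]⟩
  constructor
  · -- forward direction
    intro hiso
    obtain ⟨m, hm⟩ := hmain2 hiso
    have hm2 : m ^ 2 = (b + 2) ^ 2 - 4 * a ^ 2 := by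
      have hc : ((m ^ 2 : ℚ) : L) = (((b + 2) ^ 2 - 4 * a ^ 2 : ℚ) : L) := by
        push_cast
        rw [← hm, he2, hA, hB]
      exact_mod_cast hc
    have ht : (b + 2 + 2 * a : ℚ) ≠ 0 := fun h => heval1 (by linarith)
    refine ⟨(1 + m / (b + 2 + 2 * a)) / 2, (1 - m / (b + 2 + 2 * a)) / 2,
      b + 2 + 2 * a, ?_, ?_⟩
    · field_simp
      have ht' : b + 2 + a * 2 ≠ 0 := fun h => ht (by linarith)
      field_simp
      linear_combination hm2
    · field_simp
      linear_combination (-2) * hm2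
  · -- backward direction
    rintro ⟨p, q, t, h1, h2⟩
    apply hmain1
    set m : ℚ := (p ^ 2 - q ^ 2) * t with hmdef
    have hm2 : ((b + 2) ^ 2 - 4 * a ^ 2 : ℚ) = m ^ 2 := by
      rw [hmdef, h1, h2]; ring
    have hee : e ^ 2 = ((m : L)) ^ 2 := by
      rw [he2, hA, hB]
      have hc := congrArg (fun r : ℚ => (r : L)) hm2
      push_cast at hc
      linear_combination hc
    have hfac : (e - (m : L)) * (e + (m : L)) = 0 := by linear_combination hee
    rcases mul_eq_zero.mp hfac with h | h
    · exact ⟨m, sub_eq_zero.mp h⟩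
    · refine ⟨-m, ?_⟩
      push_cast
      linear_combination h
end
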